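/- arXiv:1603.00946 — 9 statements merged into one kernel-verified Lean document; each statement's English description precedes it below -/
import Mathlib

section
/- Let N ≥ 1 and let (A,Ω) be a relative fractal drum in ℝ^N. Then for every s ∈ ℂ with Re s > \overline{dim}_B(A,Ω), the function x ↦ d(x,A)^{s−N} is Lebesgue integrable on Ω, and the relative distance zeta function ζ_{A,Ω}(s) = ∫_Ω d(x,A)^{s−N} dx is complex differentiable at every point s of the open half-plane {Re s > \overline{dim}_B(A,Ω)} (hence holomorphic there), with derivative ζ'_{A,Ω}(s) = ∫_Ω d(x,A)^{s−N} · log d(x,A) dx, where the integrand of the derivative is interpreted as 0 at points x with d(x,A) = 0. -/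
open MeasureTheory Metric Filter Set
open scoped ENNReal Topology

/-- The upper `r`-dimensional relative Minkowski content of the pair `(A, Ω)` in `ℝ^N`. -/
noncomputable def upMink (N : ℕ) (A Ω : Set (EuclideanSpace ℝ (Fin N))) (r : ℝ) : ℝ≥0∞ :=
  Filter.limsup
    (fun t : ℝ => volume (Metric.thickening t A ∩ Ω) / ENNReal.ofReal (t ^ ((N : ℝ) - r)))
    (𝓝[>] (0 : ℝ))

/-- The upper relative box (Minkowski) dimension of `(A, Ω)`, as an extended real number. -/
noncomputable def ubDim (N : ℕ) (A Ω : Set (EuclideanSpace ℝ (Fin N))) : EReal :=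
  sInf {x : EReal | ∃ r : ℝ, x = (r : EReal) ∧ upMink N A Ω r = 0}

lemma rpow_le_add_rpow {d a b τ : ℝ} (hd : 0 < d) (h1 : a ≤ τ) (h2 : τ ≤ b) :
    d ^ τ ≤ d ^ a + d ^ b := by
  rcases le_total d 1 with h | h
  · exact le_add_of_le_of_nonneg (Real.rpow_le_rpow_of_exponent_ge hd h h1)
      (Real.rpow_nonneg hd.le b)
  · exact le_add_of_nonneg_of_le (Real.rpow_nonneg hd.le a)
      (Real.rpow_le_rpow_of_exponent_le h h2)

lemma abs_log_le_rpow {d ε : ℝ} (hd : 0 < d) (hε : 0 < ε) :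
    |Real.log d| ≤ (d ^ (-ε) + d ^ ε) / ε := by
  have key : ∀ c : ℝ, 0 < c → Real.log c ≤ c ^ ε / ε := by
    intro c hc
    have h1 : Real.log (c ^ ε) ≤ c ^ ε - 1 :=
      Real.log_le_sub_one_of_pos (Real.rpow_pos_of_pos hc ε)
    rw [Real.log_rpow hc] at h1
    rw [le_div_iff₀ hε, mul_comm]
    linarith [Real.rpow_pos_of_pos hc ε]
  have h2 := key d hd
  have h3 := key d⁻¹ (inv_pos.2 hd)
  rw [Real.log_inv, Real.inv_rpow hd.le, ← Real.rpow_neg hd.le] at h3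
  have hnn1 : 0 ≤ d ^ (-ε) := Real.rpow_nonneg hd.le _
  have hnn2 : 0 ≤ d ^ ε := Real.rpow_nonneg hd.le _
  rw [le_div_iff₀ hε] at h2 h3
  rw [abs_le]
  constructor
  · rw [neg_le, ← sub_nonneg]
    rw [div_sub' hε.ne', le_div_iff₀ hε]
    ring_nf
    nlinarith
  · rw [le_div_iff₀ hε]
    linarith

lemma hasDerivAt_cpow_shift {c w z : ℂ} (h : c ≠ 0 ∨ z - w ≠ 0) :
    HasDerivAt (fun z => c ^ (z - w)) (c ^ (z - w) * Complex.log c) z := by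
  have h1 := (Complex.hasStrictDerivAt_const_cpow (x := c) (y := z - w) h).hasDerivAt
  have h2 : HasDerivAt (fun z : ℂ => z - w) 1 z := (hasDerivAt_id z).sub_const w
  simpa [Function.comp_def] using h1.comp z h2

lemma key_lintegral (N : ℕ) (A Ω : Set (EuclideanSpace ℝ (Fin N)))
    (hA : A.Nonempty) (hΩo : IsOpen Ω) (hΩv : volume Ω < ⊤)
    (hΩδ : ∃ δ > 0, Ω ⊆ Metric.thickening δ A)
    {r σ : ℝ} (hrσ : r < σ) (hM : upMink N A Ω r = 0) :
    ∫⁻ x in Ω, ENNReal.ofReal (Metric.infDist x A ^ (σ - (N : ℝ))) < ⊤ := by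
  obtain ⟨δ, hδ, hsub⟩ := hΩδ
  have hd : Measurable fun x : EuclideanSpace ℝ (Fin N) => Metric.infDist x A :=
    (continuous_infDist_pt A).measurable
  rcases le_or_gt (N : ℝ) σ with hNσ | hNσ
  · calc ∫⁻ x in Ω, ENNReal.ofReal (Metric.infDist x A ^ (σ - (N : ℝ)))
        ≤ ∫⁻ _ in Ω, ENNReal.ofReal (max δ 1 ^ (σ - (N : ℝ))) := by
          refine setLIntegral_mono' hΩo.measurableSet fun x hx => ?_
          refine ENNReal.ofReal_le_ofReal ?_
          refine Real.rpow_le_rpow Metric.infDist_nonneg ?_ (by linarith)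
          exact le_trans ((Metric.mem_thickening_iff_infDist_lt hA).1 (hsub hx)).le
            (le_max_left _ _)
      _ = ENNReal.ofReal (max δ 1 ^ (σ - (N : ℝ))) * volume Ω := setLIntegral_const _ _
      _ < ⊤ := ENNReal.mul_lt_top ENNReal.ofReal_lt_top hΩv
  · set p : ℝ := (N : ℝ) - σ with hp
    have hp0 : 0 < p := by rw [hp]; linarith
    have hNr0 : (0:ℝ) < (N : ℝ) - r := by linarith
    have hev : ∀ᶠ t in 𝓝[>] (0 : ℝ),
        volume (Metric.thickening t A ∩ Ω) ≤ ENNReal.ofReal (t ^ ((N : ℝ) - r)) := by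
      have hlt : Filter.limsup
          (fun t : ℝ => volume (Metric.thickening t A ∩ Ω) /
            ENNReal.ofReal (t ^ ((N : ℝ) - r))) (𝓝[>] (0 : ℝ)) < 1 := by
        rw [show Filter.limsup (fun t : ℝ => volume (Metric.thickening t A ∩ Ω) /
            ENNReal.ofReal (t ^ ((N : ℝ) - r))) (𝓝[>] (0 : ℝ)) = upMink N A Ω r from rfl, hM]
        exact zero_lt_one
      filter_upwards [eventually_lt_of_limsup_lt hlt, self_mem_nhdsWithin] with t ht ht0
      have htp : (0:ℝ) < t ^ ((N : ℝ) - r) := Real.rpow_pos_of_pos ht0 _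
      rw [ENNReal.div_lt_iff (Or.inl (ENNReal.ofReal_pos.2 htp).ne')
        (Or.inl ENNReal.ofReal_ne_top), one_mul] at ht
      exact ht.le
    obtain ⟨t0, ht0mem, hsub0⟩ := mem_nhdsGT_iff_exists_Ioo_subset.1 hev
    rw [lintegral_eq_lintegral_meas_lt _
      (Eventually.of_forall fun x => Real.rpow_nonneg Metric.infDist_nonneg _)
      ((hd.pow measurable_const).aemeasurable)]
    set T : ℝ := max 1 (t0 ^ (-p)) with hT
    have hT0 : (0:ℝ) < T := lt_of_lt_of_le zero_lt_one (le_max_left _ _)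
    have hq : -(((N:ℝ) - r) / p) < -1 := by
      rw [neg_lt_neg_iff, lt_div_iff₀ hp0, one_mul]
      linarith
    have claim : ∀ t ∈ Ioi T, (volume.restrict Ω)
        {x | t < Metric.infDist x A ^ (σ - (N : ℝ))} ≤
        ENNReal.ofReal (t ^ (-(((N:ℝ) - r) / p))) := by
      intro t ht
      have ht0 : (0:ℝ) < t := lt_trans hT0 ht
      set g : ℝ := t ^ (-(1 / p)) with hg
      have hg0 : 0 < g := Real.rpow_pos_of_pos ht0 _
      have hgt0 : g < t0 := by
        have h1 : t0 ^ (-p) < t := lt_of_le_of_lt (le_max_right 1 _) ht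
        have h2 := Real.rpow_lt_rpow_of_neg (Real.rpow_pos_of_pos ht0mem.out (-p)) h1
          (neg_lt_zero.2 (by positivity) : -(1 / p) < 0)
        rw [← Real.rpow_mul (le_of_lt ht0mem.out)] at h2
        have : -p * -(1 / p) = 1 := by field_simp
        rwa [this, Real.rpow_one] at h2
      have hsubset : {x | t < Metric.infDist x A ^ (σ - (N : ℝ))} ∩ Ω ⊆
          Metric.thickening g A ∩ Ω := by
        rintro x ⟨hx, hxΩ⟩
        rw [mem_setOf_eq] at hx
        refine ⟨(Metric.mem_thickening_iff_infDist_lt hA).2 ?_, hxΩ⟩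
        have hσN0 : σ - (N : ℝ) ≠ 0 := by
          intro h'
          have := sub_eq_zero.1 h'
          linarith
        have hdx0 : 0 < Metric.infDist x A := by
          rcases (Metric.infDist_nonneg : 0 ≤ Metric.infDist x A).lt_or_eq with h | h
          · exact h
          · exfalso
            rw [← h, Real.zero_rpow hσN0] at hx
            linarith
        by_contra hge
        push_neg at hge
        have hle : Metric.infDist x A ^ (σ - (N : ℝ)) ≤ g ^ (σ - (N : ℝ)) :=
          Real.rpow_le_rpow_of_nonpos hg0 hge (by linarith)
        have hgpow : g ^ (σ - (N : ℝ)) = t := by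
          rw [hg, ← Real.rpow_mul ht0.le]
          have hσN : σ - (N : ℝ) = -p := by rw [hp]; ring
          have : -(1 / p) * (σ - (N : ℝ)) = 1 := by rw [hσN]; field_simp
          rw [this, Real.rpow_one]
        rw [hgpow] at hle
        linarith
      calc (volume.restrict Ω) {x | t < Metric.infDist x A ^ (σ - (N : ℝ))}
          = volume ({x | t < Metric.infDist x A ^ (σ - (N : ℝ))} ∩ Ω) :=
            Measure.restrict_apply' hΩo.measurableSet
        _ ≤ volume (Metric.thickening g A ∩ Ω) := measure_mono hsubset
        _ ≤ ENNReal.ofReal (g ^ ((N : ℝ) - r)) := hsub0 ⟨hg0, hgt0⟩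
        _ = ENNReal.ofReal (t ^ (-(((N:ℝ) - r) / p))) := by
            rw [hg, ← Real.rpow_mul ht0.le]
            congr 2
            ring
    have hsplit : Ioi (0:ℝ) = Ioc 0 T ∪ Ioi T := (Ioc_union_Ioi_eq_Ioi hT0.le).symm
    rw [hsplit]
    refine lt_of_le_of_lt (lintegral_union_le _ _ _) (ENNReal.add_lt_top.2 ⟨?_, ?_⟩)
    · calc ∫⁻ t in Ioc (0:ℝ) T, (volume.restrict Ω)
            {x | t < Metric.infDist x A ^ (σ - (N : ℝ))}
          ≤ ∫⁻ _ in Ioc (0:ℝ) T, volume Ω := by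
            refine setLIntegral_mono' measurableSet_Ioc fun t _ => ?_
            exact le_trans (measure_mono (subset_univ _))
              (by rw [Measure.restrict_apply_univ])
        _ = volume Ω * volume (Ioc (0:ℝ) T) := setLIntegral_const _ _
        _ < ⊤ := ENNReal.mul_lt_top hΩv (by rw [Real.volume_Ioc]; exact ENNReal.ofReal_lt_top)
    · refine lt_of_le_of_lt (setLIntegral_mono' measurableSet_Ioi claim) ?_
      exact (integrableOn_Ioi_rpow_of_lt hq hT0).lintegral_lt_top

lemma dim_ge (N : ℕ) (A Ω : Set (EuclideanSpace ℝ (Fin N))) (hA : A.Nonempty)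
    (hm : volume ({x | Metric.infDist x A = 0} ∩ Ω) ≠ 0)
    {r : ℝ} (hM : upMink N A Ω r = 0) : (N : ℝ) ≤ r := by
  by_contra hlt
  push_neg at hlt
  set m := volume ({x | Metric.infDist x A = 0} ∩ Ω) with hmdef
  have hfreq : ∀ᶠ t in 𝓝[>] (0 : ℝ),
      m ≤ volume (Metric.thickening t A ∩ Ω) / ENNReal.ofReal (t ^ ((N : ℝ) - r)) := by
    filter_upwards [Ioo_mem_nhdsGT zero_lt_one] with t ht
    have ht0 : (0:ℝ) < t := ht.1
    have hb1 : ENNReal.ofReal (t ^ ((N : ℝ) - r)) ≤ 1 := by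
      rw [← ENNReal.ofReal_one]
      exact ENNReal.ofReal_le_ofReal (Real.rpow_le_one ht0.le ht.2.le (by linarith))
    have hb0 : ENNReal.ofReal (t ^ ((N : ℝ) - r)) ≠ 0 :=
      (ENNReal.ofReal_pos.2 (Real.rpow_pos_of_pos ht0 _)).ne'
    have hmv : m ≤ volume (Metric.thickening t A ∩ Ω) := by
      refine measure_mono ?_
      rintro x ⟨hx, hxΩ⟩
      rw [mem_setOf_eq] at hx
      exact ⟨(Metric.mem_thickening_iff_infDist_lt hA).2 (by rw [hx]; exact ht0), hxΩ⟩
    refine le_trans hmv ?_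
    rw [ENNReal.le_div_iff_mul_le (Or.inl hb0) (Or.inl ENNReal.ofReal_ne_top)]
    exact le_trans (mul_le_mul_right hb1 _) (by rw [mul_one])
  have h2 : m ≤ upMink N A Ω r := le_limsup_of_frequently_le hfreq.frequently
  exact hm (le_antisymm (hM ▸ h2) zero_le)

/-- For a relative fractal drum `(A, Ω)` in `ℝ^N` and `s` with `Re s > dim_B(A, Ω)`,
the distance zeta integrand is integrable on `Ω`, and the relative distance zeta function is
complex differentiable at `s` with the stated derivative. -/
theorem stmt0 (N : ℕ) (hN : 1 ≤ N) (A Ω : Set (EuclideanSpace ℝ (Fin N)))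
    (hA : A.Nonempty) (hΩo : IsOpen Ω) (hΩv : volume Ω < ⊤)
    (hΩδ : ∃ δ > 0, Ω ⊆ Metric.thickening δ A)
    (s : ℂ) (hs : ubDim N A Ω < (s.re : EReal)) :
    MeasureTheory.IntegrableOn
        (fun x => (Metric.infDist x A : ℂ) ^ (s - (N : ℂ))) Ω volume ∧
      HasDerivAt
        (fun z : ℂ => ∫ x in Ω, (Metric.infDist x A : ℂ) ^ (z - (N : ℂ)))
        (∫ x in Ω, (Metric.infDist x A : ℂ) ^ (s - (N : ℂ)) *
          Complex.log (Metric.infDist x A)) s := by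
  have hdmeas : Measurable fun x : EuclideanSpace ℝ (Fin N) => Metric.infDist x A :=
    (continuous_infDist_pt A).measurable
  have hcmeas : Measurable fun x : EuclideanSpace ℝ (Fin N) => (Metric.infDist x A : ℂ) :=
    Complex.measurable_ofReal.comp hdmeas
  obtain ⟨w, hwS, hwlt⟩ := sInf_lt_iff.1 hs
  obtain ⟨r, rfl, hr0⟩ := hwS
  have hrs : r < s.re := by exact_mod_cast hwlt
  set ε : ℝ := (s.re - r) / 4 with hεdef
  have hε0 : 0 < ε := by rw [hεdef]; linarith
  have integ : ∀ τ : ℝ, r < τ →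
      Integrable (fun x => Metric.infDist x A ^ (τ - (N:ℝ))) (volume.restrict Ω) := by
    intro τ hτ
    refine ⟨(hdmeas.pow measurable_const).aestronglyMeasurable, ?_⟩
    rw [hasFiniteIntegral_iff_ofReal
      (Eventually.of_forall fun x => Real.rpow_nonneg Metric.infDist_nonneg _)]
    exact key_lintegral N A Ω hA hΩo hΩv hΩδ hτ hr0
  have Ia := integ (s.re - 2*ε) (by rw [hεdef]; linarith)
  have Ib := integ (s.re + 2*ε) (by rw [hεdef]; linarith)
  have hP : ∀ᵐ x ∂(volume.restrict Ω),
      Metric.infDist x A ≠ 0 ∨ (N : ℝ) ≤ r := by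
    by_cases hm : volume ({x | Metric.infDist x A = 0} ∩ Ω) = 0
    · have hz : (volume.restrict Ω) {x | Metric.infDist x A = 0} = 0 := by
        rw [Measure.restrict_apply' hΩo.measurableSet]; exact hm
      have hae : ∀ᵐ x ∂(volume.restrict Ω), Metric.infDist x A ≠ 0 := by
        rw [ae_iff]; simpa only [ne_eq, not_not] using hz
      exact hae.mono fun x hx => Or.inl hx
    · exact Eventually.of_forall fun x => Or.inr (dim_ge N A Ω hA hm hr0)
  have hre_ball : ∀ z ∈ ball s ε, |z.re - s.re| < ε := by
    intro z hz
    have h1 : |(z - s).re| ≤ ‖z - s‖ := Complex.abs_re_le_norm _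
    rw [Complex.sub_re] at h1
    have h2 : dist z s < ε := mem_ball.1 hz
    rw [Complex.dist_eq] at h2
    exact lt_of_le_of_lt h1 h2
  have hres : ∀ w : ℂ, (w - (N:ℂ)).re = w.re - (N:ℝ) := fun w => by
    simp [Complex.sub_re]
  have key_pt : ∀ x : EuclideanSpace ℝ (Fin N),
      (Metric.infDist x A ≠ 0 ∨ (N : ℝ) ≤ r) →
      (‖(Metric.infDist x A : ℂ) ^ (s - (N:ℂ))‖ ≤
          Metric.infDist x A ^ (s.re - 2*ε - (N:ℝ)) +
            Metric.infDist x A ^ (s.re + 2*ε - (N:ℝ))) ∧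
      (∀ z ∈ ball s ε,
        ‖(Metric.infDist x A : ℂ) ^ (z - (N:ℂ)) * Complex.log (Metric.infDist x A)‖ ≤
          2/ε * (Metric.infDist x A ^ (s.re - 2*ε - (N:ℝ)) +
            Metric.infDist x A ^ (s.re + 2*ε - (N:ℝ)))) ∧
      (∀ z ∈ ball s ε,
        HasDerivAt (fun z : ℂ => (Metric.infDist x A : ℂ) ^ (z - (N:ℂ)))
          ((Metric.infDist x A : ℂ) ^ (z - (N:ℂ)) * Complex.log (Metric.infDist x A)) z) := by
    intro x hx
    set d := Metric.infDist x A with hd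
    have hd0 : (0:ℝ) ≤ d := Metric.infDist_nonneg
    have hbnn : 0 ≤ d ^ (s.re - 2*ε - (N:ℝ)) + d ^ (s.re + 2*ε - (N:ℝ)) :=
      add_nonneg (Real.rpow_nonneg hd0 _) (Real.rpow_nonneg hd0 _)
    by_cases hdz : d = 0
    · have hNr : (N:ℝ) ≤ r := by
        rcases hx with h | h
        · exact absurd hdz h
        · exact h
      rw [hdz] at hbnn
      refine ⟨?_, ?_, ?_⟩
      · have hsN : s - (N:ℂ) ≠ 0 := by
          intro h0
          have h1 : s.re - (N:ℝ) = 0 := by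
            have := congrArg Complex.re h0
            rwa [hres s, Complex.zero_re] at this
          linarith
        rw [hdz, Complex.ofReal_zero, Complex.zero_cpow hsN, norm_zero]
        exact hbnn
      · intro z hz
        rw [hdz, Complex.ofReal_zero, Complex.log_zero, mul_zero, norm_zero]
        exact mul_nonneg (by positivity) hbnn
      · intro z hz
        have hzN : z - (N:ℂ) ≠ 0 := by
          intro h0
          have h1 : z.re - (N:ℝ) = 0 := by
            have := congrArg Complex.re h0
            rwa [hres z, Complex.zero_re] at this
          have h2 := hre_ball z hz
          rw [abs_lt] at h2
          have h3 : s.re - r = 4 * ε := by rw [hεdef]; ring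
          linarith [h2.1, h2.2]
        rw [hdz, Complex.ofReal_zero]
        exact hasDerivAt_cpow_shift (Or.inr hzN)
    · have hdpos : 0 < d := hd0.lt_of_ne (Ne.symm hdz)
      have habs : ∀ w : ℂ, ‖(d:ℂ) ^ w‖ = d ^ w.re := fun w => by
        rw [Complex.norm_cpow_eq_rpow_re_of_pos hdpos]
      refine ⟨?_, ?_, ?_⟩
      · rw [habs, hres]
        exact rpow_le_add_rpow hdpos (by linarith) (by linarith)
      · intro z hz
        have hzre := hre_ball z hz
        rw [abs_lt] at hzre
        rw [norm_mul, habs, hres, ← Complex.ofReal_log hd0, Complex.norm_real,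
          Real.norm_eq_abs]
        calc d ^ (z.re - (N:ℝ)) * |Real.log d|
            ≤ d ^ (z.re - (N:ℝ)) * ((d ^ (-ε) + d ^ ε) / ε) :=
              mul_le_mul_of_nonneg_left (abs_log_le_rpow hdpos hε0)
                (Real.rpow_nonneg hd0 _)
          _ = (d ^ (z.re - (N:ℝ) + -ε) + d ^ (z.re - (N:ℝ) + ε)) / ε := by
              rw [Real.rpow_add hdpos, Real.rpow_add hdpos]; ring
          _ ≤ ((d ^ (s.re - 2*ε - (N:ℝ)) + d ^ (s.re + 2*ε - (N:ℝ))) +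
                (d ^ (s.re - 2*ε - (N:ℝ)) + d ^ (s.re + 2*ε - (N:ℝ)))) / ε := by
              have e1 : d ^ (z.re - (N:ℝ) + -ε) ≤
                  d ^ (s.re - 2*ε - (N:ℝ)) + d ^ (s.re + 2*ε - (N:ℝ)) :=
                rpow_le_add_rpow hdpos (by linarith [hzre.1]) (by linarith [hzre.2])
              have e2 : d ^ (z.re - (N:ℝ) + ε) ≤
                  d ^ (s.re - 2*ε - (N:ℝ)) + d ^ (s.re + 2*ε - (N:ℝ)) :=
                rpow_le_add_rpow hdpos (by linarith [hzre.1]) (by linarith [hzre.2])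
              gcongr
          _ = 2/ε * (d ^ (s.re - 2*ε - (N:ℝ)) + d ^ (s.re + 2*ε - (N:ℝ))) := by ring
      · intro z hz
        exact hasDerivAt_cpow_shift (Or.inl (Complex.ofReal_ne_zero.2 hdz))
  have hF_int : Integrable (fun x => (Metric.infDist x A : ℂ) ^ (s - (N:ℂ)))
      (volume.restrict Ω) := by
    refine Integrable.mono' (Ia.add Ib)
      ((hcmeas.pow measurable_const).aestronglyMeasurable) ?_
    exact hP.mono fun x hx => (key_pt x hx).1
  have hF'_meas : AEStronglyMeasurable
      (fun x => (Metric.infDist x A : ℂ) ^ (s - (N:ℂ)) *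
        Complex.log (Metric.infDist x A)) (volume.restrict Ω) :=
    ((hcmeas.pow measurable_const).mul hcmeas.clog).aestronglyMeasurable
  have H := hasDerivAt_integral_of_dominated_loc_of_deriv_le (𝕜 := ℂ)
      (μ := volume.restrict Ω)
      (F := fun z x => (Metric.infDist x A : ℂ) ^ (z - (N:ℂ)))
      (F' := fun z x => (Metric.infDist x A : ℂ) ^ (z - (N:ℂ)) *
        Complex.log (Metric.infDist x A))
      (bound := fun x => 2/ε * (Metric.infDist x A ^ (s.re - 2*ε - (N:ℝ)) +
        Metric.infDist x A ^ (s.re + 2*ε - (N:ℝ))))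
      (Metric.ball_mem_nhds s hε0)
      (Eventually.of_forall fun z =>
        ((hcmeas.pow measurable_const).aestronglyMeasurable))
      hF_int hF'_meas
      (hP.mono fun x hx => (key_pt x hx).2.1)
      ((Ia.add Ib).const_mul _)
      (hP.mono fun x hx => (key_pt x hx).2.2)
  exact ⟨hF_int, H.2⟩
end

section
/- Let N ≥ 1 and let (A,Ω) be a relative fractal drum in ℝ^N. Then for every real number σ with σ < \overline{dim}_B(A,Ω), the nonnegative function x ↦ d(x,A)^{σ−N} is not Lebesgue integrable on Ω; i.e., its extended-real (lower) Lebesgue integral over Ω equals +∞ (with 0^{σ−N} := +∞ since σ−N < 0). In other words, the lower bound Re s > \overline{dim}_B(A,Ω) for absolute convergence of ζ_{A,Ω} is optimal: the abscissa of convergence of ζ_{A,Ω} equals \overline{dim}_B(A,Ω). -/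
open MeasureTheory Metric Filter Set
open scoped ENNReal Topology

/-- Antitonicity of `ENNReal.rpow` in the base, for nonpositive exponents. -/
lemma ennrpow_anti {a b : ℝ≥0∞} {y : ℝ} (hy : y ≤ 0) (hab : a ≤ b) : b ^ y ≤ a ^ y := by
  have h2 : a ^ (-y) ≤ b ^ (-y) := ENNReal.rpow_le_rpow hab (by linarith)
  calc b ^ y = (b ^ (-y))⁻¹ := by rw [← ENNReal.rpow_neg, neg_neg]
    _ ≤ (a ^ (-y))⁻¹ := ENNReal.inv_le_inv.mpr h2
    _ = a ^ y := by rw [← ENNReal.rpow_neg, neg_neg]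

/-- For `r > N`, the upper `r`-dimensional Minkowski content vanishes, provided `Ω` has
finite volume. -/
lemma upMink_eq_zero_of_gt (N : ℕ) (A Ω : Set (EuclideanSpace ℝ (Fin N)))
    (hΩv : volume Ω < ⊤) {r : ℝ} (hr : (N : ℝ) < r) : upMink N A Ω r = 0 := by
  have hb : ∀ᶠ t in 𝓝[>] (0 : ℝ),
      volume (Metric.thickening t A ∩ Ω) / ENNReal.ofReal (t ^ ((N : ℝ) - r))
        ≤ volume Ω * ENNReal.ofReal (t ^ (r - (N : ℝ))) := by
    filter_upwards [self_mem_nhdsWithin] with t (ht : 0 < t)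
    have hpos : (0 : ℝ) < t ^ ((N : ℝ) - r) := Real.rpow_pos_of_pos ht _
    have hinv : (ENNReal.ofReal (t ^ ((N : ℝ) - r)))⁻¹
        = ENNReal.ofReal (t ^ (r - (N : ℝ))) := by
      rw [← ENNReal.ofReal_inv_of_pos hpos]
      congr 1
      rw [← Real.rpow_neg ht.le, neg_sub]
    calc volume (Metric.thickening t A ∩ Ω) / ENNReal.ofReal (t ^ ((N : ℝ) - r))
        ≤ volume Ω / ENNReal.ofReal (t ^ ((N : ℝ) - r)) :=
          ENNReal.div_le_div_right (measure_mono inter_subset_right) _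
      _ = volume Ω * ENNReal.ofReal (t ^ (r - (N : ℝ))) := by
          rw [div_eq_mul_inv, hinv]
  have htend : Tendsto (fun t : ℝ => volume Ω * ENNReal.ofReal (t ^ (r - (N : ℝ))))
      (𝓝[>] (0 : ℝ)) (𝓝 0) := by
    have h1 : Tendsto (fun t : ℝ => t ^ (r - (N : ℝ))) (𝓝[>] (0 : ℝ)) (𝓝 0) := by
      have hc : ContinuousAt (fun t : ℝ => t ^ (r - (N : ℝ))) 0 :=
        Real.continuousAt_rpow_const 0 _ (Or.inr (by linarith))
      have h0 : (0 : ℝ) ^ (r - (N : ℝ)) = 0 := Real.zero_rpow (by linarith)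
      simpa [h0] using hc.tendsto.mono_left nhdsWithin_le_nhds
    have h2 : Tendsto (fun t : ℝ => ENNReal.ofReal (t ^ (r - (N : ℝ))))
        (𝓝[>] (0 : ℝ)) (𝓝 0) := by
      simpa [Function.comp_def] using (ENNReal.continuous_ofReal.tendsto 0).comp h1
    simpa using ENNReal.Tendsto.const_mul h2 (Or.inr hΩv.ne)
  have : upMink N A Ω r ≤ 0 := by
    calc upMink N A Ω r
        ≤ limsup (fun t : ℝ => volume Ω * ENNReal.ofReal (t ^ (r - (N : ℝ))))
            (𝓝[>] (0 : ℝ)) := limsup_le_limsup hb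
      _ = 0 := htend.limsup_eq
  exact le_antisymm this zero_le

/-- For a relative fractal drum `(A, Ω)` in `ℝ^N` and any real `σ < dim_B(A, Ω)`, the
(extended-real) Lebesgue integral over `Ω` of `d(x,A)^{σ-N}` (with the convention
`0^{σ-N} = +∞`, as provided by `ENNReal.rpow`) is infinite: the abscissa of convergence of
the relative distance zeta function equals the upper relative box dimension. -/
theorem stmt1 (N : ℕ) (hN : 1 ≤ N) (A Ω : Set (EuclideanSpace ℝ (Fin N)))
    (hA : A.Nonempty) (hΩo : IsOpen Ω) (hΩv : volume Ω < ⊤)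
    (hΩδ : ∃ δ > 0, Ω ⊆ Metric.thickening δ A)
    (σ : ℝ) (hσ : (σ : EReal) < ubDim N A Ω) :
    ∫⁻ x in Ω, (ENNReal.ofReal (Metric.infDist x A)) ^ (σ - (N : ℝ)) = ⊤ := by
  -- choose a real `r` with `σ < r < ubDim`
  obtain ⟨z, hz1, hz2⟩ := exists_between hσ
  have hzt : z ≠ ⊤ := (hz2.trans_le le_top).ne
  have hzb : z ≠ ⊥ := by
    intro h; rw [h] at hz1; exact absurd hz1 (not_lt.2 bot_le)
  lift z to ℝ using ⟨hzt, hzb⟩ with r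
  have hσr : σ < r := by exact_mod_cast hz1
  -- `upMink r ≠ 0`, since `r < ubDim = sInf {…}`
  have hr0 : upMink N A Ω r ≠ 0 := by
    intro h
    exact absurd (sInf_le ⟨r, rfl, h⟩ : ubDim N A Ω ≤ (r : EReal)) (not_le.2 hz2)
  -- hence `r ≤ N`
  have hrN : r ≤ (N : ℝ) := by
    by_contra h
    exact hr0 (upMink_eq_zero_of_gt N A Ω hΩv (by linarith))
  have hσN : σ - (N : ℝ) ≤ 0 := by linarith
  -- pick `c` with `0 < c < upMink r`
  obtain ⟨c, hc0, hcL⟩ := exists_between (pos_iff_ne_zero.mpr hr0 : 0 < upMink N A Ω r)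
  have hcT : c ≠ ⊤ := (hcL.trans_le le_top).ne
  have hfreq : ∃ᶠ t in 𝓝[>] (0 : ℝ),
      c < volume (Metric.thickening t A ∩ Ω) / ENNReal.ofReal (t ^ ((N : ℝ) - r)) :=
    frequently_lt_of_lt_limsup (by isBoundedDefault) hcL
  set I := ∫⁻ x in Ω, (ENNReal.ofReal (Metric.infDist x A)) ^ (σ - (N : ℝ)) with hI
  -- key lower bound
  have key : ∀ t : ℝ, 0 < t →
      c < volume (Metric.thickening t A ∩ Ω) / ENNReal.ofReal (t ^ ((N : ℝ) - r)) →
      c * ENNReal.ofReal t ^ (σ - r) ≤ I := by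
    intro t ht hcf
    set S := Metric.thickening t A ∩ Ω with hS
    have hT0 : ENNReal.ofReal (t ^ ((N : ℝ) - r)) ≠ 0 :=
      (ENNReal.ofReal_pos.mpr (Real.rpow_pos_of_pos ht _)).ne'
    have hVc : c * ENNReal.ofReal (t ^ ((N : ℝ) - r)) ≤ volume S :=
      le_of_lt ((ENNReal.lt_div_iff_mul_lt (Or.inl hT0)
        (Or.inl ENNReal.ofReal_ne_top)).mp hcf)
    have hmeas : MeasurableSet S := (Metric.isOpen_thickening.inter hΩo).measurableSet
    have ht0 : ENNReal.ofReal t ≠ 0 := (ENNReal.ofReal_pos.mpr ht).ne'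
    have step1 : ∫⁻ x in S, (ENNReal.ofReal (Metric.infDist x A)) ^ (σ - (N : ℝ)) ≤ I :=
      lintegral_mono_set inter_subset_right
    have step2 : ∫⁻ _x in S, (ENNReal.ofReal t) ^ (σ - (N : ℝ))
        ≤ ∫⁻ x in S, (ENNReal.ofReal (Metric.infDist x A)) ^ (σ - (N : ℝ)) := by
      refine setLIntegral_mono' hmeas fun x hx => ?_
      obtain ⟨z, hzA, hzd⟩ := Metric.mem_thickening_iff.mp hx.1
      have hd : Metric.infDist x A ≤ t := (Metric.infDist_le_dist_of_mem hzA).trans hzd.le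
      exact ennrpow_anti hσN (ENNReal.ofReal_le_ofReal hd)
    have step3 : (ENNReal.ofReal t) ^ (σ - (N : ℝ)) * (c * ENNReal.ofReal (t ^ ((N : ℝ) - r)))
        ≤ ∫⁻ _x in S, (ENNReal.ofReal t) ^ (σ - (N : ℝ)) := by
      rw [setLIntegral_const]
      exact mul_le_mul_right hVc _
    have heq : (ENNReal.ofReal t) ^ (σ - (N : ℝ)) * (c * ENNReal.ofReal (t ^ ((N : ℝ) - r)))
        = c * ENNReal.ofReal t ^ (σ - r) := by
      rw [← ENNReal.ofReal_rpow_of_pos ht,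
        show σ - r = (σ - (N : ℝ)) + ((N : ℝ) - r) by ring,
        ENNReal.rpow_add _ _ ht0 ENNReal.ofReal_ne_top]
      ring
    calc c * ENNReal.ofReal t ^ (σ - r)
        = (ENNReal.ofReal t) ^ (σ - (N : ℝ)) * (c * ENNReal.ofReal (t ^ ((N : ℝ) - r))) :=
          heq.symm
      _ ≤ ∫⁻ _x in S, (ENNReal.ofReal t) ^ (σ - (N : ℝ)) := step3
      _ ≤ ∫⁻ x in S, (ENNReal.ofReal (Metric.infDist x A)) ^ (σ - (N : ℝ)) := step2
      _ ≤ I := step1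
  -- conclude by contradiction
  by_contra hItop
  have hIlt : I < ⊤ := lt_top_iff_ne_top.mpr hItop
  have htend : Tendsto (fun t : ℝ => c * ENNReal.ofReal t ^ (σ - r))
      (𝓝[>] (0 : ℝ)) (𝓝 ⊤) := by
    have h1 : Tendsto (fun t : ℝ => ENNReal.ofReal t) (𝓝[>] (0 : ℝ)) (𝓝 0) := by
      simpa using (ENNReal.continuous_ofReal.tendsto 0).mono_left nhdsWithin_le_nhds
    have h2 : Tendsto (fun x : ℝ≥0∞ => x ^ (σ - r)) (𝓝 0) (𝓝 ⊤) := by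
      have := (ENNReal.continuous_rpow_const (y := σ - r)).tendsto 0
      rwa [ENNReal.zero_rpow_of_neg (by linarith)] at this
    have h3 := (h2.comp h1)
    have h4 := ENNReal.Tendsto.const_mul (a := c) h3 (Or.inl (by simp : (⊤ : ℝ≥0∞) ≠ 0))
    rwa [ENNReal.mul_top hc0.ne'] at h4
  have hev : ∀ᶠ t in 𝓝[>] (0 : ℝ), I < c * ENNReal.ofReal t ^ (σ - r) :=
    htend (isOpen_Ioi.mem_nhds hIlt)
  obtain ⟨t, hcf, hIlt', ht⟩ :=
    (hfreq.and_eventually (hev.and self_mem_nhdsWithin)).exists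
  exact absurd (key t ht hcf) (not_le.2 hIlt')
end

section
/- Let N ≥ 1, let (A,Ω) be a relative fractal drum in ℝ^N, and let D ∈ ℝ with D < N. Assume that M_*^D(A,Ω) > 0 and that M^{*r}(A,Ω) = 0 for every r > D (so the relative box dimension of (A,Ω) exists and equals D). Then ∫_Ω d(x,A)^{σ−N} dx → +∞ as σ → D from the right along the reals; i.e., the map σ ↦ ∫_Ω d(x,A)^{σ−N} dx, which is finite for real σ > D, tends to +∞ along the filter 𝓝[>] D. -/
open MeasureTheory Metric Filter Set
open scoped ENNReal Topology

/-- The lower `r`-dimensional relative Minkowski content of the pair `(A, Ω)` in `ℝ^N`. -/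
noncomputable def loMink (N : ℕ) (A Ω : Set (EuclideanSpace ℝ (Fin N))) (r : ℝ) : ℝ≥0∞ :=
  Filter.liminf
    (fun t : ℝ => volume (Metric.thickening t A ∩ Ω) / ENNReal.ofReal (t ^ ((N : ℝ) - r)))
    (𝓝[>] (0 : ℝ))

private lemma ev_interval {p : ℝ → Prop} (h : ∀ᶠ t in 𝓝[>] (0:ℝ), p t) :
    ∃ t₀ > (0:ℝ), ∀ t, 0 < t → t ≤ t₀ → p t := by
  rcases mem_nhdsGT_iff_exists_Ioc_subset.mp h with ⟨u, hu, hsub⟩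
  exact ⟨u, hu, fun t ht htu => hsub ⟨ht, htu⟩⟩

private lemma upper_est {N : ℕ} {A Ω : Set (EuclideanSpace ℝ (Fin N))} (r : ℝ)
    (h : upMink N A Ω r = 0) {ε : ℝ≥0∞} (hε : 0 < ε) :
    ∃ t₀ > (0:ℝ), ∀ t, 0 < t → t ≤ t₀ →
      volume (thickening t A ∩ Ω) ≤ ε * ENNReal.ofReal (t ^ ((N:ℝ) - r)) := by
  have h' : Filter.limsup
      (fun t : ℝ => volume (Metric.thickening t A ∩ Ω) / ENNReal.ofReal (t ^ ((N : ℝ) - r)))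
      (𝓝[>] (0:ℝ)) < ε := by
    rw [show Filter.limsup _ _ = upMink N A Ω r from rfl, h]; exact hε
  rcases ev_interval (eventually_lt_of_limsup_lt h') with ⟨t₀, ht₀, H⟩
  refine ⟨t₀, ht₀, fun t ht htu => ?_⟩
  have hb0 : ENNReal.ofReal (t ^ ((N:ℝ) - r)) ≠ 0 := by
    simp only [ne_eq, ENNReal.ofReal_eq_zero, not_le]
    exact Real.rpow_pos_of_pos ht _
  exact ((ENNReal.div_lt_iff (Or.inl hb0) (Or.inl ENNReal.ofReal_ne_top)).mp (H t ht htu)).le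

private lemma lower_est {N : ℕ} {A Ω : Set (EuclideanSpace ℝ (Fin N))} (D : ℝ)
    (h : 0 < loMink N A Ω D) :
    ∃ c : ℝ≥0∞, 0 < c ∧ c ≠ ⊤ ∧ ∃ t₀ > (0:ℝ), ∀ t, 0 < t → t ≤ t₀ →
      c * ENNReal.ofReal (t ^ ((N:ℝ) - D)) ≤ volume (thickening t A ∩ Ω) := by
  set c : ℝ≥0∞ := min 1 (loMink N A Ω D) / 2 with hc
  have hmin0 : min 1 (loMink N A Ω D) ≠ 0 := by
    simp only [ne_eq, min_eq_iff, not_or]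
    constructor <;> rintro ⟨h1, -⟩
    · exact one_ne_zero h1
    · exact h.ne' h1
  have hmint : min 1 (loMink N A Ω D) ≠ ⊤ :=
    ne_top_of_le_ne_top ENNReal.one_ne_top (min_le_left _ _)
  have hc0 : 0 < c := by
    rw [hc]
    exact ENNReal.div_pos hmin0 (by norm_num)
  have hct : c ≠ ⊤ := by
    rw [hc]
    exact (ENNReal.div_lt_top hmint (by norm_num)).ne
  have hcL : c < loMink N A Ω D :=
    lt_of_lt_of_le (ENNReal.half_lt_self hmin0 hmint) (min_le_right _ _)
  have h' : c < Filter.liminf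
      (fun t : ℝ => volume (Metric.thickening t A ∩ Ω) / ENNReal.ofReal (t ^ ((N : ℝ) - D)))
      (𝓝[>] (0:ℝ)) := hcL
  rcases ev_interval (eventually_lt_of_lt_liminf h') with ⟨t₀, ht₀, H⟩
  refine ⟨c, hc0, hct, t₀, ht₀, fun t ht htu => ?_⟩
  have hb0 : ENNReal.ofReal (t ^ ((N:ℝ) - D)) ≠ 0 := by
    simp only [ne_eq, ENNReal.ofReal_eq_zero, not_le]
    exact Real.rpow_pos_of_pos ht _
  exact ((ENNReal.lt_div_iff_mul_lt (Or.inl hb0)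
    (Or.inl ENNReal.ofReal_ne_top)).mp (H t ht htu)).le

/-- If the relative box dimension of the RFD `(A, Ω)` exists and equals `D < N`, with
positive lower `D`-dimensional Minkowski content, then the (finite, for `σ > D`) integral
`∫_Ω d(x,A)^{σ-N} dx` tends to `+∞` as `σ → D⁺`. -/
theorem stmt2 (N : ℕ) (hN : 1 ≤ N) (A Ω : Set (EuclideanSpace ℝ (Fin N)))
    (hA : A.Nonempty) (hΩo : IsOpen Ω) (hΩv : volume Ω < ⊤)
    (hΩδ : ∃ δ > 0, Ω ⊆ Metric.thickening δ A)
    (D : ℝ) (hDN : D < (N : ℝ))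
    (hlow : 0 < loMink N A Ω D)
    (hup : ∀ r : ℝ, D < r → upMink N A Ω r = 0) :
    (∀ σ : ℝ, D < σ →
        ∫⁻ x in Ω, (ENNReal.ofReal (Metric.infDist x A)) ^ (σ - (N : ℝ)) ≠ ⊤) ∧
      Filter.Tendsto
        (fun σ : ℝ => ∫⁻ x in Ω, (ENNReal.ofReal (Metric.infDist x A)) ^ (σ - (N : ℝ)))
        (𝓝[>] D) (𝓝 ⊤) := by
  obtain ⟨δ, hδ, hΩsub⟩ := hΩδ
  have hΩm : MeasurableSet Ω := hΩo.measurableSet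
  -- the distance function and its measurability
  set d : EuclideanSpace ℝ (Fin N) → ℝ := fun x => infDist x A with hdDef
  have hdm : Measurable d := (continuous_infDist_pt A).measurable
  have hFm : ∀ σ : ℝ, Measurable fun x => d x ^ (σ - (N:ℝ)) := fun σ =>
    hdm.pow measurable_const
  have hdist_lt : ∀ x ∈ Ω, d x < δ := fun x hx =>
    (mem_thickening_iff_infDist_lt hA).mp (hΩsub hx)
  -- the closure of A meets Ω in a null set
  have hnull : volume (closure A ∩ Ω) = 0 := by
    set r : ℝ := (D + N) / 2 with hr
    have hDr : D < r := by rw [hr]; linarith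
    have hrN : (0:ℝ) < (N:ℝ) - r := by rw [hr]; linarith
    obtain ⟨t₀, ht₀, HU⟩ := upper_est r (hup r hDr) (ε := 1) zero_lt_one
    have hev : ∀ᶠ t in 𝓝[>] (0:ℝ),
        volume (closure A ∩ Ω) ≤ ENNReal.ofReal (t ^ ((N:ℝ) - r)) := by
      filter_upwards [Ioc_mem_nhdsGT_of_mem ⟨le_rfl, ht₀⟩] with t ht
      calc volume (closure A ∩ Ω) ≤ volume (thickening t A ∩ Ω) :=
            measure_mono (inter_subset_inter_left _ (closure_subset_thickening ht.1 A))
        _ ≤ 1 * ENNReal.ofReal (t ^ ((N:ℝ) - r)) := HU t ht.1 ht.2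
        _ = ENNReal.ofReal (t ^ ((N:ℝ) - r)) := one_mul _
    have htend : Tendsto (fun t : ℝ => ENNReal.ofReal (t ^ ((N:ℝ) - r))) (𝓝[>] (0:ℝ))
        (𝓝 0) := by
      have h1 : Tendsto (fun t : ℝ => t ^ ((N:ℝ) - r)) (𝓝 (0:ℝ)) (𝓝 0) := by
        have := Real.continuousAt_rpow_const 0 ((N:ℝ) - r) (Or.inr hrN.le)
        simpa [Real.zero_rpow hrN.ne'] using this.tendsto
      have h1' : Tendsto (fun t : ℝ => t ^ ((N:ℝ) - r)) (𝓝[>] (0:ℝ)) (𝓝 0) :=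
        h1.mono_left nhdsWithin_le_nhds
      have h2 := (ENNReal.continuous_ofReal.tendsto 0).comp h1'
      simpa [Function.comp_def] using h2
    simpa using ge_of_tendsto htend hev
  have haeclos : ∀ᵐ x ∂(volume.restrict Ω), x ∉ closure A := by
    rw [ae_iff]
    have : (volume.restrict Ω) (closure A) = 0 := by
      rw [Measure.restrict_apply' hΩm]; exact hnull
    simpa [not_not] using this
  -- layer cake representation
  have key_eq : ∀ σ : ℝ,
      ∫⁻ x in Ω, (ENNReal.ofReal (d x)) ^ (σ - (N:ℝ)) =
        ∫⁻ t in Ioi (0:ℝ), (volume.restrict Ω) {x | t < d x ^ (σ - (N:ℝ))} := by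
    intro σ
    have h1 : ∫⁻ x in Ω, (ENNReal.ofReal (d x)) ^ (σ - (N:ℝ)) =
        ∫⁻ x in Ω, ENNReal.ofReal (d x ^ (σ - (N:ℝ))) := by
      apply lintegral_congr_ae
      filter_upwards [haeclos] with x hx
      have hdx : 0 < d x := by
        rcases (infDist_nonneg (x := x) (s := A)).lt_or_eq with h | h
        · exact h
        · exact absurd ((mem_closure_iff_infDist_zero hA).mpr h.symm) hx
      rw [← ENNReal.ofReal_rpow_of_pos hdx]
    rw [h1]
    exact lintegral_eq_lintegral_meas_lt _
      (ae_of_all _ fun x => Real.rpow_nonneg infDist_nonneg _) (hFm σ).aemeasurable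
  -- upper bound for the level-set measures
  have hSup : ∀ σ : ℝ, σ < (N:ℝ) → ∀ t : ℝ, 0 < t →
      (volume.restrict Ω) {x | t < d x ^ (σ - (N:ℝ))} ≤
        volume (thickening (t ^ (σ - (N:ℝ))⁻¹) A ∩ Ω) := by
    intro σ hσ t ht
    have hne : σ - (N:ℝ) ≠ 0 := by intro h; nlinarith [sub_eq_zero.mp h]
    rw [Measure.restrict_apply' hΩm]
    refine measure_mono (inter_subset_inter_left _ ?_)
    intro x hx
    have hx' : t < d x ^ (σ - (N:ℝ)) := hx
    have hdx : 0 < d x := by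
      rcases (infDist_nonneg (x := x) (s := A)).lt_or_eq with h | h
      · exact h
      · rw [show d x = 0 from h.symm, Real.zero_rpow hne] at hx'; linarith
    have hs : (t ^ (σ - (N:ℝ))⁻¹) ^ (σ - (N:ℝ)) = t := by
      rw [← Real.rpow_mul ht.le, inv_mul_cancel₀ hne, Real.rpow_one]
    have hspos : 0 < t ^ (σ - (N:ℝ))⁻¹ := Real.rpow_pos_of_pos ht _
    rw [mem_thickening_iff_infDist_lt hA]
    by_contra hcon
    push_neg at hcon
    have := Real.rpow_le_rpow_of_nonpos hspos hcon (by linarith : σ - (N:ℝ) ≤ 0)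
    rw [hs] at this
    exact absurd (lt_of_lt_of_le hx' this) (lt_irrefl t)
  -- lower bound for the level-set measures
  have hSlow : ∀ σ : ℝ, σ < (N:ℝ) → ∀ t : ℝ, 0 < t →
      volume (thickening (t ^ (σ - (N:ℝ))⁻¹) A ∩ Ω) ≤
        (volume.restrict Ω) {x | t < d x ^ (σ - (N:ℝ))} := by
    intro σ hσ t ht
    have hne : σ - (N:ℝ) ≠ 0 := by intro h; nlinarith [sub_eq_zero.mp h]
    have hs : (t ^ (σ - (N:ℝ))⁻¹) ^ (σ - (N:ℝ)) = t := by
      rw [← Real.rpow_mul ht.le, inv_mul_cancel₀ hne, Real.rpow_one]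
    rw [Measure.restrict_apply' hΩm]
    have hsub : (thickening (t ^ (σ - (N:ℝ))⁻¹) A ∩ Ω) \ (closure A ∩ Ω) ⊆
        {x | t < d x ^ (σ - (N:ℝ))} ∩ Ω := by
      rintro x ⟨⟨hxt, hxΩ⟩, hxcl⟩
      have hxncl : x ∉ closure A := fun h => hxcl ⟨h, hxΩ⟩
      have hdx : 0 < d x := by
        rcases (infDist_nonneg (x := x) (s := A)).lt_or_eq with h | h
        · exact h
        · exact absurd ((mem_closure_iff_infDist_zero hA).mpr h.symm) hxncl
      have hlt : d x < t ^ (σ - (N:ℝ))⁻¹ := (mem_thickening_iff_infDist_lt hA).mp hxt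
      have := Real.rpow_lt_rpow_of_neg hdx hlt (by linarith : σ - (N:ℝ) < 0)
      rw [hs] at this
      exact ⟨this, hxΩ⟩
    calc volume (thickening (t ^ (σ - (N:ℝ))⁻¹) A ∩ Ω)
        = volume ((thickening (t ^ (σ - (N:ℝ))⁻¹) A ∩ Ω) \ (closure A ∩ Ω)) :=
          (measure_diff_null hnull).symm
      _ ≤ volume ({x | t < d x ^ (σ - (N:ℝ))} ∩ Ω) := measure_mono hsub
  -- Part 1 : finiteness
  have part1 : ∀ σ : ℝ, D < σ →
      ∫⁻ x in Ω, (ENNReal.ofReal (d x)) ^ (σ - (N:ℝ)) ≠ ⊤ := by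
    intro σ hσ
    by_cases hσN : (N:ℝ) ≤ σ
    · -- bounded integrand
      set B : ℝ≥0∞ := max 1 (ENNReal.ofReal δ) with hB
      have hBne : B ≠ ⊤ := by
        rw [hB]
        exact (max_lt ENNReal.one_lt_top ENNReal.ofReal_lt_top).ne
      have hbd : ∀ x ∈ Ω, (ENNReal.ofReal (d x)) ^ (σ - (N:ℝ)) ≤ B ^ (σ - (N:ℝ)) := by
        intro x hx
        refine ENNReal.rpow_le_rpow ?_ (by linarith)
        exact le_trans (ENNReal.ofReal_le_ofReal (hdist_lt x hx).le) (le_max_right _ _)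
      have h1 : ∫⁻ x in Ω, (ENNReal.ofReal (d x)) ^ (σ - (N:ℝ)) ≤
          B ^ (σ - (N:ℝ)) * volume Ω := by
        calc ∫⁻ x in Ω, (ENNReal.ofReal (d x)) ^ (σ - (N:ℝ))
            ≤ ∫⁻ _ in Ω, B ^ (σ - (N:ℝ)) := setLIntegral_mono measurable_const hbd
          _ = B ^ (σ - (N:ℝ)) * volume Ω := setLIntegral_const _ _
      exact ne_top_of_le_ne_top
        (ENNReal.mul_ne_top (ENNReal.rpow_ne_top_of_nonneg (by linarith) hBne) hΩv.ne) h1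
    · push_neg at hσN
      set r : ℝ := (D + σ) / 2 with hr
      have hDr : D < r := by rw [hr]; linarith
      have hrσ : r < σ := by rw [hr]; linarith
      obtain ⟨t₀, ht₀, HU⟩ := upper_est r (hup r hDr) (ε := 1) zero_lt_one
      have hsN : σ - (N:ℝ) < 0 := by linarith
      have hne : σ - (N:ℝ) ≠ 0 := hsN.ne
      set e : ℝ := ((N:ℝ) - r) * (σ - (N:ℝ))⁻¹ with he
      have heneg : e < -1 := by
        rw [he, mul_comm, ← div_eq_inv_mul]
        rw [div_lt_iff_of_neg hsN]
        linarith
      set τ : ℝ := t₀ ^ (σ - (N:ℝ)) with hτ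
      have hτpos : 0 < τ := Real.rpow_pos_of_pos ht₀ _
      rw [key_eq σ]
      rw [show Ioi (0:ℝ) = Ioc 0 τ ∪ Ioi τ from (Ioc_union_Ioi_eq_Ioi hτpos.le).symm,
        lintegral_union measurableSet_Ioi Ioc_disjoint_Ioi_same]
      have piece1 : ∫⁻ t in Ioc (0:ℝ) τ, (volume.restrict Ω) {x | t < d x ^ (σ - (N:ℝ))} ≤
          volume Ω * ENNReal.ofReal τ := by
        calc ∫⁻ t in Ioc (0:ℝ) τ, (volume.restrict Ω) {x | t < d x ^ (σ - (N:ℝ))}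
            ≤ ∫⁻ _ in Ioc (0:ℝ) τ, volume Ω := by
              refine setLIntegral_mono' measurableSet_Ioc fun t _ => ?_
              rw [Measure.restrict_apply' hΩm]
              exact measure_mono inter_subset_right
          _ = volume Ω * volume (Ioc (0:ℝ) τ) := setLIntegral_const _ _
          _ = volume Ω * ENNReal.ofReal τ := by rw [Real.volume_Ioc, sub_zero]
      have piece2 : ∫⁻ t in Ioi τ, (volume.restrict Ω) {x | t < d x ^ (σ - (N:ℝ))} ≤
          ∫⁻ t in Ioi τ, ENNReal.ofReal (t ^ e) := by
        refine setLIntegral_mono' measurableSet_Ioi fun t ht => ?_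
        have htpos : 0 < t := lt_trans hτpos ht
        have hinv_neg : (σ - (N:ℝ))⁻¹ < 0 := inv_neg''.mpr hsN
        have hs_le : t ^ (σ - (N:ℝ))⁻¹ ≤ t₀ := by
          have h1 : t ^ (σ - (N:ℝ))⁻¹ < τ ^ (σ - (N:ℝ))⁻¹ :=
            Real.rpow_lt_rpow_of_neg hτpos ht hinv_neg
          have h2 : τ ^ (σ - (N:ℝ))⁻¹ = t₀ := by
            rw [hτ, ← Real.rpow_mul ht₀.le, mul_inv_cancel₀ hne, Real.rpow_one]
          linarith [h1, h2.le]
        have hspos : 0 < t ^ (σ - (N:ℝ))⁻¹ := Real.rpow_pos_of_pos htpos _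
        calc (volume.restrict Ω) {x | t < d x ^ (σ - (N:ℝ))}
            ≤ volume (thickening (t ^ (σ - (N:ℝ))⁻¹) A ∩ Ω) := hSup σ hσN t htpos
          _ ≤ 1 * ENNReal.ofReal ((t ^ (σ - (N:ℝ))⁻¹) ^ ((N:ℝ) - r)) :=
              HU _ hspos hs_le
          _ = ENNReal.ofReal (t ^ e) := by
              rw [one_mul, ← Real.rpow_mul htpos.le, he, mul_comm]
      have hfin2 : ∫⁻ t in Ioi τ, ENNReal.ofReal (t ^ e) < ⊤ :=
        (integrableOn_Ioi_rpow_of_lt heneg hτpos).lintegral_lt_top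
      exact (lt_of_le_of_lt (add_le_add piece1 piece2)
        (ENNReal.add_lt_top.mpr ⟨ENNReal.mul_lt_top hΩv ENNReal.ofReal_lt_top, hfin2⟩)).ne
  refine ⟨part1, ?_⟩
  -- Part 2 : divergence
  obtain ⟨c, hc0, hct, t₁, ht₁, HL⟩ := lower_est D hlow
  have hmain : ∀ σ ∈ Ioo D (N:ℝ),
      c * ENNReal.ofReal (t₁ ^ (σ - D) * (((N:ℝ) - σ) / (σ - D))) ≤
        ∫⁻ x in Ω, (ENNReal.ofReal (d x)) ^ (σ - (N:ℝ)) := by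
    rintro σ ⟨hσD, hσN⟩
    have hsN : σ - (N:ℝ) < 0 := by linarith
    have hne : σ - (N:ℝ) ≠ 0 := hsN.ne
    have hσDne : σ - D ≠ 0 := sub_ne_zero.mpr hσD.ne'
    set e : ℝ := ((N:ℝ) - D) * (σ - (N:ℝ))⁻¹ with he
    have heneg : e < -1 := by
      rw [he, mul_comm, ← div_eq_inv_mul]
      rw [div_lt_iff_of_neg hsN]
      linarith
    set τ : ℝ := t₁ ^ (σ - (N:ℝ)) with hτ
    have hτpos : 0 < τ := Real.rpow_pos_of_pos ht₁ _
    have hval : ∫ t in Ioi τ, t ^ e = t₁ ^ (σ - D) * (((N:ℝ) - σ) / (σ - D)) := by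
      rw [integral_Ioi_rpow_of_lt heneg hτpos]
      have h1 : (σ - (N:ℝ)) * (e + 1) = σ - D := by
        rw [he]; field_simp; ring
      have hτe : τ ^ (e + 1) = t₁ ^ (σ - D) := by
        rw [hτ, ← Real.rpow_mul ht₁.le, h1]
      have hE : e + 1 = (σ - D) / (σ - (N:ℝ)) := by
        rw [he]; field_simp; ring
      rw [hτe, hE]
      field_simp
      ring
    have hint : IntegrableOn (fun t : ℝ => t ^ e) (Ioi τ) :=
      integrableOn_Ioi_rpow_of_lt heneg hτpos
    have hnn : 0 ≤ᵐ[volume.restrict (Ioi τ)] fun t : ℝ => t ^ e :=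
      (ae_restrict_iff' measurableSet_Ioi).mpr
        (ae_of_all _ fun t ht => Real.rpow_nonneg (le_of_lt (lt_trans hτpos ht)) _)
    have hlift : ENNReal.ofReal (t₁ ^ (σ - D) * (((N:ℝ) - σ) / (σ - D))) =
        ∫⁻ t in Ioi τ, ENNReal.ofReal (t ^ e) := by
      rw [← hval]
      exact ofReal_integral_eq_lintegral_ofReal hint hnn
    have hpt : ∀ t ∈ Ioi τ, c * ENNReal.ofReal (t ^ e) ≤
        (volume.restrict Ω) {x | t < d x ^ (σ - (N:ℝ))} := by
      intro t ht
      have htpos : 0 < t := lt_trans hτpos ht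
      have hinv_neg : (σ - (N:ℝ))⁻¹ < 0 := inv_neg''.mpr hsN
      have hs_le : t ^ (σ - (N:ℝ))⁻¹ ≤ t₁ := by
        have h1 : t ^ (σ - (N:ℝ))⁻¹ < τ ^ (σ - (N:ℝ))⁻¹ :=
          Real.rpow_lt_rpow_of_neg hτpos ht hinv_neg
        have h2 : τ ^ (σ - (N:ℝ))⁻¹ = t₁ := by
          rw [hτ, ← Real.rpow_mul ht₁.le, mul_inv_cancel₀ hne, Real.rpow_one]
        linarith [h1, h2.le]
      have hspos : 0 < t ^ (σ - (N:ℝ))⁻¹ := Real.rpow_pos_of_pos htpos _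
      calc c * ENNReal.ofReal (t ^ e)
          = c * ENNReal.ofReal ((t ^ (σ - (N:ℝ))⁻¹) ^ ((N:ℝ) - D)) := by
            congr 1
            rw [← Real.rpow_mul htpos.le, he, mul_comm ((σ - (N:ℝ))⁻¹) (((N:ℝ) - D))]
        _ ≤ volume (thickening (t ^ (σ - (N:ℝ))⁻¹) A ∩ Ω) := HL _ hspos hs_le
        _ ≤ (volume.restrict Ω) {x | t < d x ^ (σ - (N:ℝ))} := hSlow σ hσN t htpos
    calc c * ENNReal.ofReal (t₁ ^ (σ - D) * (((N:ℝ) - σ) / (σ - D)))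
        = c * ∫⁻ t in Ioi τ, ENNReal.ofReal (t ^ e) := by rw [hlift]
      _ = ∫⁻ t in Ioi τ, c * ENNReal.ofReal (t ^ e) :=
          (lintegral_const_mul' c _ hct).symm
      _ ≤ ∫⁻ t in Ioi τ, (volume.restrict Ω) {x | t < d x ^ (σ - (N:ℝ))} :=
          setLIntegral_mono' measurableSet_Ioi hpt
      _ ≤ ∫⁻ t in Ioi (0:ℝ), (volume.restrict Ω) {x | t < d x ^ (σ - (N:ℝ))} :=
          lintegral_mono_set (Ioi_subset_Ioi hτpos.le)
      _ = ∫⁻ x in Ω, (ENNReal.ofReal (d x)) ^ (σ - (N:ℝ)) := (key_eq σ).symm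
  -- the lower bound tends to infinity
  have hreal : Tendsto (fun σ : ℝ => t₁ ^ (σ - D) * (((N:ℝ) - σ) / (σ - D)))
      (𝓝[>] D) atTop := by
    have hf1 : Tendsto (fun σ : ℝ => t₁ ^ (σ - D)) (𝓝[>] D) (𝓝 1) := by
      have hc1 : Continuous fun σ : ℝ => Real.exp (Real.log t₁ * (σ - D)) :=
        Real.continuous_exp.comp (continuous_const.mul (continuous_id.sub continuous_const))
      have heq : (fun σ : ℝ => t₁ ^ (σ - D)) =
          fun σ : ℝ => Real.exp (Real.log t₁ * (σ - D)) := by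
        funext σ; rw [Real.rpow_def_of_pos ht₁]
      rw [heq]
      have := hc1.tendsto D
      simp only [sub_self, mul_zero, Real.exp_zero] at this
      exact this.mono_left nhdsWithin_le_nhds
    have hf2 : Tendsto (fun σ : ℝ => ((N:ℝ) - σ) / (σ - D)) (𝓝[>] D) atTop := by
      have hnum : Tendsto (fun σ : ℝ => (N:ℝ) - σ) (𝓝[>] D) (𝓝 ((N:ℝ) - D)) :=
        ((continuous_const.sub continuous_id).tendsto D).mono_left nhdsWithin_le_nhds
      have hden : Tendsto (fun σ : ℝ => (σ - D)⁻¹) (𝓝[>] D) atTop := by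
        have hsub : Tendsto (fun σ : ℝ => σ - D) (𝓝[>] D) (𝓝[>] (0:ℝ)) := by
          apply tendsto_nhdsWithin_of_tendsto_nhds_of_eventually_within
          · have h0 : Tendsto (fun σ : ℝ => σ - D) (𝓝 D) (𝓝 (D - D)) :=
              (continuous_id.sub continuous_const).tendsto D
            rw [sub_self] at h0
            exact h0.mono_left nhdsWithin_le_nhds
          · filter_upwards [self_mem_nhdsWithin] with σ hσ
            exact sub_pos.mpr (mem_Ioi.mp hσ)
        exact tendsto_inv_nhdsGT_zero.comp hsub
      have := Filter.Tendsto.pos_mul_atTop (by linarith : (0:ℝ) < (N:ℝ) - D) hnum hden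
      simpa [div_eq_mul_inv] using this
    simpa using Filter.Tendsto.pos_mul_atTop zero_lt_one hf1 hf2
  have htop : Tendsto
      (fun σ : ℝ => c * ENNReal.ofReal (t₁ ^ (σ - D) * (((N:ℝ) - σ) / (σ - D))))
      (𝓝[>] D) (𝓝 ⊤) := by
    have h1 : Tendsto
        (fun σ : ℝ => ENNReal.ofReal (t₁ ^ (σ - D) * (((N:ℝ) - σ) / (σ - D))))
        (𝓝[>] D) (𝓝 ⊤) := ENNReal.tendsto_ofReal_nhds_top.mpr hreal
    have h2 := ENNReal.Tendsto.const_mul (a := c) h1 (Or.inl ENNReal.top_ne_zero)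
    rwa [ENNReal.mul_top hc0.ne'] at h2
  have hev2 : (fun σ : ℝ => c * ENNReal.ofReal (t₁ ^ (σ - D) * (((N:ℝ) - σ) / (σ - D))))
      ≤ᶠ[𝓝[>] D]
      (fun σ : ℝ => ∫⁻ x in Ω, (ENNReal.ofReal (Metric.infDist x A)) ^ (σ - (N:ℝ))) := by
    filter_upwards [Ioo_mem_nhdsGT hDN] with σ hσ
    exact hmain σ hσ
  exact tendsto_nhds_top_mono htop hev2
end

section
/- Let N ≥ 1, let (A,Ω) be a relative fractal drum in ℝ^N, and let D ∈ ℝ with D < N be such that (A,Ω) is Minkowski nondegenerate: 0 < M_*^D(A,Ω) ≤ M^{*D}(A,Ω) < ∞. Let U ⊆ ℂ be an open connected set with D ∈ U and let F : ℂ → ℂ be meromorphic on U and satisfy F(s) = ∫_Ω d(x,A)^{s−N} dx for all s ∈ U with Re s > D. Then there exists ρ ∈ ℝ with (N−D)·M_*^D(A,Ω) ≤ ρ ≤ (N−D)·M^{*D}(A,Ω) such that (s−D)·F(s) → ρ as s → D, s ≠ D; in particular ρ > 0, so D is a simple pole of F with residue ρ. If moreover M_*^D(A,Ω) = M^{*D}(A,Ω)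 = M (i.e., (A,Ω) is Minkowski measurable with content M), then ρ = (N−D)·M. -/
open MeasureTheory Metric Filter Set
open scoped ENNReal Topology

lemma rpow_tendsto {p : ℝ} (hp : 0 < p) :
    Tendsto (fun t : ℝ => ENNReal.ofReal (t ^ p)) (𝓝[>] (0:ℝ)) (𝓝 0) := by
  have h1 : Tendsto (fun t : ℝ => t ^ p) (𝓝[>] (0:ℝ)) (𝓝 0) := by
    have := (Real.continuousAt_rpow_const 0 p (Or.inr hp.le)).tendsto
    rw [Real.zero_rpow hp.ne'] at this
    exact this.mono_left nhdsWithin_le_nhds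
  have := (ENNReal.continuous_ofReal.tendsto 0).comp h1
  rw [ENNReal.ofReal_zero] at this
  exact this

lemma vol_zero_set {N : ℕ} {A Ω : Set (EuclideanSpace ℝ (Fin N))}
    (hA : A.Nonempty) {D : ℝ} (hDN : D < (N:ℝ)) (hup : upMink N A Ω D < ⊤) :
    volume ({x | infDist x A = 0} ∩ Ω) = 0 := by
  set S := {x | infDist x A = 0} ∩ Ω with hS
  have hsub : ∀ t : ℝ, 0 < t → S ⊆ thickening t A ∩ Ω := by
    intro t ht
    rintro x ⟨hx0, hxΩ⟩
    exact ⟨(mem_thickening_iff_infDist_lt hA).2 (by simp_all), hxΩ⟩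
  set C := upMink N A Ω D + 1 with hC
  have hCup : upMink N A Ω D < C := ENNReal.lt_add_right hup.ne one_ne_zero
  have hev : ∀ᶠ t in 𝓝[>] (0:ℝ),
      volume (thickening t A ∩ Ω) / ENNReal.ofReal (t ^ ((N:ℝ) - D)) < C :=
    Filter.eventually_lt_of_limsup_lt hCup
  have hev2 : ∀ᶠ t in 𝓝[>] (0:ℝ),
      volume S ≤ C * ENNReal.ofReal (t ^ ((N:ℝ) - D)) := by
    filter_upwards [hev, self_mem_nhdsWithin] with t hlt ht
    have ht : (0:ℝ) < t := ht
    have hden : ENNReal.ofReal (t ^ ((N:ℝ) - D)) ≠ 0 := by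
      simp [ENNReal.ofReal_eq_zero, not_le, Real.rpow_pos_of_pos ht]
    have := (ENNReal.div_lt_iff (Or.inl hden) (Or.inl ENNReal.ofReal_ne_top)).1 hlt
    exact le_trans (measure_mono (hsub t ht)) this.le
  have htend : Tendsto (fun t : ℝ => C * ENNReal.ofReal (t ^ ((N:ℝ) - D))) (𝓝[>] (0:ℝ)) (𝓝 0) := by
    have := ENNReal.Tendsto.const_mul (rpow_tendsto (by linarith : (0:ℝ) < (N:ℝ) - D)) (a := C)
      (Or.inr (by simp [hC]; exact hup.ne))
    simpa using this
  by_contra hne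
  have hpos : 0 < volume S := pos_iff_ne_zero.2 hne
  have := (htend.eventually (eventually_lt_nhds hpos)).and hev2
  rcases this.exists with ⟨t, h1, h2⟩
  exact absurd (h2.trans_lt h1) (lt_irrefl _)

noncomputable def Zf (N : ℕ) (A Ω : Set (EuclideanSpace ℝ (Fin N))) (σ : ℝ) : ℝ≥0∞ :=
  ∫⁻ x in Ω, ENNReal.ofReal (infDist x A ^ (σ - (N : ℝ)))

lemma rep {N : ℕ} {A Ω : Set (EuclideanSpace ℝ (Fin N))}
    (hA : A.Nonempty)
    (hzero : volume ({x | infDist x A = 0} ∩ Ω) = 0)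
    {σ : ℝ} (hσN : σ < (N:ℝ)) :
    Zf N A Ω σ = ∫⁻ t in Ioi (0:ℝ),
      volume (thickening t⁻¹ A ∩ Ω) * ENNReal.ofReal (((N:ℝ) - σ) * t ^ ((N:ℝ) - σ - 1)) := by
  have hNσ : (0:ℝ) < (N:ℝ) - σ := by linarith
  have hd_meas : Measurable (fun x : EuclideanSpace ℝ (Fin N) => infDist x A) :=
    (continuous_infDist_pt A).measurable
  have key := lintegral_comp_eq_lintegral_meas_lt_mul (volume.restrict Ω)
    (f := fun x => (infDist x A)⁻¹)
    (g := fun t => ((N:ℝ) - σ) * t ^ ((N:ℝ) - σ - 1))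
    (Eventually.of_forall fun x => inv_nonneg.2 infDist_nonneg)
    hd_meas.inv.aemeasurable
    (fun t ht => (intervalIntegral.intervalIntegrable_rpow' (by linarith)).const_mul _)
    (by
      filter_upwards [ae_restrict_mem measurableSet_Ioi] with t ht
      exact mul_nonneg (by linarith) (Real.rpow_nonneg (le_of_lt ht) _))
  have hLHS : ∀ x : EuclideanSpace ℝ (Fin N),
      (∫ t in (0:ℝ)..(infDist x A)⁻¹, ((N:ℝ) - σ) * t ^ ((N:ℝ) - σ - 1))
        = infDist x A ^ (σ - (N:ℝ)) := by
    intro x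
    rw [intervalIntegral.integral_const_mul, integral_rpow (Or.inl (by linarith))]
    have h0 : (0:ℝ) ^ ((N:ℝ) - σ - 1 + 1) = 0 := Real.zero_rpow (by linarith)
    rw [h0]
    have : (N:ℝ) - σ - 1 + 1 = (N:ℝ) - σ := by ring
    rw [this]
    rw [Real.inv_rpow infDist_nonneg, ← Real.rpow_neg infDist_nonneg]
    have : -((N:ℝ) - σ) = σ - (N:ℝ) := by ring
    rw [this]
    field_simp
    simp
  have hmeas_eq : ∀ t : ℝ, 0 < t →
      (volume.restrict Ω) {a | t < (infDist a A)⁻¹} = volume (thickening t⁻¹ A ∩ Ω) := by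
    intro t ht
    have hset : thickening t⁻¹ A ∩ Ω
        = ({a | t < (infDist a A)⁻¹} ∩ Ω) ∪ ({x | infDist x A = 0} ∩ Ω) := by
      ext x
      simp only [mem_inter_iff, mem_union, mem_setOf_eq, mem_thickening_iff_infDist_lt hA]
      constructor
      · rintro ⟨hlt, hΩ⟩
        rcases eq_or_lt_of_le (infDist_nonneg (x := x) (s := A)) with h0 | hpos
        · exact Or.inr ⟨h0.symm, hΩ⟩
        · exact Or.inl ⟨(lt_inv_comm₀ hpos ht).1 hlt, hΩ⟩
      · rintro (⟨hlt, hΩ⟩ | ⟨h0, hΩ⟩)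
        · have hpos : 0 < infDist x A := by
            by_contra h
            push_neg at h
            have : infDist x A = 0 := le_antisymm h infDist_nonneg
            rw [this] at hlt
            simp at hlt
            linarith
          exact ⟨(lt_inv_comm₀ ht hpos).1 hlt, hΩ⟩
        · exact ⟨by rw [h0]; positivity, hΩ⟩
    rw [Measure.restrict_apply (measurableSet_lt measurable_const hd_meas.inv :
      MeasurableSet {a | t < (infDist a A)⁻¹}), hset]
    have : ({a | t < (infDist a A)⁻¹} ∩ Ω ∪ {x | infDist x A = 0} ∩ Ω : Set _)
        =ᵐ[volume] ({a | t < (infDist a A)⁻¹} ∩ Ω : Set _) :=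
      union_ae_eq_left_of_ae_eq_empty (ae_eq_empty.2 hzero)
    exact (measure_congr this).symm
  calc Zf N A Ω σ = ∫⁻ x in Ω, ENNReal.ofReal
        (∫ t in (0:ℝ)..(infDist x A)⁻¹, ((N:ℝ) - σ) * t ^ ((N:ℝ) - σ - 1)) := by
        unfold Zf; exact lintegral_congr fun x => by rw [hLHS]
    _ = ∫⁻ t in Ioi (0:ℝ), (volume.restrict Ω) {a | t < (infDist a A)⁻¹}
          * ENNReal.ofReal (((N:ℝ) - σ) * t ^ ((N:ℝ) - σ - 1)) := key
    _ = _ := by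
        refine setLIntegral_congr_fun measurableSet_Ioi (fun t ht => ?_)
        rw [hmeas_eq t ht]

-- integral of the weight over the tail
lemma tail_int {c T : ℝ} (hc : 0 ≤ c) (hT : 0 < T) {σ D : ℝ} (hσD : D < σ) :
    ∫⁻ t in Ioi T, ENNReal.ofReal (c * t ^ (D - σ - 1))
      = ENNReal.ofReal (c * (T ^ (D - σ) / (σ - D))) := by
  have hint : IntegrableOn (fun t : ℝ => c * t ^ (D - σ - 1)) (Ioi T) :=
    (integrableOn_Ioi_rpow_of_lt (by linarith) hT).const_mul c
  rw [← ofReal_integral_eq_lintegral_ofReal hint]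
  · congr 1
    rw [integral_const_mul _ _, integral_Ioi_rpow_of_lt (by linarith) hT]
    have : D - σ - 1 + 1 = D - σ := by ring
    rw [this]
    have h1 : D - σ ≠ 0 := by intro h; linarith
    have h2 : σ - D ≠ 0 := by intro h; linarith
    field_simp
    ring
  · filter_upwards [ae_restrict_mem measurableSet_Ioi] with t ht
    exact mul_nonneg hc (Real.rpow_nonneg (le_of_lt (hT.trans ht)) _)

-- integral of the weight near zero
lemma head_int {T σ : ℝ} (hT : 0 < T) {Nr : ℝ} (hσN : σ < Nr) :
    ∫⁻ t in Ioc (0:ℝ) T, ENNReal.ofReal ((Nr - σ) * t ^ (Nr - σ - 1))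
      = ENNReal.ofReal (T ^ (Nr - σ)) := by
  have hint : IntegrableOn (fun t : ℝ => (Nr - σ) * t ^ (Nr - σ - 1)) (Ioc 0 T) :=
    (intervalIntegrable_iff_integrableOn_Ioc_of_le hT.le).1
      ((intervalIntegral.intervalIntegrable_rpow' (by linarith)).const_mul (Nr - σ))
  rw [← ofReal_integral_eq_lintegral_ofReal hint]
  · congr 1
    rw [integral_const_mul _ _, ← intervalIntegral.integral_of_le hT.le,
      integral_rpow (Or.inl (by linarith))]
    rw [Real.zero_rpow (by intro h; linarith : Nr - σ - 1 + 1 ≠ 0)]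
    have h2 : Nr - σ - 1 + 1 = Nr - σ := by ring
    rw [h2]
    have h3 : Nr - σ ≠ 0 := by intro h; linarith
    field_simp
    simp
  · filter_upwards [ae_restrict_mem measurableSet_Ioc] with t ht
    exact mul_nonneg (by linarith) (Real.rpow_nonneg (le_of_lt ht.1) _)

lemma sandwich {N : ℕ} {A Ω : Set (EuclideanSpace ℝ (Fin N))}
    (hA : A.Nonempty) (hΩv : volume Ω < ⊤)
    (hzero : volume ({x | infDist x A = 0} ∩ Ω) = 0)
    {D a b u₀ : ℝ} (ha : 0 ≤ a) (hb : 0 ≤ b) (hu₀ : 0 < u₀)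
    (hV : ∀ u : ℝ, 0 < u → u < u₀ →
      ENNReal.ofReal (a * u ^ ((N:ℝ) - D)) ≤ volume (thickening u A ∩ Ω) ∧
      volume (thickening u A ∩ Ω) ≤ ENNReal.ofReal (b * u ^ ((N:ℝ) - D)))
    {σ : ℝ} (hσD : D < σ) (hσN : σ < (N:ℝ)) :
    a * ((N:ℝ) - σ) * (u₀⁻¹ ^ (D - σ) / (σ - D)) ≤ (Zf N A Ω σ).toReal ∧
    (Zf N A Ω σ).toReal ≤ (volume Ω).toReal * (u₀⁻¹ ^ ((N:ℝ) - σ))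
      + b * ((N:ℝ) - σ) * (u₀⁻¹ ^ (D - σ) / (σ - D)) := by
  set T := u₀⁻¹ with hTdef
  have hT : 0 < T := inv_pos.2 hu₀
  have hrep := rep hA hzero hσN (A := A) (Ω := Ω)
  have hweight : ∀ c : ℝ, 0 ≤ c → ∀ t : ℝ, T < t →
      ENNReal.ofReal (c * (t⁻¹) ^ ((N:ℝ) - D)) * ENNReal.ofReal (((N:ℝ) - σ) * t ^ ((N:ℝ) - σ - 1))
        = ENNReal.ofReal (c * ((N:ℝ) - σ) * t ^ (D - σ - 1)) := by
    intro c hc t ht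
    have ht0 : 0 < t := hT.trans ht
    have hNσ : (0:ℝ) ≤ (N:ℝ) - σ := by linarith
    rw [← ENNReal.ofReal_mul (by positivity)]
    congr 1
    rw [Real.inv_rpow ht0.le, ← Real.rpow_neg ht0.le]
    rw [show c * t ^ (-((N:ℝ) - D)) * (((N:ℝ) - σ) * t ^ ((N:ℝ) - σ - 1))
        = c * ((N:ℝ) - σ) * (t ^ (-((N:ℝ) - D)) * t ^ ((N:ℝ) - σ - 1)) by ring]
    rw [← Real.rpow_add ht0]
    congr 2
    ring
  have htail : ∀ t : ℝ, T < t → 0 < t⁻¹ ∧ t⁻¹ < u₀ := by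
    intro t ht
    have ht0 : 0 < t := hT.trans ht
    refine ⟨inv_pos.2 ht0, ?_⟩
    have := (inv_lt_inv₀ ht0 hT).2 ht
    rwa [hTdef, inv_inv] at this
  -- ENNReal lower bound
  have hlowE : ENNReal.ofReal (a * ((N:ℝ) - σ) * (T ^ (D - σ) / (σ - D))) ≤ Zf N A Ω σ := by
    rw [hrep]
    have e1 : ENNReal.ofReal (a * ((N:ℝ) - σ) * (T ^ (D - σ) / (σ - D)))
        = ∫⁻ t in Ioi T, ENNReal.ofReal (a * ((N:ℝ) - σ) * t ^ (D - σ - 1)) := by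
      rw [tail_int (mul_nonneg ha (by linarith)) hT hσD]
    rw [e1]
    refine le_trans ?_ (lintegral_mono_set (Ioi_subset_Ioi hT.le))
    refine setLIntegral_mono' measurableSet_Ioi fun t ht => ?_
    rw [← hweight a ha t ht]
    exact mul_le_mul_left ((hV _ (htail t ht).1 (htail t ht).2).1) _
  -- ENNReal upper bound
  have hupE : Zf N A Ω σ ≤ volume Ω * ENNReal.ofReal (T ^ ((N:ℝ) - σ))
      + ENNReal.ofReal (b * ((N:ℝ) - σ) * (T ^ (D - σ) / (σ - D))) := by
    rw [hrep, ← Ioc_union_Ioi_eq_Ioi hT.le,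
      lintegral_union measurableSet_Ioi (Ioc_disjoint_Ioi le_rfl)]
    refine add_le_add ?_ ?_
    · calc ∫⁻ t in Ioc (0:ℝ) T, volume (thickening t⁻¹ A ∩ Ω)
            * ENNReal.ofReal (((N:ℝ) - σ) * t ^ ((N:ℝ) - σ - 1))
          ≤ ∫⁻ t in Ioc (0:ℝ) T, volume Ω
            * ENNReal.ofReal (((N:ℝ) - σ) * t ^ ((N:ℝ) - σ - 1)) := by
            refine setLIntegral_mono' measurableSet_Ioc fun t _ => ?_
            exact mul_le_mul_left (measure_mono inter_subset_right) _
        _ = volume Ω * ENNReal.ofReal (T ^ ((N:ℝ) - σ)) := by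
            rw [lintegral_const_mul' _ _ hΩv.ne, head_int hT hσN]
    · have e1 : ENNReal.ofReal (b * ((N:ℝ) - σ) * (T ^ (D - σ) / (σ - D)))
          = ∫⁻ t in Ioi T, ENNReal.ofReal (b * ((N:ℝ) - σ) * t ^ (D - σ - 1)) := by
        rw [tail_int (mul_nonneg hb (by linarith)) hT hσD]
      rw [e1]
      refine setLIntegral_mono' measurableSet_Ioi fun t ht => ?_
      rw [← hweight b hb t ht]
      exact mul_le_mul_left ((hV _ (htail t ht).1 (htail t ht).2).2) _
  have hRHSfin : volume Ω * ENNReal.ofReal (T ^ ((N:ℝ) - σ))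
      + ENNReal.ofReal (b * ((N:ℝ) - σ) * (T ^ (D - σ) / (σ - D))) ≠ ⊤ :=
    (ENNReal.add_lt_top.2 ⟨ENNReal.mul_lt_top hΩv ENNReal.ofReal_lt_top,
      ENNReal.ofReal_lt_top⟩).ne
  have hfin : Zf N A Ω σ ≠ ⊤ := (lt_of_le_of_lt hupE hRHSfin.lt_top).ne
  have hnn : (0:ℝ) ≤ a * ((N:ℝ) - σ) * (T ^ (D - σ) / (σ - D)) := by
    have h1 : (0:ℝ) ≤ (N:ℝ) - σ := by linarith
    have h2 : (0:ℝ) ≤ T ^ (D - σ) := Real.rpow_nonneg hT.le _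
    have h3 : (0:ℝ) ≤ σ - D := by linarith
    positivity
  constructor
  · have := ENNReal.toReal_mono hfin hlowE
    rwa [ENNReal.toReal_ofReal hnn] at this
  · have := ENNReal.toReal_mono hRHSfin hupE
    rw [ENNReal.toReal_add (ENNReal.mul_lt_top hΩv ENNReal.ofReal_lt_top).ne
      ENNReal.ofReal_ne_top, ENNReal.toReal_mul, ENNReal.toReal_ofReal
      (Real.rpow_nonneg hT.le _), ENNReal.toReal_ofReal] at this
    · exact this
    · have h1 : (0:ℝ) ≤ (N:ℝ) - σ := by linarith
      have h2 : (0:ℝ) ≤ T ^ (D - σ) := Real.rpow_nonneg hT.le _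
      have h3 : (0:ℝ) ≤ σ - D := by linarith
      positivity

lemma ev_bounds {N : ℕ} {A Ω : Set (EuclideanSpace ℝ (Fin N))} {D : ℝ}
    (hmM : loMink N A Ω D ≤ upMink N A Ω D) (hup : upMink N A Ω D < ⊤)
    {ε : ℝ} (hε1 : 0 < ε) (hε2 : ε < (loMink N A Ω D).toReal) :
    ∀ᶠ u in 𝓝[>] (0:ℝ),
      ENNReal.ofReal (((loMink N A Ω D).toReal - ε) * u ^ ((N:ℝ) - D))
        ≤ volume (thickening u A ∩ Ω) ∧
      volume (thickening u A ∩ Ω)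
        ≤ ENNReal.ofReal (((upMink N A Ω D).toReal + ε) * u ^ ((N:ℝ) - D)) := by
  set m := loMink N A Ω D
  set M := upMink N A Ω D
  have hmne : m ≠ ⊤ := (lt_of_le_of_lt hmM hup).ne
  have h1 : ENNReal.ofReal (m.toReal - ε) < m :=
    (ENNReal.ofReal_lt_iff_lt_toReal (by linarith) hmne).2 (by linarith)
  have h2 : M < ENNReal.ofReal (M.toReal + ε) :=
    (ENNReal.lt_ofReal_iff_toReal_lt hup.ne).2 (by linarith)
  have hev1 := Filter.eventually_lt_of_lt_liminf h1
  have hev2 := Filter.eventually_lt_of_limsup_lt h2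
  filter_upwards [hev1, hev2, self_mem_nhdsWithin] with u hu1 hu2 hu
  have hu : (0:ℝ) < u := hu
  have hd0 : ENNReal.ofReal (u ^ ((N:ℝ) - D)) ≠ 0 := by
    simp [ENNReal.ofReal_eq_zero, not_le, Real.rpow_pos_of_pos hu]
  constructor
  · have := (ENNReal.lt_div_iff_mul_lt (Or.inl hd0) (Or.inl ENNReal.ofReal_ne_top)).1 hu1
    rw [ENNReal.ofReal_mul (by linarith)]
    exact this.le
  · have := (ENNReal.div_lt_iff (Or.inl hd0) (Or.inl ENNReal.ofReal_ne_top)).1 hu2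
    rw [ENNReal.ofReal_mul (by positivity)]
    exact this.le

lemma cint {N : ℕ} {A Ω : Set (EuclideanSpace ℝ (Fin N))} (σ : ℝ) :
    (∫ x in Ω, (Metric.infDist x A : ℂ) ^ ((σ:ℂ) - (N : ℂ)))
      = ((Zf N A Ω σ).toReal : ℂ) := by
  have h1 : ∀ x : EuclideanSpace ℝ (Fin N),
      (Metric.infDist x A : ℂ) ^ ((σ:ℂ) - (N : ℂ))
        = ((infDist x A ^ (σ - (N:ℝ)) : ℝ) : ℂ) := by
    intro x
    rw [show ((σ:ℂ) - (N:ℂ)) = ((σ - (N:ℝ) : ℝ) : ℂ) by push_cast; ring]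
    rw [Complex.ofReal_cpow infDist_nonneg]
  simp only [h1]
  have h2 : (∫ x in Ω, ((infDist x A ^ (σ - (N:ℝ)) : ℝ) : ℂ))
      = ((∫ x in Ω, infDist x A ^ (σ - (N:ℝ))) : ℝ) := integral_ofReal
  rw [h2]
  congr 1
  rw [integral_eq_lintegral_of_nonneg_ae
    (Eventually.of_forall fun x => Real.rpow_nonneg infDist_nonneg _)
    (by
      have : Measurable (fun x : EuclideanSpace ℝ (Fin N) => infDist x A ^ (σ - (N:ℝ))) := by
        have := (continuous_infDist_pt A).measurable
        fun_prop
      exact this.aestronglyMeasurable)]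
  rfl

/-- For a Minkowski nondegenerate RFD `(A, Ω)` with `D < N`, any meromorphic continuation `F`
of the relative distance zeta function to a connected open neighborhood `U` of `D` has a
simple pole at `D`, whose residue `ρ` satisfies
`(N-D)·M_*^D(A,Ω) ≤ ρ ≤ (N-D)·M^{*D}(A,Ω)`; moreover `ρ = (N-D)·M^D(A,Ω)` if `(A,Ω)` is
Minkowski measurable. -/
theorem stmt3 (N : ℕ) (hN : 1 ≤ N) (A Ω : Set (EuclideanSpace ℝ (Fin N)))
    (hA : A.Nonempty) (hΩo : IsOpen Ω) (hΩv : volume Ω < ⊤)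
    (hΩδ : ∃ δ > 0, Ω ⊆ Metric.thickening δ A)
    (D : ℝ) (hDN : D < (N : ℝ))
    (hlow : 0 < loMink N A Ω D) (hup : upMink N A Ω D < ⊤)
    (U : Set ℂ) (hUo : IsOpen U) (hUc : IsConnected U) (hDU : (D : ℂ) ∈ U)
    (F : ℂ → ℂ) (hF : MeromorphicOn F U)
    (hFeq : ∀ s ∈ U, D < s.re →
      F s = ∫ x in Ω, (Metric.infDist x A : ℂ) ^ (s - (N : ℂ))) :
    ∃ ρ : ℝ,
      ((N : ℝ) - D) * (loMink N A Ω D).toReal ≤ ρ ∧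
      ρ ≤ ((N : ℝ) - D) * (upMink N A Ω D).toReal ∧
      0 < ρ ∧
      Filter.Tendsto (fun z : ℂ => (z - (D : ℂ)) * F z) (𝓝[≠] (D : ℂ)) (𝓝 (ρ : ℂ)) ∧
      (loMink N A Ω D = upMink N A Ω D → ρ = ((N : ℝ) - D) * (upMink N A Ω D).toReal) := by
  have hK : (0:ℝ) < (N:ℝ) - D := by linarith
  have hmM : loMink N A Ω D ≤ upMink N A Ω D := liminf_le_limsup
  have hmne : loMink N A Ω D ≠ ⊤ := (lt_of_le_of_lt hmM hup).ne
  set K : ℝ := (N:ℝ) - D with hKdef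
  set mt : ℝ := (loMink N A Ω D).toReal with hmtdef
  set Mt : ℝ := (upMink N A Ω D).toReal with hMtdef
  clear_value K mt Mt
  have hmt : 0 < mt := by rw [hmtdef]; exact ENNReal.toReal_pos hlow.ne' hmne
  have hmtMt : mt ≤ Mt := by
    rw [hmtdef, hMtdef]; exact ENNReal.toReal_mono hup.ne hmM
  have hzero := vol_zero_set hA hDN hup
  set φ : ℝ → ℝ := fun σ => (σ - D) * (Zf N A Ω σ).toReal with hφdef
  -- step 1: sandwich
  have hsand : ∀ ε : ℝ, 0 < ε → ε < mt →
      ∀ᶠ σ in 𝓝[>] D, K * (mt - ε) - ε ≤ φ σ ∧ φ σ ≤ K * (Mt + ε) + ε := by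
    intro ε hε1 hε2
    obtain ⟨u₀, hu₀pos, hu₀⟩ : ∃ u₀ > (0:ℝ), ∀ u : ℝ, 0 < u → u < u₀ →
        ENNReal.ofReal ((mt - ε) * u ^ ((N:ℝ) - D)) ≤ volume (thickening u A ∩ Ω) ∧
        volume (thickening u A ∩ Ω) ≤ ENNReal.ofReal ((Mt + ε) * u ^ ((N:ℝ) - D)) := by
      have hev := ev_bounds hmM hup hε1 (by rw [← hmtdef]; exact hε2)
      rw [← hmtdef, ← hMtdef] at hev
      rw [eventually_iff, mem_nhdsGT_iff_exists_Ioo_subset] at hev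
      obtain ⟨u₀, hu₀, hsub⟩ := hev
      exact ⟨u₀, hu₀, fun u h1 h2 => hsub ⟨h1, h2⟩⟩
    set T : ℝ := u₀⁻¹ with hTdef
    have hT : 0 < T := inv_pos.2 hu₀pos
    have hTc : ContinuousAt (fun σ : ℝ => T ^ (D - σ)) D := by
      exact (Real.continuousAt_const_rpow hT.ne').comp (continuousAt_const.sub continuousAt_id)
    have hTc2 : ContinuousAt (fun σ : ℝ => T ^ ((N:ℝ) - σ)) D := by
      exact (Real.continuousAt_const_rpow hT.ne').comp (continuousAt_const.sub continuousAt_id)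
    have hlim1 : Tendsto (fun σ : ℝ => (mt - ε) * ((N:ℝ) - σ) * T ^ (D - σ)) (𝓝[>] D)
        (𝓝 (K * (mt - ε))) := by
      have : Tendsto (fun σ : ℝ => (mt - ε) * ((N:ℝ) - σ) * T ^ (D - σ)) (𝓝 D)
          (𝓝 ((mt - ε) * ((N:ℝ) - D) * T ^ (D - D))) :=
        ((continuousAt_const.mul (continuousAt_const.sub continuousAt_id)).mul hTc)
      rw [sub_self, Real.rpow_zero, mul_one] at this
      have heq : (mt - ε) * ((N:ℝ) - D) = K * (mt - ε) := by rw [hKdef]; ring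
      rw [heq] at this
      exact this.mono_left nhdsWithin_le_nhds
    have hlim2 : Tendsto (fun σ : ℝ => (σ - D) * (volume Ω).toReal * T ^ ((N:ℝ) - σ)
        + (Mt + ε) * ((N:ℝ) - σ) * T ^ (D - σ)) (𝓝[>] D) (𝓝 (K * (Mt + ε))) := by
      have : Tendsto (fun σ : ℝ => (σ - D) * (volume Ω).toReal * T ^ ((N:ℝ) - σ)
          + (Mt + ε) * ((N:ℝ) - σ) * T ^ (D - σ)) (𝓝 D)
          (𝓝 ((D - D) * (volume Ω).toReal * T ^ ((N:ℝ) - D)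
            + (Mt + ε) * ((N:ℝ) - D) * T ^ (D - D))) :=
        (((continuousAt_id.sub continuousAt_const).mul continuousAt_const).mul hTc2).add
          ((continuousAt_const.mul (continuousAt_const.sub continuousAt_id)).mul hTc)
      rw [sub_self, Real.rpow_zero, mul_one, zero_mul, zero_mul, zero_add] at this
      have heq : (Mt + ε) * ((N:ℝ) - D) = K * (Mt + ε) := by rw [hKdef]; ring
      rw [heq] at this
      exact this.mono_left nhdsWithin_le_nhds
    have hevN : ∀ᶠ σ : ℝ in 𝓝[>] D, σ < (N:ℝ) :=
      eventually_nhdsWithin_of_eventually_nhds (eventually_lt_nhds hDN)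
    filter_upwards [hlim1.eventually (eventually_gt_nhds
        (show K * (mt - ε) - ε < K * (mt - ε) by linarith)),
      hlim2.eventually (eventually_lt_nhds
        (show K * (Mt + ε) < K * (Mt + ε) + ε by linarith)),
      self_mem_nhdsWithin, hevN] with σ h1 h2 hσD hσN
    have hσD : D < σ := hσD
    obtain ⟨hl, hu⟩ := sandwich hA hΩv hzero (by linarith : (0:ℝ) ≤ mt - ε)
      (by linarith : (0:ℝ) ≤ Mt + ε) hu₀pos hu₀ hσD hσN
    rw [← hTdef] at hl hu
    have hσD0 : (0:ℝ) < σ - D := by linarith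
    constructor
    · calc K * (mt - ε) - ε ≤ (mt - ε) * ((N:ℝ) - σ) * T ^ (D - σ) := h1.le
        _ = (σ - D) * ((mt - ε) * ((N:ℝ) - σ) * (T ^ (D - σ) / (σ - D))) := by
            field_simp
        _ ≤ φ σ := mul_le_mul_of_nonneg_left hl hσD0.le
    · calc φ σ ≤ (σ - D) * ((volume Ω).toReal * T ^ ((N:ℝ) - σ)
            + (Mt + ε) * ((N:ℝ) - σ) * (T ^ (D - σ) / (σ - D))) :=
          mul_le_mul_of_nonneg_left hu hσD0.le
        _ = (σ - D) * (volume Ω).toReal * T ^ ((N:ℝ) - σ)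
            + (Mt + ε) * ((N:ℝ) - σ) * T ^ (D - σ) := by field_simp
        _ ≤ K * (Mt + ε) + ε := h2.le
  -- step 2: identification with F on the real ray
  have hcoeU : ∀ᶠ σ : ℝ in 𝓝[>] D, ((σ:ℂ) ∈ U) :=
    eventually_nhdsWithin_of_eventually_nhds
      ((hUo.preimage Complex.continuous_ofReal).mem_nhds hDU : _)
  have hFφ : ∀ᶠ σ : ℝ in 𝓝[>] D, ((σ:ℂ) - (D:ℂ)) * F (σ:ℂ) = ((φ σ : ℝ) : ℂ) := by
    filter_upwards [hcoeU, self_mem_nhdsWithin] with σ hσU hσD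
    have hσD : D < σ := hσD
    rw [hFeq _ hσU (by simpa using hσD), cint σ, hφdef]
    push_cast
    ring
  -- the coercion filter map
  have hcoe : Tendsto (fun σ : ℝ => (σ:ℂ)) (𝓝[>] D) (𝓝[≠] (D:ℂ)) := by
    apply tendsto_nhdsWithin_of_tendsto_nhds_of_eventually_within
    · exact (Complex.continuous_ofReal.tendsto D).mono_left nhdsWithin_le_nhds
    · filter_upwards [self_mem_nhdsWithin] with σ (hσ : D < σ)
      simp only [mem_compl_iff, mem_singleton_iff]
      exact_mod_cast ne_of_gt hσ
  -- convenient positive constants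
  set ε₀ : ℝ := K * mt / (2 * (K + 1)) with hε₀def
  clear_value ε₀
  have hε₀1 : 0 < ε₀ := by
    rw [hε₀def]
    positivity
  have hε₀2 : ε₀ < mt := by
    rw [hε₀def, div_lt_iff₀ (by positivity)]
    nlinarith
  have hc₁ : 0 < K * (mt - ε₀) - ε₀ := by
    have h1 : K * (mt - ε₀) - ε₀ = K * mt - ε₀ * (K + 1) := by ring
    have h2 : ε₀ * (K + 1) = K * mt / 2 := by
      rw [hε₀def]
      field_simp
    rw [h1, h2]
    have : 0 < K * mt := by positivity
    linarith
  have hmero : MeromorphicAt F D := hF _ hDU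
  -- order cannot be ⊤
  rcases eq_or_ne (meromorphicOrderAt F D) ⊤ with htop | hne
  · exfalso
    have h0 : ∀ᶠ σ : ℝ in 𝓝[>] D, F (σ:ℂ) = 0 :=
      hcoe.eventually (meromorphicOrderAt_eq_top_iff.1 htop)
    rcases ((hsand ε₀ hε₀1 hε₀2).and (h0.and hFφ)).exists with ⟨σ, ⟨hl, _⟩, h0', hφ'⟩
    rw [h0', mul_zero] at hφ'
    have : φ σ = 0 := by exact_mod_cast hφ'.symm
    rw [this] at hl
    linarith
  obtain ⟨n, hn⟩ := WithTop.ne_top_iff_exists.1 hne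
  obtain ⟨g, hg_an, hg0, hg_eq⟩ := (meromorphicOrderAt_eq_int_iff (n := n) hmero).1 hn.symm
  have hg_eq' : ∀ᶠ z in 𝓝[≠] (D:ℂ), (z - (D:ℂ)) * F z = (z - (D:ℂ)) ^ (n+1) * g z := by
    filter_upwards [hg_eq, self_mem_nhdsWithin] with z hz hz'
    have hzD : z - (D:ℂ) ≠ 0 := sub_ne_zero.2 hz'
    rw [hz, smul_eq_mul, zpow_add_one₀ hzD]
    ring
  have hgcont : Tendsto g (𝓝[≠] (D:ℂ)) (𝓝 (g D)) :=
    (hg_an.continuousAt.tendsto).mono_left nhdsWithin_le_nhds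
  have hφpow : ∀ᶠ σ : ℝ in 𝓝[>] D, ((φ σ : ℝ) : ℂ) = ((σ:ℂ) - (D:ℂ)) ^ (n+1) * g (σ:ℂ) := by
    filter_upwards [hFφ, hcoe.eventually hg_eq'] with σ h1 h2
    rw [← h1, h2]
  rcases lt_trichotomy n (-1) with hltc | heqc | hgtc
  · -- order too negative: contradiction
    exfalso
    set k : ℕ := (-(n+1)).toNat with hkdef
    have hkz : (k:ℤ) = -(n+1) := Int.toNat_of_nonneg (by omega)
    have hk1 : 1 ≤ k := by omega
    have hgψ : ∀ᶠ σ : ℝ in 𝓝[>] D, g (σ:ℂ) = (((σ - D) ^ k * φ σ : ℝ) : ℂ) := by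
      filter_upwards [hφpow, self_mem_nhdsWithin] with σ h1 (hσ : D < σ)
      have hzD : (σ:ℂ) - (D:ℂ) ≠ 0 := by
        rw [sub_ne_zero]
        exact_mod_cast ne_of_gt hσ
      have hcanc : ((σ:ℂ) - (D:ℂ)) ^ (k:ℤ) * (((σ:ℂ) - (D:ℂ)) ^ (n+1) * g (σ:ℂ)) = g (σ:ℂ) := by
        rw [← mul_assoc, ← zpow_add₀ hzD, show (k:ℤ) + (n+1) = 0 by omega, zpow_zero, one_mul]
      rw [← hcanc, ← h1, zpow_natCast]
      push_cast
      ring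
    -- the real sequence (σ-D)^k * φ σ tends to 0
    have hb : Tendsto (fun σ : ℝ => (σ - D) ^ k * (K * (Mt + ε₀) + ε₀)) (𝓝[>] D) (𝓝 0) := by
      have : Tendsto (fun σ : ℝ => (σ - D) ^ k * (K * (Mt + ε₀) + ε₀)) (𝓝 D)
          (𝓝 ((D - D) ^ k * (K * (Mt + ε₀) + ε₀))) :=
        (((continuousAt_id.sub continuousAt_const).pow k).mul continuousAt_const)
      rw [sub_self, zero_pow (by omega), zero_mul] at this
      exact this.mono_left nhdsWithin_le_nhds
    have hψ0 : Tendsto (fun σ : ℝ => (σ - D) ^ k * φ σ) (𝓝[>] D) (𝓝 0) := by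
      apply squeeze_zero' ?_ ?_ hb
      · filter_upwards [hsand ε₀ hε₀1 hε₀2, self_mem_nhdsWithin] with σ ⟨h1, _⟩ (hσ : D < σ)
        have hφnn : 0 ≤ φ σ := le_trans hc₁.le h1
        exact mul_nonneg (pow_nonneg (by linarith) k) hφnn
      · filter_upwards [hsand ε₀ hε₀1 hε₀2, self_mem_nhdsWithin] with σ ⟨_, h2⟩ (hσ : D < σ)
        exact mul_le_mul_of_nonneg_left h2 (pow_nonneg (by linarith) k)
    have hgc : Tendsto (fun σ : ℝ => g (σ:ℂ)) (𝓝[>] D) (𝓝 (g D)) := hgcont.comp hcoe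
    have hgc2 : Tendsto (fun σ : ℝ => g (σ:ℂ)) (𝓝[>] D) (𝓝 (0:ℂ)) := by
      have hC : Tendsto (fun σ : ℝ => (((σ - D) ^ k * φ σ : ℝ) : ℂ)) (𝓝[>] D)
          (𝓝 (((0:ℝ):ℂ))) := (Complex.continuous_ofReal.tendsto 0).comp hψ0
      rw [Complex.ofReal_zero] at hC
      exact hC.congr' (by filter_upwards [hgψ] with σ h; rw [h])
    have : g D = 0 := tendsto_nhds_unique hgc hgc2
    exact hg0 this
  · -- order is exactly -1
    have hH : ∀ᶠ z in 𝓝[≠] (D:ℂ), (z - (D:ℂ)) * F z = g z := by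
      filter_upwards [hg_eq'] with z hz
      rw [hz, heqc]
      norm_num
    have HtoG : Tendsto (fun z : ℂ => (z - (D:ℂ)) * F z) (𝓝[≠] (D:ℂ)) (𝓝 (g D)) :=
      hgcont.congr' (by filter_upwards [hH] with z h; rw [h])
    have hφlim : Tendsto (fun σ : ℝ => ((φ σ : ℝ) : ℂ)) (𝓝[>] D) (𝓝 (g D)) :=
      (HtoG.comp hcoe).congr' (by filter_upwards [hFφ] with σ h; exact h)
    set ρ : ℝ := (g D).re with hρdef
    have hρlim : Tendsto φ (𝓝[>] D) (𝓝 ρ) := by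
      have := (Complex.continuous_re.tendsto (g D)).comp hφlim
      simpa [Function.comp_def] using this
    have him : (g D).im = 0 := by
      have h1 : Tendsto (fun σ : ℝ => ((φ σ : ℝ) : ℂ).im) (𝓝[>] D) (𝓝 ((g D).im)) :=
        (Complex.continuous_im.tendsto (g D)).comp hφlim
      have h2 : Tendsto (fun σ : ℝ => ((φ σ : ℝ) : ℂ).im) (𝓝[>] D) (𝓝 (0:ℝ)) := by
        simp only [Complex.ofReal_im]
        exact tendsto_const_nhds
      exact tendsto_nhds_unique h1 h2
    have hgD : g D = (ρ : ℂ) := Complex.ext (by simp [hρdef]) (by simp [him])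
    -- bounds on ρ from the sandwich
    have hbound : ∀ ε : ℝ, 0 < ε → ε < mt →
        K * (mt - ε) - ε ≤ ρ ∧ ρ ≤ K * (Mt + ε) + ε := by
      intro ε h1 h2
      have hev := hsand ε h1 h2
      constructor
      · exact ge_of_tendsto hρlim (hev.mono fun σ h => h.1)
      · exact le_of_tendsto hρlim (hev.mono fun σ h => h.2)
    have hlb : K * mt ≤ ρ := by
      by_contra hcon
      push_neg at hcon
      set η : ℝ := K * mt - ρ with hηdef
      clear_value η
      have hη : 0 < η := by rw [hηdef]; linarith
      set ε : ℝ := min (mt / 2) (η / (2 * (K + 1))) with hεdef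
      clear_value ε
      have hε1 : 0 < ε := by
        rw [hεdef]
        exact lt_min (by linarith) (div_pos hη (by linarith))
      have hε2 : ε < mt := by
        rw [hεdef]
        exact lt_of_le_of_lt (min_le_left _ _) (by linarith)
      have h := (hbound ε hε1 hε2).1
      have hεle : ε ≤ η / (2 * (K + 1)) := by
        rw [hεdef]
        exact min_le_right _ _
      have hmul : ε * (K + 1) ≤ η / 2 := by
        have h3 := mul_le_mul_of_nonneg_right hεle (by linarith : (0:ℝ) ≤ K + 1)
        have h4 : η / (2 * (K + 1)) * (K + 1) = η / 2 := by
          field_simp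
        rw [h4] at h3
        exact h3
      have h5 : K * (mt - ε) - ε = K * mt - ε * (K + 1) := by ring
      rw [h5] at h
      rw [hηdef] at hmul
      linarith
    have hub : ρ ≤ K * Mt := by
      by_contra hcon
      push_neg at hcon
      set η : ℝ := ρ - K * Mt with hηdef
      clear_value η
      have hη : 0 < η := by rw [hηdef]; linarith
      set ε : ℝ := min (mt / 2) (η / (2 * (K + 1))) with hεdef
      clear_value ε
      have hε1 : 0 < ε := by
        rw [hεdef]
        exact lt_min (by linarith) (div_pos hη (by linarith))
      have hε2 : ε < mt := by
        rw [hεdef]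
        exact lt_of_le_of_lt (min_le_left _ _) (by linarith)
      have h := (hbound ε hε1 hε2).2
      have hεle : ε ≤ η / (2 * (K + 1)) := by
        rw [hεdef]
        exact min_le_right _ _
      have hmul : ε * (K + 1) ≤ η / 2 := by
        have h3 := mul_le_mul_of_nonneg_right hεle (by linarith : (0:ℝ) ≤ K + 1)
        have h4 : η / (2 * (K + 1)) * (K + 1) = η / 2 := by
          field_simp
        rw [h4] at h3
        exact h3
      have h5 : K * (Mt + ε) + ε = K * Mt + ε * (K + 1) := by ring
      rw [h5] at h
      rw [hηdef] at hmul
      linarith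
    have hρpos : 0 < ρ := by
      have h := (hbound ε₀ hε₀1 hε₀2).1
      linarith
    refine ⟨ρ, hlb, hub, hρpos, ?_, ?_⟩
    · rw [← hgD]
      exact HtoG
    · intro hEq
      have hEq' : mt = Mt := by rw [hmtdef, hMtdef, hEq]
      have h6 : K * Mt ≤ ρ := by rw [← hEq']; exact hlb
      exact le_antisymm hub h6
  · -- order nonnegative: contradiction
    exfalso
    set k : ℕ := (n+1).toNat with hkdef
    have hkz : (k:ℤ) = n+1 := Int.toNat_of_nonneg (by omega)
    have hk1 : 1 ≤ k := by omega
    have hφeq : ∀ᶠ σ : ℝ in 𝓝[>] D, ((φ σ : ℝ) : ℂ) = ((σ:ℂ) - (D:ℂ)) ^ k * g (σ:ℂ) := by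
      filter_upwards [hφpow] with σ h
      rw [h, ← hkz, zpow_natCast]
    have hrhs : Tendsto (fun σ : ℝ => ((σ:ℂ) - (D:ℂ)) ^ k * g (σ:ℂ)) (𝓝[>] D) (𝓝 (0:ℂ)) := by
      have h1 : Tendsto (fun σ : ℝ => ((σ:ℂ) - (D:ℂ)) ^ k) (𝓝[>] D) (𝓝 (0:ℂ)) := by
        have : Tendsto (fun σ : ℝ => ((σ:ℂ) - (D:ℂ)) ^ k) (𝓝 D)
            (𝓝 (((D:ℂ) - (D:ℂ)) ^ k)) :=
          ((Complex.continuous_ofReal.continuousAt.sub continuousAt_const).pow k)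
        rw [sub_self, zero_pow (by omega)] at this
        exact this.mono_left nhdsWithin_le_nhds
      have := h1.mul (hgcont.comp hcoe)
      simpa using this
    have hφ0 : Tendsto φ (𝓝[>] D) (𝓝 (0:ℝ)) := by
      have h2 : Tendsto (fun σ : ℝ => ((φ σ : ℝ) : ℂ)) (𝓝[>] D) (𝓝 (0:ℂ)) :=
        hrhs.congr' (by filter_upwards [hφeq] with σ h; rw [h])
      have := (Complex.continuous_re.tendsto 0).comp h2
      simpa [Function.comp_def] using this
    have hge : K * (mt - ε₀) - ε₀ ≤ 0 :=
      ge_of_tendsto hφ0 ((hsand ε₀ hε₀1 hε₀2).mono fun σ h => h.1)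
    linarith
end

section
/- Work in the Euclidean plane ℝ². Let α > 1 be a real number, let A := {0} and Ω := {(x,y) ∈ ℝ² : 0 < x < 1 and 0 < y < x^α}. Then the relative fractal drum (A,Ω) is Minkowski measurable with relative box dimension 1−α < 0 and Minkowski content 1/(1+α): since A_t = B(0,t) (the open Euclidean ball of radius t centered at 0) and 2−(1−α) = 1+α, one has |B(0,t) ∩ Ω| / t^{1+α} → 1/(1+α) as t → 0⁺. -/
open MeasureTheory Metric Filter Set
open scoped ENNReal Topology

lemma cusp_vol (α : ℝ) (hα : 0 < α) (a : ℝ) (ha : 0 < a) :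
    volume {p : EuclideanSpace ℝ (Fin 2) | 0 < p 0 ∧ p 0 < a ∧ 0 < p 1 ∧ p 1 < p 0 ^ α}
      = ENNReal.ofReal (a ^ (1 + α) / (1 + α)) := by
  have mp : MeasurePreserving
      ((MeasurableEquiv.finTwoArrow : (Fin 2 → ℝ) ≃ᵐ ℝ × ℝ) ∘
        ((MeasurableEquiv.toLp 2 (Fin 2 → ℝ)).symm)) volume volume :=
    (volume_preserving_finTwoArrow ℝ).comp
      (EuclideanSpace.volume_preserving_symm_measurableEquiv_toLp (Fin 2))
  have hg : Measurable fun x : ℝ => x ^ α := (Real.continuous_rpow_const hα.le).measurable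
  -- the target region in ℝ × ℝ
  have hT : MeasurableSet (regionBetween (fun _ : ℝ => (0:ℝ)) (fun x => x ^ α) (Ioo 0 a)) :=
    measurableSet_regionBetween measurable_const hg measurableSet_Ioo
  have hpre : {p : EuclideanSpace ℝ (Fin 2) | 0 < p 0 ∧ p 0 < a ∧ 0 < p 1 ∧ p 1 < p 0 ^ α}
      = ((MeasurableEquiv.finTwoArrow : (Fin 2 → ℝ) ≃ᵐ ℝ × ℝ) ∘
        ((MeasurableEquiv.toLp 2 (Fin 2 → ℝ)).symm)) ⁻¹'
        (regionBetween (fun _ : ℝ => (0:ℝ)) (fun x => x ^ α) (Ioo 0 a)) := by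
    ext p
    simp [regionBetween, MeasurableEquiv.finTwoArrow,
      and_assoc, and_comm, and_left_comm]
  rw [hpre, mp.measure_preimage hT.nullMeasurableSet]
  rw [Measure.volume_eq_prod, volume_regionBetween_eq_lintegral' measurable_const hg
    measurableSet_Ioo]
  have hInt : IntegrableOn (fun x : ℝ => x ^ α) (Ioo 0 a) := by
    have := (intervalIntegral.intervalIntegrable_rpow' (a := 0) (b := a) (by linarith : (-1:ℝ) < α))
    rw [intervalIntegrable_iff_integrableOn_Ioo_of_le ha.le] at this
    exact this
  have hnn : 0 ≤ᵐ[volume.restrict (Ioo 0 a)] fun x : ℝ => x ^ α := by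
    filter_upwards [ae_restrict_mem measurableSet_Ioo] with x hx
    exact Real.rpow_nonneg hx.1.le _
  simp only [Pi.sub_apply, sub_zero]
  rw [← ofReal_integral_eq_lintegral_ofReal hInt hnn]
  congr 1
  rw [← integral_Ioc_eq_integral_Ioo, ← intervalIntegral.integral_of_le ha.le]
  rw [show (∫ x in (0:ℝ)..a, x ^ α) = (a ^ (α+1) - (0:ℝ) ^ (α+1)) / (α+1) from
    integral_rpow (Or.inl (by linarith))]
  rw [Real.zero_rpow (by linarith), add_comm α 1]
  ring

/-- The relative fractal drum `({0}, Ω)` in `ℝ²`, with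
`Ω = {(x,y) : 0 < x < 1, 0 < y < x^α}` and `α > 1`, is Minkowski measurable with relative
box dimension `1 - α < 0` and Minkowski content `1/(1+α)`: since the `t`-neighborhood of
`{0}` is the ball `B(0,t)` and `2 - (1-α) = 1 + α`, we have
`|B(0,t) ∩ Ω| / t^{1+α} → 1/(1+α)` as `t → 0⁺`. -/
theorem stmt6 (α : ℝ) (hα : 1 < α) :
    Filter.Tendsto
      (fun t : ℝ =>
        volume (Metric.ball (0 : EuclideanSpace ℝ (Fin 2)) t ∩
            {p : EuclideanSpace ℝ (Fin 2) | 0 < p 0 ∧ p 0 < 1 ∧ 0 < p 1 ∧ p 1 < p 0 ^ α}) /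
          ENNReal.ofReal (t ^ (1 + α)))
      (𝓝[>] (0 : ℝ)) (𝓝 (ENNReal.ofReal (1 / (1 + α)))) := by
  have hα0 : 0 < α := by linarith
  have h1α : (0:ℝ) < 1 + α := by linarith
  have hexp : (0:ℝ) < 2 * α - 2 := by linarith
  -- lower comparison function
  set g : ℝ → ℝ≥0∞ := fun t =>
    ENNReal.ofReal ((1 - t ^ (2 * α - 2)) ^ ((1 + α) / 2) / (1 + α)) with hgdef
  have hIoo : Ioo (0:ℝ) 1 ∈ 𝓝[>] (0:ℝ) :=
    Ioo_mem_nhdsGT_of_mem ⟨le_refl 0, zero_lt_one⟩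
  -- convergence of g
  have hu : Tendsto (fun t : ℝ => t ^ (2 * α - 2)) (𝓝[>] 0) (𝓝 0) := by
    have hc : ContinuousAt (fun x : ℝ => x ^ (2 * α - 2)) 0 :=
      Real.continuousAt_rpow_const 0 _ (Or.inr hexp.le)
    have h0 : (0:ℝ) ^ (2 * α - 2) = 0 := Real.zero_rpow (by linarith)
    have h2 : Tendsto (fun x : ℝ => x ^ (2 * α - 2)) (𝓝[>] 0) (𝓝 ((0:ℝ) ^ (2 * α - 2))) :=
      hc.tendsto.mono_left (nhdsWithin_le_nhds)
    rwa [h0] at h2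
  have hgten : Tendsto g (𝓝[>] 0) (𝓝 (ENNReal.ofReal (1 / (1 + α)))) := by
    have h1 : Tendsto (fun t : ℝ => 1 - t ^ (2 * α - 2)) (𝓝[>] 0) (𝓝 1) := by
      simpa using tendsto_const_nhds.sub hu
    have h2 : ContinuousAt (fun x : ℝ => x ^ ((1 + α) / 2)) 1 :=
      Real.continuousAt_rpow_const 1 _ (Or.inl one_ne_zero)
    have h3 := h2.tendsto.comp h1
    rw [Real.one_rpow] at h3
    have h4 := h3.div_const (1 + α)
    exact (ENNReal.continuous_ofReal.tendsto _).comp h4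
  refine tendsto_of_tendsto_of_tendsto_of_le_of_le' hgten tendsto_const_nhds ?_ ?_
  · -- g t ≤ f t eventually
    filter_upwards [hIoo] with t ht
    obtain ⟨ht0, ht1⟩ := ht
    set u : ℝ := t ^ (2 * α - 2) with hudef
    have hu1 : u < 1 := Real.rpow_lt_one ht0.le ht1 hexp
    have hu0 : 0 < u := Real.rpow_pos_of_pos ht0 _
    set w : ℝ := (1 - u) ^ ((1:ℝ)/2) with hwdef
    have hw0 : 0 < w := Real.rpow_pos_of_pos (by linarith) _
    have hw1 : w ≤ 1 :=
      (Real.rpow_le_one (by linarith) (by linarith) (by norm_num))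
    set s : ℝ := t * w with hsdef
    have hs0 : 0 < s := mul_pos ht0 hw0
    have hst : s ≤ t := by
      calc s = t * w := rfl
      _ ≤ t * 1 := by nlinarith
      _ = t := mul_one t
    have hw2 : w ^ 2 = 1 - u := by
      rw [hwdef, ← Real.rpow_natCast ((1 - u) ^ ((1:ℝ)/2)) 2,
        ← Real.rpow_mul (by linarith)]
      norm_num
    have ht2u : t ^ 2 * u = t ^ (2 * α) := by
      rw [hudef, ← Real.rpow_natCast t 2, ← Real.rpow_add ht0]
      norm_num
    -- set inclusion
    have hsub : {p : EuclideanSpace ℝ (Fin 2) | 0 < p 0 ∧ p 0 < s ∧ 0 < p 1 ∧ p 1 < p 0 ^ α}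
        ⊆ Metric.ball (0 : EuclideanSpace ℝ (Fin 2)) t ∩
            {p : EuclideanSpace ℝ (Fin 2) | 0 < p 0 ∧ p 0 < 1 ∧ 0 < p 1 ∧ p 1 < p 0 ^ α} := by
      rintro p ⟨hp1, hp2, hp3, hp4⟩
      have hnorm : ‖p‖ = Real.sqrt (p 0 ^ 2 + p 1 ^ 2) := by
        rw [EuclideanSpace.norm_eq]
        simp [Fin.sum_univ_two, Real.norm_eq_abs, sq_abs]
      constructor
      · rw [mem_ball_zero_iff, hnorm, show t = Real.sqrt (t ^ 2) from
          (Real.sqrt_sq ht0.le).symm]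
        apply Real.sqrt_lt_sqrt (by positivity)
        have hA : p 0 ^ 2 < s ^ 2 := by nlinarith
        have hB : p 1 ^ 2 < t ^ (2 * α) := by
          have hb1 : p 1 ^ 2 < (p 0 ^ α) ^ 2 := by nlinarith
          have hb2 : (p 0 ^ α) ^ 2 = p 0 ^ (α * 2) := by
            rw [← Real.rpow_natCast (p 0 ^ α) 2, ← Real.rpow_mul hp1.le]
            norm_num
          have hb3 : p 0 ^ (α * 2) < t ^ (α * 2) :=
            Real.rpow_lt_rpow hp1.le (lt_of_lt_of_le hp2 hst) (by positivity)
          have hb4 : t ^ (α * 2) = t ^ (2 * α) := by rw [mul_comm]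
          linarith [hb1, hb2 ▸ hb1, hb3]
        have hs2 : s ^ 2 = t ^ 2 * (1 - u) := by
          rw [hsdef, mul_pow, hw2]
        nlinarith [hA, hB, hs2, ht2u]
      · exact ⟨hp1, lt_trans hp2 (lt_of_le_of_lt hst ht1), hp3, hp4⟩
    have hvolL := cusp_vol α hα0 s hs0
    have hle := ENNReal.div_le_div_right (measure_mono (μ := (volume : Measure (EuclideanSpace ℝ (Fin 2)))) hsub) (ENNReal.ofReal (t ^ (1 + α)))
    rw [hvolL] at hle
    refine le_trans (le_of_eq ?_) hle
    have htpow : (0:ℝ) < t ^ (1 + α) := Real.rpow_pos_of_pos ht0 _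
    rw [← ENNReal.ofReal_div_of_pos htpow]
    have hsr : s ^ (1 + α) = t ^ (1 + α) * (1 - u) ^ ((1 + α) / 2) := by
      rw [hsdef, Real.mul_rpow ht0.le hw0.le, hwdef, ← Real.rpow_mul (by linarith)]
      ring_nf
    rw [hgdef]
    rw [hsr, div_right_comm, mul_div_cancel_left₀ _ (ne_of_gt htpow), hudef]
  · -- f t ≤ const eventually
    filter_upwards [self_mem_nhdsWithin] with t ht
    have ht0 : (0:ℝ) < t := ht
    have hsub : Metric.ball (0 : EuclideanSpace ℝ (Fin 2)) t ∩
        {p : EuclideanSpace ℝ (Fin 2) | 0 < p 0 ∧ p 0 < 1 ∧ 0 < p 1 ∧ p 1 < p 0 ^ α}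
        ⊆ {p : EuclideanSpace ℝ (Fin 2) | 0 < p 0 ∧ p 0 < t ∧ 0 < p 1 ∧ p 1 < p 0 ^ α} := by
      rintro p ⟨hb, h1, _, h3, h4⟩
      refine ⟨h1, ?_, h3, h4⟩
      have hnb : ‖p‖ < t := mem_ball_zero_iff.mp hb
      have hnorm : ‖p‖ = Real.sqrt (p 0 ^ 2 + p 1 ^ 2) := by
        rw [EuclideanSpace.norm_eq]
        simp [Fin.sum_univ_two, Real.norm_eq_abs, sq_abs]
      have hle0 : p 0 ≤ ‖p‖ := by
        rw [hnorm]
        calc p 0 = Real.sqrt (p 0 ^ 2) := (Real.sqrt_sq h1.le).symm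
        _ ≤ Real.sqrt (p 0 ^ 2 + p 1 ^ 2) :=
          Real.sqrt_le_sqrt (le_add_of_nonneg_right (sq_nonneg _))
      linarith
    have h := ENNReal.div_le_div_right (measure_mono (μ := (volume : Measure (EuclideanSpace ℝ (Fin 2)))) hsub) (ENNReal.ofReal (t ^ (1 + α)))
    rw [cusp_vol α hα0 t ht0] at h
    refine le_trans h (le_of_eq ?_)
    have htpow : (0:ℝ) < t ^ (1 + α) := Real.rpow_pos_of_pos ht0 _
    rw [← ENNReal.ofReal_div_of_pos htpow]
    congr 1
    field_simp
end

section
/- Work in the Euclidean plane ℝ². Let A := {0} and Ω' := {(x,y) ∈ ℝ² : 0 < x < 1 and 0 < y < exp(−1/x)}. Then the relative box dimension of the relative fractal drum (A,Ω') equals −∞; explicitly, for every r ∈ ℝ, |B(0,t) ∩ Ω'| / t^{2−r} → 0 as t → 0⁺ (where B(0,t) is the open Euclidean ball of radius t centered at 0, so that A_t = B(0,t)); i.e., M^{*r}(A,Ω') = 0 for every r ∈ ℝ. -/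
open MeasureTheory Metric Filter Set
open scoped ENNReal Topology

private lemma coord_abs_le_norm (p : EuclideanSpace ℝ (Fin 2)) (i : Fin 2) :
    |p i| ≤ ‖p‖ := by
  rw [EuclideanSpace.norm_eq]
  rw [show |p i| = Real.sqrt (‖p i‖ ^ 2) by
    rw [Real.sqrt_sq_eq_abs]; simp [Real.norm_eq_abs, abs_abs]]
  apply Real.sqrt_le_sqrt
  exact Finset.single_le_sum (f := fun j => ‖p j‖ ^ 2)
    (fun j _ => sq_nonneg _) (Finset.mem_univ i)

private lemma volume_box (t e : ℝ) :
    volume {p : EuclideanSpace ℝ (Fin 2) | p 0 ∈ Set.Ioo 0 t ∧ p 1 ∈ Set.Ioo 0 e}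
      = ENNReal.ofReal t * ENNReal.ofReal e := by
  have hmp := EuclideanSpace.volume_preserving_symm_measurableEquiv_toLp (ι := Fin 2)
  have hmeas : MeasurableSet (Set.univ.pi fun i : Fin 2 =>
      Set.Ioo (0 : ℝ) (![t, e] i)) :=
    MeasurableSet.univ_pi fun i => measurableSet_Ioo
  have key := hmp.measure_preimage hmeas.nullMeasurableSet
  have hset : (MeasurableEquiv.toLp 2 (Fin 2 → ℝ)).symm ⁻¹'
      (Set.univ.pi fun i : Fin 2 => Set.Ioo (0 : ℝ) (![t, e] i)) =
      {p : EuclideanSpace ℝ (Fin 2) | p 0 ∈ Set.Ioo 0 t ∧ p 1 ∈ Set.Ioo 0 e} := by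
    ext p
    simp only [Set.mem_preimage, Set.mem_pi, Set.mem_univ, forall_true_left,
      Set.mem_setOf_eq]
    constructor
    · intro h; exact ⟨h 0, h 1⟩
    · intro h i; fin_cases i
      · exact h.1
      · exact h.2
  rw [hset] at key
  rw [key, volume_pi_pi]
  rw [Fin.prod_univ_two]
  simp [Real.volume_Ioo]

/-- The relative fractal drum `({0}, Ω')` in `ℝ²`, with
`Ω' = {(x,y) : 0 < x < 1, 0 < y < exp(-1/x)}`, has relative box dimension `-∞`: for every
`r ∈ ℝ`, the upper `r`-dimensional relative Minkowski content vanishes, i.e.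
`|B(0,t) ∩ Ω'| / t^{2-r} → 0` as `t → 0⁺` (the `t`-neighborhood of `{0}` being `B(0,t)`). -/
theorem stmt7 :
    ∀ r : ℝ,
      Filter.Tendsto
        (fun t : ℝ =>
          volume (Metric.ball (0 : EuclideanSpace ℝ (Fin 2)) t ∩
              {p : EuclideanSpace ℝ (Fin 2) |
                0 < p 0 ∧ p 0 < 1 ∧ 0 < p 1 ∧ p 1 < Real.exp (-1 / p 0)}) /
            ENNReal.ofReal (t ^ (2 - r)))
        (𝓝[>] (0 : ℝ)) (𝓝 0) := by
  intro r
  -- the real-valued dominating function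
  set g : ℝ → ℝ := fun t => t * Real.exp (-1 / t) / t ^ (2 - r) with hg
  -- real limit: g → 0 on 𝓝[>] 0
  have hreal : Tendsto g (𝓝[>] (0 : ℝ)) (𝓝 0) := by
    have h1 : Tendsto (fun x : ℝ => x ^ (1 - r) * Real.exp (-1 * x)) atTop (𝓝 0) :=
      tendsto_rpow_mul_exp_neg_mul_atTop_nhds_zero (1 - r) 1 one_pos
    have h2 : Tendsto (fun t : ℝ => t⁻¹) (𝓝[>] (0 : ℝ)) atTop :=
      tendsto_inv_nhdsGT_zero
    have h3 := h1.comp h2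
    refine h3.congr' ?_
    filter_upwards [self_mem_nhdsWithin] with t ht
    have ht' : (0:ℝ) < t := ht
    simp only [Function.comp_apply, hg]
    have e1 : (t⁻¹) ^ (1 - r) = t ^ (r - 1) := by
      rw [Real.inv_rpow ht'.le, ← Real.rpow_neg ht'.le]
      ring_nf
    have e2 : t * Real.exp (-1 / t) / t ^ (2 - r)
        = t ^ (r - 1) * Real.exp (-1 * t⁻¹) := by
      rw [show (-1 : ℝ) / t = -1 * t⁻¹ by ring]
      rw [show t ^ (r - 1) = t ^ ((1:ℝ) + (r - 2)) by ring_nf]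
      rw [Real.rpow_add ht', Real.rpow_one,
        show (r - 2 : ℝ) = -(2 - r) by ring, Real.rpow_neg ht'.le]
      field_simp
    rw [e1, e2]
  -- pass to ENNReal
  have hEN : Tendsto (fun t => ENNReal.ofReal (g t)) (𝓝[>] (0 : ℝ)) (𝓝 0) := by
    rw [show (0 : ℝ≥0∞) = ENNReal.ofReal 0 by simp]
    exact (ENNReal.continuous_ofReal.tendsto 0).comp hreal
  -- squeeze
  refine tendsto_of_tendsto_of_tendsto_of_le_of_le' tendsto_const_nhds hEN
    (Eventually.of_forall fun t => zero_le) ?_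
  filter_upwards [self_mem_nhdsWithin] with t ht
  have ht' : (0:ℝ) < t := ht
  -- bound the measure by the box
  have hsub : Metric.ball (0 : EuclideanSpace ℝ (Fin 2)) t ∩
      {p : EuclideanSpace ℝ (Fin 2) |
        0 < p 0 ∧ p 0 < 1 ∧ 0 < p 1 ∧ p 1 < Real.exp (-1 / p 0)} ⊆
      {p : EuclideanSpace ℝ (Fin 2) |
        p 0 ∈ Set.Ioo 0 t ∧ p 1 ∈ Set.Ioo 0 (Real.exp (-1 / t))} := by
    rintro p ⟨hball, h0, h1, h2, h3⟩
    have hnorm : ‖p‖ < t := by rwa [mem_ball_zero_iff] at hball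
    have hp0t : p 0 < t :=
      lt_of_le_of_lt (le_trans (le_abs_self _) (coord_abs_le_norm p 0)) hnorm
    refine ⟨⟨h0, hp0t⟩, h2, lt_of_lt_of_le h3 ?_⟩
    apply Real.exp_le_exp.mpr
    rw [neg_div, neg_div, neg_le_neg_iff]
    exact one_div_le_one_div_of_le h0 hp0t.le
  have hvol : volume (Metric.ball (0 : EuclideanSpace ℝ (Fin 2)) t ∩
      {p : EuclideanSpace ℝ (Fin 2) |
        0 < p 0 ∧ p 0 < 1 ∧ 0 < p 1 ∧ p 1 < Real.exp (-1 / p 0)})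
      ≤ ENNReal.ofReal (t * Real.exp (-1 / t)) := by
    calc _ ≤ volume {p : EuclideanSpace ℝ (Fin 2) |
          p 0 ∈ Set.Ioo 0 t ∧ p 1 ∈ Set.Ioo 0 (Real.exp (-1 / t))} :=
        measure_mono hsub
      _ = ENNReal.ofReal t * ENNReal.ofReal (Real.exp (-1 / t)) := volume_box _ _
      _ = ENNReal.ofReal (t * Real.exp (-1 / t)) :=
        (ENNReal.ofReal_mul ht'.le).symm
  calc volume _ / ENNReal.ofReal (t ^ (2 - r))
      ≤ ENNReal.ofReal (t * Real.exp (-1 / t)) / ENNReal.ofReal (t ^ (2 - r)) :=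
        ENNReal.div_le_div_right hvol _
    _ = ENNReal.ofReal (g t) := by
        rw [hg, ENNReal.ofReal_div_of_pos (Real.rpow_pos_of_pos ht' _)]
end

section
/- Let N ≥ 1, let (A,Ω) be a relative fractal drum in ℝ^N, and let λ > 0. Write λS := {λx : x ∈ S}. Then: (i) \overline{dim}_B(λA, λΩ) = \overline{dim}_B(A,Ω); and (ii) for every s ∈ ℂ with Re s > \overline{dim}_B(A,Ω), the function x ↦ d(x, λA)^{s−N} is Lebesgue integrable on λΩ and ∫_{λΩ} d(x, λA)^{s−N} dx = λ^s · ∫_Ω d(x,A)^{s−N} dx, where λ^s is the principal complex power of the positive real λ. -/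
open MeasureTheory Metric Filter Set
open scoped ENNReal Topology Pointwise

section Aux

variable {N : ℕ} {A Ω : Set (EuclideanSpace ℝ (Fin N))} {l : ℝ}

lemma measurable_cpow_ofReal (w : ℂ) : Measurable fun t : ℝ => (t : ℂ) ^ w := by
  have h : (fun t : ℝ => (t:ℂ)^w) = fun t : ℝ =>
      if t = 0 then (0:ℂ)^w else Complex.exp (Complex.log t * w) := by
    ext t
    split_ifs with h
    · rw [h]; norm_num
    · exact Complex.cpow_def_of_ne_zero (by exact_mod_cast h) w
  rw [h]
  exact Measurable.ite (measurableSet_singleton 0) measurable_const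
    (Complex.measurable_exp.comp
      ((Complex.measurable_log.comp Complex.measurable_ofReal).mul_const w))

lemma measurable_f (w : ℂ) (A : Set (EuclideanSpace ℝ (Fin N))) :
    Measurable fun x => ((infDist x A : ℝ) : ℂ) ^ w :=
  (measurable_cpow_ofReal w).comp (continuous_infDist_pt A).measurable

lemma thickening_smul' (hl : 0 < l) (hA : A.Nonempty) (t : ℝ) :
    thickening t (l • A) = l • thickening (t / l) A := by
  ext x
  rw [mem_smul_set_iff_inv_smul_mem₀ hl.ne',
    mem_thickening_iff_infDist_lt (hA.smul_set), mem_thickening_iff_infDist_lt hA]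
  have h : infDist x (l • A) = l * infDist (l⁻¹ • x) A := by
    conv_lhs => rw [← smul_inv_smul₀ hl.ne' x]
    rw [infDist_smul₀ hl.ne', Real.norm_of_nonneg hl.le]
  rw [h, mul_comm, ← lt_div_iff₀ hl]

lemma upMink_smul (hA : A.Nonempty) (hl : 0 < l) (ρ : ℝ) :
    upMink N (l • A) (l • Ω) ρ = ENNReal.ofReal (l ^ ρ) * upMink N A Ω ρ := by
  have hmap : map (fun u : ℝ => l * u) (𝓝[>] (0:ℝ)) = 𝓝[>] (0:ℝ) := by
    have hsurj : Function.Surjective (fun u : ℝ => l * u) := fun b => ⟨l⁻¹ * b, by field_simp⟩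
    calc map (fun u : ℝ => l * u) (𝓝[>] (0:ℝ))
        = map (fun u : ℝ => l * u) (comap (fun u : ℝ => l * u) (𝓝[>] (0:ℝ))) := by
          rw [comap_mulLeft_nhdsGT_zero hl]
      _ = 𝓝[>] (0:ℝ) := Filter.map_comap_of_surjective hsurj _
  unfold upMink
  conv_lhs => rw [← hmap]
  have hml : ∀ (f : ℝ → ℝ≥0∞),
      limsup f (map (fun u : ℝ => l * u) (𝓝[>] (0:ℝ))) =
        limsup (fun u => f (l * u)) (𝓝[>] (0:ℝ)) := by
    intro f
    simp only [Filter.limsup_eq, Filter.eventually_map]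
  rw [hml]
  have hGF : ∀ᶠ u in 𝓝[>](0:ℝ),
      volume (thickening (l * u) (l • A) ∩ (l • Ω)) / ENNReal.ofReal ((l * u) ^ ((N:ℝ) - ρ))
        = ENNReal.ofReal (l ^ ρ) *
          (volume (thickening u A ∩ Ω) / ENNReal.ofReal (u ^ ((N:ℝ) - ρ))) := by
    filter_upwards [self_mem_nhdsWithin] with u hu
    have hu : (0:ℝ) < u := hu
    have h1 : thickening (l * u) (l • A) ∩ (l • Ω) = l • (thickening u A ∩ Ω) := by
      rw [thickening_smul' hl hA, mul_comm, mul_div_assoc, div_self hl.ne', mul_one,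
        Set.smul_set_inter₀ hl.ne']
    have h2 : volume (l • (thickening u A ∩ Ω))
        = ENNReal.ofReal (l ^ ((N:ℕ) : ℝ)) * volume (thickening u A ∩ Ω) := by
      rw [MeasureTheory.Measure.addHaar_smul_of_nonneg volume hl.le, finrank_euclideanSpace_fin,
        ← Real.rpow_natCast l N]
    have h3 : ENNReal.ofReal ((l * u) ^ ((N:ℝ) - ρ))
        = ENNReal.ofReal (l ^ ((N:ℝ) - ρ)) * ENNReal.ofReal (u ^ ((N:ℝ) - ρ)) := by
      rw [Real.mul_rpow hl.le hu.le, ENNReal.ofReal_mul (Real.rpow_nonneg hl.le _)]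
    rw [h1, h2, h3]
    have hb0 : ENNReal.ofReal (l ^ ((N:ℝ) - ρ)) ≠ 0 := by
      simp [ENNReal.ofReal_eq_zero, not_le, Real.rpow_pos_of_pos hl]
    have hbt : ENNReal.ofReal (l ^ ((N:ℝ) - ρ)) ≠ ⊤ := ENNReal.ofReal_ne_top
    rw [div_eq_mul_inv, div_eq_mul_inv, ENNReal.mul_inv (Or.inl hb0) (Or.inl hbt),
      mul_mul_mul_comm]
    congr 1
    rw [← div_eq_mul_inv, ← ENNReal.ofReal_div_of_pos (Real.rpow_pos_of_pos hl _),
      ← Real.rpow_sub hl]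
    norm_num
  rw [limsup_congr hGF]
  exact ENNReal.limsup_const_mul_of_ne_top ENNReal.ofReal_ne_top

lemma ubDim_smul (hA : A.Nonempty) (hl : 0 < l) :
    ubDim N (l • A) (l • Ω) = ubDim N A Ω := by
  unfold ubDim
  congr 1
  ext x
  simp only [mem_setOf_eq]
  constructor
  · rintro ⟨r, rfl, h⟩
    refine ⟨r, rfl, ?_⟩
    rw [upMink_smul hA hl r] at h
    rcases mul_eq_zero.1 h with h | h
    · exact absurd h (by simp [ENNReal.ofReal_eq_zero, not_le, Real.rpow_pos_of_pos hl])
    · exact h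
  · rintro ⟨r, rfl, h⟩
    exact ⟨r, rfl, by rw [upMink_smul hA hl r, h, mul_zero]⟩

lemma vol_le_of_upMink {r : ℝ} (hr : upMink N A Ω r = 0) :
    ∃ ε > 0, ∀ t ∈ Ioo (0:ℝ) ε,
      volume (thickening t A ∩ Ω) ≤ ENNReal.ofReal (t ^ ((N:ℝ) - r)) := by
  have hev : ∀ᶠ t in 𝓝[>](0:ℝ),
      volume (thickening t A ∩ Ω) / ENNReal.ofReal (t ^ ((N:ℝ) - r)) < 1 :=
    eventually_lt_of_limsup_lt (by rw [← upMink, hr]; exact zero_lt_one)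
  obtain ⟨u, hu, hIoo⟩ := mem_nhdsGT_iff_exists_Ioo_subset.1 hev
  refine ⟨u, hu, fun t ht => ?_⟩
  have h := hIoo ht
  simp only [mem_setOf_eq] at h
  have hb0 : ENNReal.ofReal (t ^ ((N:ℝ) - r)) ≠ 0 := by
    simp [ENNReal.ofReal_eq_zero, not_le, Real.rpow_pos_of_pos ht.1]
  rw [ENNReal.div_lt_iff (Or.inl hb0) (Or.inl ENNReal.ofReal_ne_top), one_mul] at h
  exact h.le

lemma tendsto_ofReal_rpow {c : ℝ} (hc : 0 < c) :
    Tendsto (fun t : ℝ => ENNReal.ofReal (t ^ c)) (𝓝[>] (0:ℝ)) (𝓝 0) := by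
  have h1 : Tendsto (fun t : ℝ => t ^ c) (𝓝 (0:ℝ)) (𝓝 (0:ℝ)) := by
    have := (Real.continuousAt_rpow_const 0 c (Or.inr hc.le)).tendsto
    rwa [Real.zero_rpow hc.ne'] at this
  have h2 : Tendsto (fun t : ℝ => ENNReal.ofReal (t ^ c)) (𝓝[>] (0:ℝ)) (𝓝 (ENNReal.ofReal 0)) :=
    (ENNReal.continuous_ofReal.tendsto 0).comp
      (h1.mono_left (nhdsWithin_le_nhds (s := Ioi (0:ℝ))))
  simpa using h2

lemma zeta_integrableOn (hA : A.Nonempty) (hΩo : IsOpen Ω) (hΩv : volume Ω < ⊤)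
    {δ : ℝ} (hδ : 0 < δ) (hsub : Ω ⊆ thickening δ A) {s : ℂ}
    (hs : ubDim N A Ω < (s.re : EReal)) :
    IntegrableOn (fun x => ((infDist x A : ℝ) : ℂ) ^ (s - (N:ℂ))) Ω volume := by
  set f : EuclideanSpace ℝ (Fin N) → ℂ := fun x => ((infDist x A : ℝ) : ℂ) ^ (s - (N:ℂ)) with hf
  have hre : (s - (N:ℂ)).re = s.re - N := by simp
  have hmf : Measurable f := measurable_f _ _
  by_cases hσ : (N : ℝ) ≤ s.re
  · -- bounded case
    refine Measure.integrableOn_of_bounded (M := max 1 (δ ^ (s.re - N))) hΩv.ne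
      hmf.aestronglyMeasurable ?_
    rw [ae_restrict_iff' hΩo.measurableSet]
    refine ae_of_all _ fun x hx => ?_
    have hd : infDist x A < δ := (mem_thickening_iff_infDist_lt hA).1 (hsub hx)
    rcases (infDist_nonneg (s := A) (x := x)).eq_or_lt with h0 | h0
    · show ‖((infDist x A : ℝ) : ℂ) ^ (s - (N:ℂ))‖ ≤ max 1 (δ ^ (s.re - N))
      rw [← h0]
      push_cast
      by_cases hw : s - (N:ℂ) = 0
      · rw [hw, Complex.cpow_zero]; simp
      · rw [Complex.zero_cpow hw]; simp
    · show ‖((infDist x A : ℝ) : ℂ) ^ (s - (N:ℂ))‖ ≤ max 1 (δ ^ (s.re - N))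
      rw [Complex.norm_cpow_eq_rpow_re_of_pos h0, hre]
      rcases eq_or_lt_of_le hσ with he | hlt
      · rw [← he]; simp
      · exact le_trans (Real.rpow_le_rpow (le_of_lt h0) hd.le (by linarith))
          (le_max_right _ _)
  · push_neg at hσ
    obtain ⟨a, ha, har⟩ := sInf_lt_iff.1 hs
    obtain ⟨r, rfl, hr0⟩ := ha
    have hrσ : r < s.re := by exact_mod_cast har
    obtain ⟨ε, hε, hkey0⟩ := vol_le_of_upMink hr0
    set ε₀ : ℝ := min δ (ε/2) with hε₀def
    have hε₀ : 0 < ε₀ := lt_min hδ (by linarith)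
    have key : ∀ t : ℝ, 0 < t → t ≤ ε₀ →
        volume (thickening t A ∩ Ω) ≤ ENNReal.ofReal (t ^ ((N:ℝ) - r)) := by
      intro t ht htε
      exact hkey0 t ⟨ht, by
        have := min_le_right δ (ε/2); linarith [le_trans htε this]⟩
    have hNr : (0:ℝ) < (N:ℝ) - r := by linarith
    have hZ : volume (Ω ∩ {x | infDist x A = 0}) = 0 := by
      have hb : ∀ᶠ t in 𝓝[>] (0:ℝ),
          volume (Ω ∩ {x | infDist x A = 0}) ≤ ENNReal.ofReal (t ^ ((N:ℝ) - r)) := by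
        filter_upwards [Ioc_mem_nhdsGT_of_mem (by exact ⟨le_refl 0, hε₀⟩ : (0:ℝ) ∈ Ico 0 ε₀)]
          with t ht
        refine le_trans (measure_mono fun x hx => ?_) (key t ht.1 ht.2)
        exact ⟨(mem_thickening_iff_infDist_lt hA).2 (by rw [hx.2]; exact ht.1), hx.1⟩
      exact le_antisymm (ge_of_tendsto (tendsto_ofReal_rpow hNr) hb) zero_le
    set q : ℝ := 1/2 with hq
    have hq0 : (0:ℝ) < q := by norm_num
    have hq1 : q < 1 := by norm_num
    set Z := Ω ∩ {x | infDist x A = 0} with hZdef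
    set T := Ω ∩ {x | ε₀ ≤ infDist x A} with hTdef
    set S : ℕ → Set (EuclideanSpace ℝ (Fin N)) := fun k =>
      Ω ∩ {x | ε₀ * q^(k+1) ≤ infDist x A ∧ infDist x A < ε₀ * q^k} with hSdef
    have hcover : Ω ⊆ (Z ∪ T) ∪ ⋃ k, S k := by
      intro x hx
      rcases (infDist_nonneg (s := A) (x := x)).eq_or_lt with h0 | h0
      · exact Or.inl (Or.inl ⟨hx, h0.symm⟩)
      · by_cases hT : ε₀ ≤ infDist x A
        · exact Or.inl (Or.inr ⟨hx, hT⟩)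
        · push_neg at hT
          have hex : ∃ n : ℕ, ε₀ * q^n ≤ infDist x A := by
            obtain ⟨n, hn⟩ := exists_pow_lt_of_lt_one (div_pos h0 hε₀) hq1
            exact ⟨n, by rw [mul_comm]; exact (le_div_iff₀ hε₀).1 hn.le⟩
          classical
          have hspec : ε₀ * q ^ (Nat.find hex) ≤ infDist x A := Nat.find_spec hex
          have hn0 : Nat.find hex ≠ 0 := by
            intro h
            rw [h] at hspec
            simp at hspec
            linarith
          obtain ⟨k, hk⟩ := Nat.exists_eq_succ_of_ne_zero hn0
          refine Or.inr (mem_iUnion.2 ⟨k, hx, ?_, ?_⟩)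
          · rw [← Nat.succ_eq_add_one, ← hk]; exact hspec
          · have := Nat.find_min hex (m := k) (by omega)
            push_neg at this
            exact this
    have hnorm : ∀ x : EuclideanSpace ℝ (Fin N), 0 < infDist x A →
        (‖f x‖₊ : ℝ≥0∞) = ENNReal.ofReal ((infDist x A) ^ (s.re - N)) := by
      intro x hx
      rw [show (‖f x‖₊ : ℝ≥0∞) = ENNReal.ofReal ‖f x‖ from (ofReal_norm (f x)).symm, hf]
      simp only
      rw [Complex.norm_cpow_eq_rpow_re_of_pos hx, hre]
    have hT1 : ∫⁻ x in T, ‖f x‖₊ ∂volume ≤ ENNReal.ofReal (ε₀ ^ (s.re - N)) * volume Ω := by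
      have hmono : ∀ x ∈ T, (‖f x‖₊ : ℝ≥0∞) ≤ ENNReal.ofReal (ε₀ ^ (s.re - N)) := by
        intro x hx
        rw [hnorm x (lt_of_lt_of_le hε₀ hx.2)]
        exact ENNReal.ofReal_le_ofReal
          (Real.rpow_le_rpow_of_nonpos hε₀ hx.2 (by linarith))
      calc ∫⁻ x in T, ‖f x‖₊ ∂volume
          ≤ ∫⁻ _ in T, ENNReal.ofReal (ε₀ ^ (s.re - N)) ∂volume :=
            setLIntegral_mono' (hΩo.measurableSet.inter
              (isClosed_le continuous_const (continuous_infDist_pt A)).measurableSet)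
              hmono
        _ = ENNReal.ofReal (ε₀ ^ (s.re - N)) * volume T := setLIntegral_const _ _
        _ ≤ _ := mul_le_mul_right (measure_mono inter_subset_left) _
    have hSmeas : ∀ k, MeasurableSet (S k) := by
      intro k
      refine hΩo.measurableSet.inter (MeasurableSet.inter ?_ ?_)
      · exact (isClosed_le continuous_const (continuous_infDist_pt A)).measurableSet
      · exact measurableSet_lt (continuous_infDist_pt A).measurable measurable_const
    have hSk : ∀ k : ℕ, ∫⁻ x in S k, ‖f x‖₊ ∂volume
        ≤ ENNReal.ofReal ((ε₀ * q^(k+1)) ^ (s.re - N) * (ε₀ * q^k) ^ ((N:ℝ) - r)) := by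
      intro k
      have hl0 : (0:ℝ) < ε₀ * q^(k+1) := by positivity
      have hmono : ∀ x ∈ S k,
          (‖f x‖₊ : ℝ≥0∞) ≤ ENNReal.ofReal ((ε₀ * q^(k+1)) ^ (s.re - N)) := by
        intro x hx
        rw [hnorm x (lt_of_lt_of_le hl0 hx.2.1)]
        exact ENNReal.ofReal_le_ofReal
          (Real.rpow_le_rpow_of_nonpos hl0 hx.2.1 (by linarith))
      have hvol : volume (S k) ≤ ENNReal.ofReal ((ε₀ * q^k) ^ ((N:ℝ) - r)) := by
        refine le_trans (measure_mono fun x hx => ?_)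
          (key (ε₀ * q^k) (by positivity) ?_)
        · exact ⟨(mem_thickening_iff_infDist_lt hA).2 hx.2.2, hx.1⟩
        · calc ε₀ * q^k ≤ ε₀ * 1 := by
                have : q^k ≤ 1 := pow_le_one₀ hq0.le hq1.le
                nlinarith
            _ = ε₀ := mul_one _
      calc ∫⁻ x in S k, ‖f x‖₊ ∂volume
          ≤ ∫⁻ _ in S k, ENNReal.ofReal ((ε₀ * q^(k+1)) ^ (s.re - N)) ∂volume :=
            setLIntegral_mono' (hSmeas k) hmono
        _ = ENNReal.ofReal ((ε₀ * q^(k+1)) ^ (s.re - N)) * volume (S k) :=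
            setLIntegral_const _ _
        _ ≤ ENNReal.ofReal ((ε₀ * q^(k+1)) ^ (s.re - N)) *
              ENNReal.ofReal ((ε₀ * q^k) ^ ((N:ℝ) - r)) := mul_le_mul_right hvol _
        _ = _ := by rw [← ENNReal.ofReal_mul (Real.rpow_nonneg hl0.le _)]
    have hgeom : ∀ k : ℕ, (ε₀ * q^(k+1)) ^ (s.re - N) * (ε₀ * q^k) ^ ((N:ℝ) - r)
        = (q ^ (s.re - N) * ε₀ ^ (s.re - r)) * ((q ^ (s.re - r)) ^ k) := by
      intro k
      have hqk : (0:ℝ) < q^k := pow_pos hq0 k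
      have hpow : ∀ (β : ℝ), (q^(k:ℕ)) ^ β = (q ^ β) ^ (k:ℕ) := by
        intro β
        rw [← Real.rpow_natCast q k, ← Real.rpow_natCast (q^β) k,
          ← Real.rpow_mul hq0.le, ← Real.rpow_mul hq0.le, mul_comm]
      rw [pow_succ, ← mul_assoc]
      rw [Real.mul_rpow (by positivity) hq0.le, Real.mul_rpow hε₀.le hqk.le,
        Real.mul_rpow hε₀.le hqk.le]
      have h1 : s.re - r = (s.re - N) + ((N:ℝ) - r) := by ring
      rw [hpow (s.re - N), hpow ((N:ℝ) - r), h1, Real.rpow_add hε₀, Real.rpow_add hq0, mul_pow]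
      ring
    have hsum : ∑' k : ℕ, ∫⁻ x in S k, ‖f x‖₊ ∂volume < ⊤ := by
      have hle : ∑' k : ℕ, ∫⁻ x in S k, ‖f x‖₊ ∂volume
          ≤ ∑' k : ℕ, ENNReal.ofReal (q ^ (s.re - N) * ε₀ ^ (s.re - r))
              * (ENNReal.ofReal (q ^ (s.re - r))) ^ k := by
        refine ENNReal.tsum_le_tsum fun k => le_trans (hSk k) ?_
        rw [hgeom k, ENNReal.ofReal_mul (by positivity), ENNReal.ofReal_pow
          (Real.rpow_nonneg hq0.le _)]
      refine lt_of_le_of_lt hle ?_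
      rw [ENNReal.tsum_mul_left, ENNReal.tsum_geometric]
      have hlt1 : ENNReal.ofReal (q ^ (s.re - r)) < 1 := by
        rw [← ENNReal.ofReal_one]
        exact ENNReal.ofReal_lt_ofReal_iff_of_nonneg (Real.rpow_nonneg hq0.le _) |>.2
          (Real.rpow_lt_one hq0.le hq1 (by linarith))
      refine ENNReal.mul_lt_top ENNReal.ofReal_lt_top ?_
      rw [ENNReal.inv_lt_top]
      exact tsub_pos_iff_lt.2 hlt1
    refine ⟨hmf.aestronglyMeasurable, ?_⟩
    rw [hasFiniteIntegral_def]
    calc ∫⁻ x in Ω, ‖f x‖₊ ∂volume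
        ≤ ∫⁻ x in (Z ∪ T) ∪ ⋃ k, S k, ‖f x‖₊ ∂volume := lintegral_mono_set hcover
      _ ≤ (∫⁻ x in Z ∪ T, ‖f x‖₊ ∂volume) + ∫⁻ x in ⋃ k, S k, ‖f x‖₊ ∂volume :=
          lintegral_union_le _ _ _
      _ ≤ ((∫⁻ x in Z, ‖f x‖₊ ∂volume) + ∫⁻ x in T, ‖f x‖₊ ∂volume)
            + ∑' k, ∫⁻ x in S k, ‖f x‖₊ ∂volume := by
          gcongr
          · exact lintegral_union_le _ _ _
          · exact lintegral_iUnion_le _ _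
      _ < ⊤ := by
          rw [setLIntegral_measure_zero _ _ hZ, zero_add]
          exact ENNReal.add_lt_top.2 ⟨lt_of_le_of_lt hT1
            (ENNReal.mul_lt_top ENNReal.ofReal_lt_top hΩv), hsum⟩

lemma integrableOn_smul_iff (hl : 0 < l) (f : EuclideanSpace ℝ (Fin N) → ℂ)
    (s : Set (EuclideanSpace ℝ (Fin N))) :
    IntegrableOn f (l • s) volume ↔ IntegrableOn (fun x => f (l • x)) s volume := by
  set c : ℝ≥0∞ := ENNReal.ofReal |((l:ℝ) ^ Module.finrank ℝ (EuclideanSpace ℝ (Fin N)))⁻¹| with hc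
  have hc0 : c ≠ 0 := by
    rw [hc]
    simp only [ne_eq, ENNReal.ofReal_eq_zero, not_le, abs_pos]
    positivity
  let e : EuclideanSpace ℝ (Fin N) ≃ᵐ EuclideanSpace ℝ (Fin N) :=
    (Homeomorph.smul (Units.mk0 l hl.ne')).toMeasurableEquiv
  have hmapS : (Measure.map (fun x => l • x) volume).restrict (l • s)
      = Measure.map e (volume.restrict ((fun x => l • x) ⁻¹' (l • s))) :=
    (MeasurableEquiv.measurableEmbedding e).restrict_map _ _
  have hpre : (fun x : EuclideanSpace ℝ (Fin N) => l • x) ⁻¹' (l • s) = s := by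
    ext x
    simp [Set.smul_mem_smul_set_iff₀ hl.ne']
  rw [hpre] at hmapS
  have hmap : Measure.map (fun x : EuclideanSpace ℝ (Fin N) => l • x) volume = c • volume :=
    Measure.map_addHaar_smul volume hl.ne'
  rw [hmap, Measure.restrict_smul] at hmapS
  unfold IntegrableOn
  rw [← integrable_smul_measure hc0 ENNReal.ofReal_ne_top (μ := volume.restrict (l • s)), hmapS,
    MeasureTheory.integrable_map_equiv e f]
  rfl

lemma setIntegral_smul_eq (hl : 0 < l) (A Ω : Set (EuclideanSpace ℝ (Fin N))) (s : ℂ) :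
    ∫ x in l • Ω, ((infDist x (l • A) : ℝ) : ℂ) ^ (s - (N:ℂ))
      = (l : ℂ) ^ s * ∫ x in Ω, ((infDist x A : ℝ) : ℂ) ^ (s - (N:ℂ)) := by
  set f : EuclideanSpace ℝ (Fin N) → ℂ := fun x => ((infDist x (l • A) : ℝ) : ℂ) ^ (s - (N:ℂ))
  set g : EuclideanSpace ℝ (Fin N) → ℂ := fun x => ((infDist x A : ℝ) : ℂ) ^ (s - (N:ℂ))
  have hlC : (l : ℂ) ≠ 0 := by exact_mod_cast hl.ne'
  have hpt : ∀ x, f (l • x) = (l : ℂ) ^ (s - (N:ℂ)) * g x := by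
    intro x
    have h1 : infDist (l • x) (l • A) = l * infDist x A := by
      rw [infDist_smul₀ hl.ne', Real.norm_of_nonneg hl.le]
    show ((infDist (l • x) (l • A) : ℝ) : ℂ) ^ (s - (N:ℂ)) = _
    rw [h1, Complex.ofReal_mul, Complex.mul_cpow_ofReal_nonneg hl.le infDist_nonneg]
  have hcomp := Measure.setIntegral_comp_smul_of_pos volume f Ω hl
  have h2 : ∫ x in l • Ω, f x = (l ^ Module.finrank ℝ (EuclideanSpace ℝ (Fin N))) •
      ∫ x in Ω, f (l • x) := by
    rw [hcomp, smul_smul, mul_inv_cancel₀ (pow_ne_zero _ hl.ne'), one_smul]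
  have h3 : ∫ x in Ω, f (l • x) = (l : ℂ) ^ (s - (N:ℂ)) * ∫ x in Ω, g x := by
    simp_rw [hpt]
    rw [← smul_eq_mul, ← integral_smul]
    simp [smul_eq_mul]
  rw [h2, h3, finrank_euclideanSpace_fin]
  rw [Complex.real_smul]
  push_cast
  rw [← mul_assoc, ← Complex.cpow_natCast (l:ℂ) N, ← Complex.cpow_add _ _ hlC]
  have hNs : (N:ℂ) + (s - (N:ℂ)) = s := by ring
  rw [hNs]

end Aux

/-- Scaling property of the relative distance zeta function: for any RFD `(A, Ω)` in `ℝ^N`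
and `λ > 0`, the pair `(λA, λΩ)` has the same upper relative box dimension as `(A, Ω)`, and
for `Re s > dim_B(A, Ω)` one has `ζ_{λA,λΩ}(s) = λ^s · ζ_{A,Ω}(s)` (with the integrand
integrable on `λΩ`). -/
theorem stmt8 (N : ℕ) (hN : 1 ≤ N) (A Ω : Set (EuclideanSpace ℝ (Fin N)))
    (hA : A.Nonempty) (hΩo : IsOpen Ω) (hΩv : volume Ω < ⊤)
    (hΩδ : ∃ δ > 0, Ω ⊆ Metric.thickening δ A)
    (l : ℝ) (hl : 0 < l) :
    ubDim N (l • A) (l • Ω) = ubDim N A Ω ∧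
    ∀ s : ℂ, ubDim N A Ω < (s.re : EReal) →
      MeasureTheory.IntegrableOn
          (fun x => (Metric.infDist x (l • A) : ℂ) ^ (s - (N : ℂ))) (l • Ω) volume ∧
        ∫ x in l • Ω, (Metric.infDist x (l • A) : ℂ) ^ (s - (N : ℂ))
          = (l : ℂ) ^ s * ∫ x in Ω, (Metric.infDist x A : ℂ) ^ (s - (N : ℂ)) := by
  obtain ⟨δ, hδ, hsub⟩ := hΩδ
  refine ⟨ubDim_smul hA hl, fun s hs => ?_⟩
  have hg : IntegrableOn (fun x => ((infDist x A : ℝ) : ℂ) ^ (s - (N:ℂ))) Ω volume :=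
    zeta_integrableOn hA hΩo hΩv hδ hsub hs
  constructor
  · rw [integrableOn_smul_iff hl _ Ω]
    have hpt : (fun x => ((infDist (l • x) (l • A) : ℝ) : ℂ) ^ (s - (N:ℂ)))
        = fun x => (l : ℂ) ^ (s - (N:ℂ)) * ((infDist x A : ℝ) : ℂ) ^ (s - (N:ℂ)) := by
      funext x
      have h1 : infDist (l • x) (l • A) = l * infDist x A := by
        rw [infDist_smul₀ hl.ne', Real.norm_of_nonneg hl.le]
      rw [h1, Complex.ofReal_mul, Complex.mul_cpow_ofReal_nonneg hl.le infDist_nonneg]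
    show IntegrableOn (fun x => ((infDist (l • x) (l • A) : ℝ) : ℂ) ^ (s - (N:ℂ))) Ω volume
    rw [hpt]
    exact hg.const_mul _
  · exact setIntegral_smul_eq hl A Ω s
end

section
/- Let N ≥ 1 and let (A_j, Ω_j), j ∈ ℕ, be relative fractal drums in ℝ^N such that the open sets Ω_j are pairwise disjoint and each A_j is nonempty. Let A := ⋃_j A_j and Ω := ⋃_j Ω_j, assume |Ω| < ∞ and Ω ⊆ A_δ for some δ > 0 (so that (A,Ω) is a relative fractal drum), and assume that d(x,A) = d(x,A_j) for every j ∈ ℕ and every x ∈ Ω_j. Then for every s ∈ ℂ with Re s > \overline{dim}_B(A,Ω): each function x ↦ d(x,A_j)^{s−N} is Lebesgue integrable on Ω_j, and the family (∫_{Ω_j} d(x,A_j)^{s−N} dx)_{j∈ℕ} has sum ∫_Ω d(x,A)^{s−N} dx (the series converges absolutely to ζ_{A,Ω}(s)). -/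
open MeasureTheory Metric Filter Set
open scoped ENNReal Topology

lemma key_integrable (N : ℕ) (A Ω : Set (EuclideanSpace ℝ (Fin N))) (hA : A.Nonempty)
    (hΩm : MeasurableSet Ω) (hΩv : volume Ω < ⊤)
    (δ : ℝ) (hδpos : 0 < δ) (hΩδ : Ω ⊆ Metric.thickening δ A)
    (s : ℂ) (hs : ubDim N A Ω < (s.re : EReal)) :
    IntegrableOn (fun x => (Metric.infDist x A : ℂ) ^ (s - (N : ℂ))) Ω volume := by
  classical
  -- extract r < s.re with upMink = 0
  obtain ⟨x, hxS, hxlt⟩ := sInf_lt_iff.mp hs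
  obtain ⟨r, rfl, hM0⟩ := hxS
  have hrσ : r < s.re := by exact_mod_cast hxlt
  set σ := s.re with hσdef
  -- eventually volume bound
  have hlim : Filter.limsup
      (fun t : ℝ => volume (Metric.thickening t A ∩ Ω) / ENNReal.ofReal (t ^ ((N : ℝ) - r)))
      (𝓝[>] (0 : ℝ)) < 1 := by
    rw [show Filter.limsup
      (fun t : ℝ => volume (Metric.thickening t A ∩ Ω) / ENNReal.ofReal (t ^ ((N : ℝ) - r)))
      (𝓝[>] (0 : ℝ)) = upMink N A Ω r from rfl, hM0]
    exact zero_lt_one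
  have hev : ∀ᶠ t in 𝓝[>] (0 : ℝ),
      volume (Metric.thickening t A ∩ Ω) < ENNReal.ofReal (t ^ ((N : ℝ) - r)) := by
    filter_upwards [eventually_lt_of_limsup_lt hlim, self_mem_nhdsWithin] with t ht ht0
    have hpos : (0 : ℝ) < t ^ ((N : ℝ) - r) := Real.rpow_pos_of_pos ht0 _
    have h0 : ENNReal.ofReal (t ^ ((N : ℝ) - r)) ≠ 0 := by
      simpa using hpos
    have := (ENNReal.div_lt_iff (Or.inl h0) (Or.inl ENNReal.ofReal_ne_top)).mp ht
    simpa using this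
  obtain ⟨t0, ht0pos, hsub⟩ := mem_nhdsGT_iff_exists_Ioc_subset.mp hev
  simp only [Set.mem_Ioi] at ht0pos
  -- measurability
  have hmeas : Measurable fun x : EuclideanSpace ℝ (Fin N) =>
      (Metric.infDist x A : ℂ) ^ (s - (N : ℂ)) :=
    (Complex.measurable_ofReal.comp (continuous_infDist_pt A).measurable).pow measurable_const
  refine ⟨hmeas.aestronglyMeasurable, ?_⟩
  rw [hasFiniteIntegral_def]
  -- pointwise bound
  have hpt : ∀ x : EuclideanSpace ℝ (Fin N),
      (‖(Metric.infDist x A : ℂ) ^ (s - (N : ℂ))‖₊ : ℝ≥0∞)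
        ≤ ENNReal.ofReal (Metric.infDist x A ^ (σ - (N : ℝ))) + 1 := by
    intro x
    rcases eq_or_lt_of_le (Metric.infDist_nonneg (s := A) (x := x)) with hd0 | hdpos
    · rw [← hd0]
      rcases eq_or_ne (s - (N : ℂ)) 0 with h | h
      · simp [h]
      · simp [Complex.zero_cpow h]
    · have habs : ‖(Metric.infDist x A : ℂ) ^ (s - (N : ℂ))‖
          = Metric.infDist x A ^ (s - (N : ℂ)).re :=
        Complex.norm_cpow_eq_rpow_re_of_pos hdpos _
      have hre : (s - (N : ℂ)).re = σ - (N : ℝ) := by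
        simp [Complex.sub_re, hσdef]
      have : (‖(Metric.infDist x A : ℂ) ^ (s - (N : ℂ))‖₊ : ℝ≥0∞)
          = ENNReal.ofReal (Metric.infDist x A ^ (σ - (N : ℝ))) := by
        rw [← enorm_eq_nnnorm, ← ofReal_norm, habs, hre]
      rw [this]
      exact le_self_add
  have hmain : ∫⁻ x in Ω, ENNReal.ofReal (Metric.infDist x A ^ (σ - (N : ℝ))) < ⊤ := by
    by_cases hσN : (N : ℝ) ≤ σ
    · -- bounded case
      have hb : ∀ x ∈ Ω, ENNReal.ofReal (Metric.infDist x A ^ (σ - (N : ℝ)))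
          ≤ ENNReal.ofReal (max δ 1 ^ (σ - (N : ℝ))) := by
        intro x hx
        apply ENNReal.ofReal_le_ofReal
        apply Real.rpow_le_rpow Metric.infDist_nonneg _ (by linarith)
        have : Metric.infDist x A < δ := by
          obtain ⟨z, hz, hdz⟩ := Metric.mem_thickening_iff.mp (hΩδ hx)
          exact (Metric.infDist_lt_iff hA).mpr ⟨z, hz, hdz⟩
        exact this.le.trans (le_max_left _ _)
      calc ∫⁻ x in Ω, ENNReal.ofReal (Metric.infDist x A ^ (σ - (N : ℝ)))
          ≤ ∫⁻ _ in Ω, ENNReal.ofReal (max δ 1 ^ (σ - (N : ℝ))) :=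
            setLIntegral_mono' hΩm hb
        _ = ENNReal.ofReal (max δ 1 ^ (σ - (N : ℝ))) * volume Ω := setLIntegral_const _ _
        _ < ⊤ := ENNReal.mul_lt_top ENNReal.ofReal_lt_top hΩv
    · push_neg at hσN
      set e : ℝ := σ - (N : ℝ) with he_def
      have he : e < 0 := by simp [he_def]; linarith
      have hg_meas : AEMeasurable (fun x : EuclideanSpace ℝ (Fin N) => Metric.infDist x A ^ e)
          (volume.restrict Ω) :=
        ((continuous_infDist_pt A).measurable.pow measurable_const).aemeasurable
      have hg_nn : 0 ≤ᵐ[volume.restrict Ω]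
          fun x : EuclideanSpace ℝ (Fin N) => Metric.infDist x A ^ e :=
        ae_of_all _ fun x => Real.rpow_nonneg Metric.infDist_nonneg _
      rw [show (∫⁻ x in Ω, ENNReal.ofReal (Metric.infDist x A ^ (σ - (N : ℝ))))
          = ∫⁻ x in Ω, ENNReal.ofReal (Metric.infDist x A ^ e) from rfl,
        lintegral_eq_lintegral_meas_lt (volume.restrict Ω) hg_nn hg_meas]
      -- bound the measure of superlevel sets
      have hlevel : ∀ t : ℝ, 0 < t →
          (volume.restrict Ω) {x | t < Metric.infDist x A ^ e}
            ≤ volume (Metric.thickening (t ^ e⁻¹) A ∩ Ω) := by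
        intro t ht
        rw [Measure.restrict_apply' hΩm]
        apply measure_mono
        apply Set.inter_subset_inter_left
        intro x hx
        simp only [Set.mem_setOf_eq] at hx
        have hdpos : 0 < Metric.infDist x A := by
          rcases eq_or_lt_of_le (Metric.infDist_nonneg (s := A) (x := x)) with h0 | h
          · exfalso
            rw [← h0, Real.zero_rpow he.ne] at hx
            linarith
          · exact h
        have hlt : Metric.infDist x A < t ^ e⁻¹ := by
          have := Real.rpow_lt_rpow_of_neg ht hx (inv_lt_zero.mpr he)
          rwa [Real.rpow_rpow_inv hdpos.le he.ne] at this
        obtain ⟨z, hz, hdz⟩ := (Metric.infDist_lt_iff hA).mp hlt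
        exact Metric.mem_thickening_iff.mpr ⟨z, hz, hdz⟩
      set lam : ℝ := t0 ^ e with hlam_def
      have hlam_pos : 0 < lam := Real.rpow_pos_of_pos ht0pos _
      rw [← Ioc_union_Ioi_eq_Ioi hlam_pos.le,
        lintegral_union measurableSet_Ioi (Ioc_disjoint_Ioi le_rfl)]
      have hpart1 : ∫⁻ t in Ioc 0 lam,
          (volume.restrict Ω) {x | t < Metric.infDist x A ^ e} < ⊤ := by
        calc ∫⁻ t in Ioc 0 lam, (volume.restrict Ω) {x | t < Metric.infDist x A ^ e}
            ≤ ∫⁻ _ in Ioc 0 lam, volume Ω := by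
              apply setLIntegral_mono' measurableSet_Ioc
              intro t _
              rw [Measure.restrict_apply' hΩm]
              exact measure_mono Set.inter_subset_right
          _ = volume Ω * volume (Ioc (0:ℝ) lam) := setLIntegral_const _ _
          _ < ⊤ := ENNReal.mul_lt_top hΩv (by simp [Real.volume_Ioc])
      have hp : e⁻¹ * ((N : ℝ) - r) < -1 := by
        have h1 : (N : ℝ) - r > 0 := by linarith
        have h2 : e⁻¹ < 0 := inv_lt_zero.mpr he
        have h3 : e * e⁻¹ = 1 := mul_inv_cancel₀ he.ne
        nlinarith
      have hpart2 : ∫⁻ t in Ioi lam,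
          (volume.restrict Ω) {x | t < Metric.infDist x A ^ e} < ⊤ := by
        have hbd : ∀ t ∈ Ioi lam,
            (volume.restrict Ω) {x | t < Metric.infDist x A ^ e}
              ≤ ENNReal.ofReal (t ^ (e⁻¹ * ((N : ℝ) - r))) := by
          intro t ht
          simp only [Set.mem_Ioi] at ht
          have htpos : 0 < t := hlam_pos.trans ht
          have hmem : t ^ e⁻¹ ∈ Ioc (0 : ℝ) t0 := by
            constructor
            · exact Real.rpow_pos_of_pos htpos _
            · have := Real.rpow_le_rpow_of_nonpos hlam_pos ht.le (inv_lt_zero.mpr he).le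
              rwa [hlam_def, Real.rpow_rpow_inv ht0pos.le he.ne] at this
          have hvol := hsub hmem
          simp only [Set.mem_setOf_eq] at hvol
          calc (volume.restrict Ω) {x | t < Metric.infDist x A ^ e}
              ≤ volume (Metric.thickening (t ^ e⁻¹) A ∩ Ω) := hlevel t htpos
            _ ≤ ENNReal.ofReal ((t ^ e⁻¹) ^ ((N : ℝ) - r)) := hvol.le
            _ = ENNReal.ofReal (t ^ (e⁻¹ * ((N : ℝ) - r))) := by
                rw [← Real.rpow_mul htpos.le]
        calc ∫⁻ t in Ioi lam, (volume.restrict Ω) {x | t < Metric.infDist x A ^ e}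
            ≤ ∫⁻ t in Ioi lam, ENNReal.ofReal (t ^ (e⁻¹ * ((N : ℝ) - r))) :=
              setLIntegral_mono' measurableSet_Ioi hbd
          _ ≤ ∫⁻ t in Ioi lam, (‖t ^ (e⁻¹ * ((N : ℝ) - r))‖₊ : ℝ≥0∞) := by
              apply setLIntegral_mono' measurableSet_Ioi
              intro t ht
              simp only [Set.mem_Ioi] at ht
              rw [← enorm_eq_nnnorm, Real.enorm_eq_ofReal (Real.rpow_nonneg (hlam_pos.trans ht).le _)]
          _ < ⊤ := (integrableOn_Ioi_rpow_of_lt hp hlam_pos).hasFiniteIntegral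
      exact ENNReal.add_lt_top.mpr ⟨hpart1, hpart2⟩
  calc ∫⁻ x in Ω, (‖(Metric.infDist x A : ℂ) ^ (s - (N : ℂ))‖₊ : ℝ≥0∞)
      ≤ ∫⁻ x in Ω, (ENNReal.ofReal (Metric.infDist x A ^ (σ - (N : ℝ))) + 1) :=
        lintegral_mono fun x => hpt x
    _ = (∫⁻ x in Ω, ENNReal.ofReal (Metric.infDist x A ^ (σ - (N : ℝ)))) + 1 * volume Ω := by
        rw [lintegral_add_right _ measurable_const, setLIntegral_const]
    _ < ⊤ := ENNReal.add_lt_top.mpr ⟨hmain, by simpa using hΩv⟩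

/-- Countable additivity of the relative distance zeta function: if `(A, Ω)` is the disjoint
union of the RFDs `(A j, Ω j)` and `d(x, A) = d(x, A j)` on each `Ω j`, then for every `s`
with `Re s > dim_B(A, Ω)` the series `∑ j ζ_{A j, Ω j}(s)` converges (absolutely) to
`ζ_{A,Ω}(s)`. -/
theorem stmt9 (N : ℕ) (hN : 1 ≤ N) (A Ω : ℕ → Set (EuclideanSpace ℝ (Fin N)))
    (hA : ∀ j, (A j).Nonempty) (hΩo : ∀ j, IsOpen (Ω j)) (hΩv : ∀ j, volume (Ω j) < ⊤)
    (hΩδ : ∀ j, ∃ δ > 0, Ω j ⊆ Metric.thickening δ (A j))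
    (hdisj : ∀ i j, i ≠ j → Disjoint (Ω i) (Ω j))
    (hUv : volume (⋃ j, Ω j) < ⊤)
    (hUδ : ∃ δ > 0, (⋃ j, Ω j) ⊆ Metric.thickening δ (⋃ j, A j))
    (hd : ∀ j, ∀ x ∈ Ω j, Metric.infDist x (⋃ i, A i) = Metric.infDist x (A j))
    (s : ℂ) (hs : ubDim N (⋃ j, A j) (⋃ j, Ω j) < (s.re : EReal)) :
    (∀ j, MeasureTheory.IntegrableOn
        (fun x => (Metric.infDist x (A j) : ℂ) ^ (s - (N : ℂ))) (Ω j) volume) ∧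
    HasSum (fun j => ∫ x in Ω j, (Metric.infDist x (A j) : ℂ) ^ (s - (N : ℂ)))
      (∫ x in ⋃ j, Ω j, (Metric.infDist x (⋃ i, A i) : ℂ) ^ (s - (N : ℂ))) := by
  obtain ⟨δ, hδpos, hδsub⟩ := hUδ
  have hAU : (⋃ j, A j).Nonempty := (hA 0).mono (subset_iUnion A 0)
  have hΩUm : MeasurableSet (⋃ j, Ω j) := (isOpen_iUnion hΩo).measurableSet
  have hInt : IntegrableOn
      (fun x => (Metric.infDist x (⋃ i, A i) : ℂ) ^ (s - (N : ℂ))) (⋃ j, Ω j) volume :=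
    key_integrable N (⋃ j, A j) (⋃ j, Ω j) hAU hΩUm hUv δ hδpos hδsub s hs
  have hEq : ∀ j, Set.EqOn (fun x => (Metric.infDist x (⋃ i, A i) : ℂ) ^ (s - (N : ℂ)))
      (fun x => (Metric.infDist x (A j) : ℂ) ^ (s - (N : ℂ))) (Ω j) := by
    intro j x hx
    simp only
    rw [hd j x hx]
  constructor
  · intro j
    exact ((hInt.mono_set (subset_iUnion Ω j)).congr_fun (hEq j) (hΩo j).measurableSet)
  · have hsum := hasSum_integral_iUnion (μ := volume)
      (fun j => (hΩo j).measurableSet) (fun i j hij => hdisj i j hij) hInt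
    rw [show (fun j => ∫ x in Ω j, (Metric.infDist x (A j) : ℂ) ^ (s - (N : ℂ))) = fun j => ∫ x in Ω j, (Metric.infDist x (⋃ i, A i) : ℂ) ^ (s - (N : ℂ)) from funext fun j => (setIntegral_congr_fun (hΩo j).measurableSet (hEq j)).symm]
    exact hsum
end

section
/- Let N ≥ 1, let (A,Ω) be a relative fractal drum in ℝ^N, and let δ > 0. Then for every s ∈ ℂ with Re s > \overline{dim}_B(A,Ω): the function t ↦ t^{s−N−1}|A_t ∩ Ω| is Lebesgue integrable on (0,δ), the function x ↦ d(x,A)^{s−N} is Lebesgue integrable on A_δ ∩ Ω, and the functional equation ∫_{A_δ ∩ Ω} d(x,A)^{s−N} dx = δ^{s−N}·|A_δ ∩ Ω| + (N−s)·∫_0^δ t^{s−N−1}|A_t ∩ Ω| dt holds (connecting the relative distance zeta function of (A, A_δ∩Ω) with the relative tube zeta function of (A,Ω)). -/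
open MeasureTheory Metric Filter Set
open scoped ENNReal Topology

lemma measurable_ofReal_cpow (c : ℂ) : Measurable fun t : ℝ => (t : ℂ) ^ c := by
  have h : (fun t : ℝ => (t : ℂ) ^ c)
      = fun t : ℝ => if (t : ℂ) = 0 then (if c = 0 then 1 else 0)
          else Complex.exp (Complex.log (t : ℂ) * c) := by
    funext t; rw [Complex.cpow_def]
  rw [h]
  refine Measurable.ite ?_ measurable_const
    (Complex.measurable_exp.comp ((Complex.measurable_log.comp Complex.measurable_ofReal).mul_const c))
  exact measurableSet_eq_fun Complex.measurable_ofReal measurable_const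

lemma aux_tube_lintegral_lt_top {N : ℕ} {A Ω : Set (EuclideanSpace ℝ (Fin N))}
    (hΩv : volume Ω < ⊤) {δ σ r t0 : ℝ} (hδ : 0 < δ) (ht0 : 0 < t0) (hrσ : r < σ)
    (hF : ∀ t ∈ Set.Ioo (0:ℝ) t0,
      volume (Metric.thickening t A ∩ Ω) ≤ ENNReal.ofReal (t ^ ((N : ℝ) - r))) :
    ∫⁻ t in Set.Ioo (0:ℝ) δ,
      ENNReal.ofReal (t ^ (σ - N - 1)) * volume (Metric.thickening t A ∩ Ω) < ⊤ := by
  set c := min t0 δ with hc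
  have hc0 : 0 < c := lt_min ht0 hδ
  have hsub : Set.Ioo (0:ℝ) δ ⊆ Set.Ioo 0 c ∪ Set.Ico c δ := by
    intro t ht
    rcases lt_or_ge t c with h | h
    · exact Or.inl ⟨ht.1, h⟩
    · exact Or.inr ⟨h, ht.2⟩
  refine lt_of_le_of_lt (le_trans (lintegral_mono_set hsub) (lintegral_union_le _ _ _)) ?_
  rw [ENNReal.add_lt_top]
  constructor
  · have hint : IntegrableOn (fun t : ℝ => t ^ (σ - r - 1)) (Set.Ioo 0 c) volume :=
      (intervalIntegral.intervalIntegrable_rpow' (by linarith)).1.mono_set Set.Ioo_subset_Ioc_self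
    refine lt_of_le_of_lt (setLIntegral_mono' measurableSet_Ioo ?_) hint.lintegral_lt_top
    intro t ht
    have ht' : t ∈ Set.Ioo (0:ℝ) t0 := ⟨ht.1, ht.2.trans_le (min_le_left _ _)⟩
    calc ENNReal.ofReal (t ^ (σ - N - 1)) * volume (Metric.thickening t A ∩ Ω)
        ≤ ENNReal.ofReal (t ^ (σ - N - 1)) * ENNReal.ofReal (t ^ ((N : ℝ) - r)) :=
          mul_le_mul_right (hF t ht') _
      _ = ENNReal.ofReal (t ^ (σ - r - 1)) := by
          rw [← ENNReal.ofReal_mul (Real.rpow_nonneg ht.1.le _), ← Real.rpow_add ht.1]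
          congr 2
          ring
  · set C := max (c ^ (σ - N - 1)) (δ ^ (σ - N - 1)) with hC
    have hbound : ∀ t ∈ Set.Ico c δ,
        ENNReal.ofReal (t ^ (σ - N - 1)) * volume (Metric.thickening t A ∩ Ω)
          ≤ ENNReal.ofReal C * volume Ω := by
      intro t ht
      have htc : c ≤ t := ht.1
      have ht0' : 0 < t := hc0.trans_le htc
      refine mul_le_mul' (ENNReal.ofReal_le_ofReal ?_) (measure_mono inter_subset_right)
      rcases le_or_gt 0 (σ - N - 1) with h | h
      · exact le_trans (Real.rpow_le_rpow ht0'.le ht.2.le h) (le_max_right _ _)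
      · exact le_trans (Real.rpow_le_rpow_of_nonpos hc0 htc h.le) (le_max_left _ _)
    calc ∫⁻ t in Set.Ico c δ,
          ENNReal.ofReal (t ^ (σ - N - 1)) * volume (Metric.thickening t A ∩ Ω)
        ≤ ∫⁻ _ in Set.Ico c δ, ENNReal.ofReal C * volume Ω :=
          setLIntegral_mono' measurableSet_Ico hbound
      _ = ENNReal.ofReal C * volume Ω * volume (Set.Ico c δ) := setLIntegral_const _ _
      _ < ⊤ := ENNReal.mul_lt_top (ENNReal.mul_lt_top ENNReal.ofReal_lt_top hΩv)
          (by rw [Real.volume_Ico]; exact ENNReal.ofReal_lt_top)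

lemma ofReal_norm_eq_coe_nnnorm {E : Type*} [SeminormedAddCommGroup E] (a : E) :
    ENNReal.ofReal ‖a‖ = (‖a‖₊ : ℝ≥0∞) := by
  rw [ofReal_norm]; rfl

/-- The functional equation connecting the relative distance zeta function of `(A, A_δ ∩ Ω)`
and the relative tube zeta function of `(A, Ω)`:
`ζ_{A, A_δ∩Ω}(s) = δ^{s-N}·|A_δ ∩ Ω| + (N - s)·∫_0^δ t^{s-N-1}|A_t ∩ Ω| dt`
for `Re s > dim_B(A, Ω)`, with both integrals (absolutely) convergent. -/
theorem stmt10 (N : ℕ) (hN : 1 ≤ N) (A Ω : Set (EuclideanSpace ℝ (Fin N)))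
    (hA : A.Nonempty) (hΩo : IsOpen Ω) (hΩv : volume Ω < ⊤)
    (hRFD : ∃ δ' > 0, Ω ⊆ Metric.thickening δ' A)
    (δ : ℝ) (hδ : 0 < δ)
    (s : ℂ) (hs : ubDim N A Ω < (s.re : EReal)) :
    MeasureTheory.IntegrableOn
        (fun t : ℝ => (t : ℂ) ^ (s - (N : ℂ) - 1) *
          ((volume (Metric.thickening t A ∩ Ω)).toReal : ℂ)) (Set.Ioo 0 δ) volume ∧
    MeasureTheory.IntegrableOn
        (fun x => (Metric.infDist x A : ℂ) ^ (s - (N : ℂ)))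
        (Metric.thickening δ A ∩ Ω) volume ∧
    ∫ x in Metric.thickening δ A ∩ Ω, (Metric.infDist x A : ℂ) ^ (s - (N : ℂ))
      = (δ : ℂ) ^ (s - (N : ℂ)) * ((volume (Metric.thickening δ A ∩ Ω)).toReal : ℂ)
        + ((N : ℂ) - s) * ∫ t in Set.Ioo (0 : ℝ) δ,
            (t : ℂ) ^ (s - (N : ℂ) - 1) *
              ((volume (Metric.thickening t A ∩ Ω)).toReal : ℂ) := by
  -- extract an exponent r < Re s with vanishing upper Minkowski content
  obtain ⟨x, hxmem, hxlt⟩ := sInf_lt_iff.mp (show sInf _ < ((s.re : ℝ) : EReal) from hs)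
  obtain ⟨r, rfl, hup⟩ := hxmem
  have hrσ : r < s.re := by exact_mod_cast hxlt
  -- eventual bound on tube volumes
  have hev : ∀ᶠ t in 𝓝[>] (0:ℝ),
      volume (Metric.thickening t A ∩ Ω) ≤ ENNReal.ofReal (t ^ ((N : ℝ) - r)) := by
    have h1 : ∀ᶠ t in 𝓝[>] (0:ℝ),
        volume (Metric.thickening t A ∩ Ω) / ENNReal.ofReal (t ^ ((N : ℝ) - r)) < 1 :=
      eventually_lt_of_limsup_lt (show Filter.limsup _ _ < 1 from hup.trans_lt zero_lt_one)
    filter_upwards [h1, self_mem_nhdsWithin] with t h1t h2t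
    have hb0 : ENNReal.ofReal (t ^ ((N : ℝ) - r)) ≠ 0 :=
      (ENNReal.ofReal_pos.mpr (Real.rpow_pos_of_pos h2t _)).ne'
    have := (ENNReal.div_lt_iff (Or.inl hb0) (Or.inl ENNReal.ofReal_ne_top)).mp h1t
    rw [one_mul] at this
    exact this.le
  obtain ⟨t0, ht0, hIoo⟩ := mem_nhdsGT_iff_exists_Ioo_subset.mp hev
  have ht0' : (0:ℝ) < t0 := ht0
  have hF : ∀ t ∈ Set.Ioo (0:ℝ) t0,
      volume (Metric.thickening t A ∩ Ω) ≤ ENNReal.ofReal (t ^ ((N : ℝ) - r)) :=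
    fun t ht => hIoo ht
  have hL := aux_tube_lintegral_lt_top hΩv hδ ht0' hrσ hF
  -- notation
  have hFne : ∀ t : ℝ, volume (Metric.thickening t A ∩ Ω) ≠ ⊤ :=
    fun t => (lt_of_le_of_lt (measure_mono inter_subset_right) hΩv).ne
  have hFmeas : Measurable (fun t : ℝ => volume (Metric.thickening t A ∩ Ω)) := by
    apply Monotone.measurable
    intro a b hab
    exact measure_mono (inter_subset_inter_left _ (Metric.thickening_mono hab _))
  have hnormg : ∀ t : ℝ, 0 < t →
      (‖(t : ℂ) ^ (s - (N : ℂ) - 1)‖₊ : ℝ≥0∞) = ENNReal.ofReal (t ^ (s.re - N - 1)) := by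
    intro t ht
    rw [← ofReal_norm_eq_coe_nnnorm]
    congr 1
    rw [Complex.norm_cpow_eq_rpow_re_of_pos ht]
    congr 1
  -- Claim A : tube integrability
  have hAESM_tube : AEStronglyMeasurable
      (fun t : ℝ => (t : ℂ) ^ (s - (N : ℂ) - 1) *
        ((volume (Metric.thickening t A ∩ Ω)).toReal : ℂ)) (volume.restrict (Set.Ioo 0 δ)) :=
    ((measurable_ofReal_cpow _).mul
      (Complex.measurable_ofReal.comp hFmeas.ennreal_toReal)).aestronglyMeasurable
  have hTube : MeasureTheory.IntegrableOn
      (fun t : ℝ => (t : ℂ) ^ (s - (N : ℂ) - 1) *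
        ((volume (Metric.thickening t A ∩ Ω)).toReal : ℂ)) (Set.Ioo 0 δ) volume := by
    refine ⟨hAESM_tube, ?_⟩
    rw [hasFiniteIntegral_iff_norm]
    refine lt_of_le_of_lt (setLIntegral_mono' measurableSet_Ioo ?_) hL
    intro t ht
    rw [norm_mul, ENNReal.ofReal_mul (norm_nonneg _)]
    have h1 : ENNReal.ofReal ‖(t : ℂ) ^ (s - (N:ℂ) - 1)‖ = ENNReal.ofReal (t ^ (s.re - N - 1)) := by
      rw [ofReal_norm_eq_coe_nnnorm]; exact hnormg t ht.1
    rw [h1]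
    refine mul_le_mul_right ?_ _
    rw [Complex.norm_real, Real.norm_eq_abs, abs_of_nonneg ENNReal.toReal_nonneg,
      ENNReal.ofReal_toReal (hFne t)]
  refine ⟨hTube, ?_⟩
  by_cases hsN : s = (N : ℂ)
  · -- degenerate case s = N
    have h0 : s - (N : ℂ) = 0 := by rw [hsN]; ring
    have hfun : (fun x : EuclideanSpace ℝ (Fin N) => ((Metric.infDist x A : ℝ) : ℂ) ^ (s - (N:ℂ)))
        = fun _ => (1:ℂ) := by
      funext x; rw [h0, Complex.cpow_zero]
    have hSv : volume (Metric.thickening δ A ∩ Ω) < ⊤ :=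
      lt_of_le_of_lt (measure_mono inter_subset_right) hΩv
    constructor
    · rw [show (fun x : EuclideanSpace ℝ (Fin N) => ((Metric.infDist x A : ℝ) : ℂ) ^ (s - (N:ℂ))) = fun _ => (1:ℂ) from hfun]
      exact integrableOn_const hSv.ne
    · calc ∫ x in Metric.thickening δ A ∩ Ω, ((Metric.infDist x A : ℝ) : ℂ) ^ (s - (N:ℂ))
          = ∫ _ in Metric.thickening δ A ∩ Ω, (1:ℂ) := by rw [hfun]
        _ = ((volume (Metric.thickening δ A ∩ Ω)).toReal : ℂ) := by
            rw [setIntegral_const, measureReal_def, Complex.real_smul, mul_one]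
        _ = _ := by rw [h0, Complex.cpow_zero, hsN, sub_self, zero_mul, add_zero, one_mul]
  · -- main case s ≠ N
    set S : Set (EuclideanSpace ℝ (Fin N)) := Metric.thickening δ A ∩ Ω with hSdef
    have hSm : MeasurableSet S := (Metric.isOpen_thickening.inter hΩo).measurableSet
    have hSv : volume S < ⊤ := lt_of_le_of_lt (measure_mono inter_subset_right) hΩv
    set ν : Measure ℝ := volume.restrict (Set.Ioo 0 δ) with hν
    set μ : Measure (EuclideanSpace ℝ (Fin N)) := volume.restrict S with hμ
    set P : EuclideanSpace ℝ (Fin N) × ℝ → ℂ :=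
      fun p => {q : EuclideanSpace ℝ (Fin N) × ℝ | Metric.infDist q.1 A < q.2}.indicator
        (fun q => (q.2 : ℂ) ^ (s - (N : ℂ) - 1)) p with hP
    have hUm : MeasurableSet {q : EuclideanSpace ℝ (Fin N) × ℝ | Metric.infDist q.1 A < q.2} :=
      measurableSet_lt ((Metric.continuous_infDist_pt A).comp continuous_fst).measurable
        measurable_snd
    have hPmeas : Measurable P :=
      Measurable.indicator ((measurable_ofReal_cpow _).comp measurable_snd) hUm
    have hPx : ∀ t : ℝ, (fun x => P (x, t))
        = (Metric.thickening t A).indicator (fun _ => (t:ℂ) ^ (s - (N:ℂ) - 1)) := by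
      intro t
      funext x
      simp only [hP]
      by_cases h : Metric.infDist x A < t
      · rw [Set.indicator_of_mem (show (x, t) ∈ {q : EuclideanSpace ℝ (Fin N) × ℝ | Metric.infDist q.1 A < q.2} from h),
          Set.indicator_of_mem ((Metric.mem_thickening_iff_infDist_lt hA).mpr h)]
      · rw [Set.indicator_of_notMem (show (x, t) ∉ {q : EuclideanSpace ℝ (Fin N) × ℝ | Metric.infDist q.1 A < q.2} from h),
          Set.indicator_of_notMem (fun hc => h ((Metric.mem_thickening_iff_infDist_lt hA).mp hc))]
    have hPt : ∀ x, (fun t => P (x, t))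
        = (Set.Ioi (Metric.infDist x A)).indicator (fun t => (t:ℂ) ^ (s - (N:ℂ) - 1)) := by
      intro x
      funext t
      simp only [hP]
      by_cases h : Metric.infDist x A < t
      · rw [Set.indicator_of_mem (show (x, t) ∈ {q : EuclideanSpace ℝ (Fin N) × ℝ | Metric.infDist q.1 A < q.2} from h),
          Set.indicator_of_mem (show t ∈ Set.Ioi (Metric.infDist x A) from h)]
      · rw [Set.indicator_of_notMem (show (x, t) ∉ {q : EuclideanSpace ℝ (Fin N) × ℝ | Metric.infDist q.1 A < q.2} from h),
          Set.indicator_of_notMem (show t ∉ Set.Ioi (Metric.infDist x A) from h)]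
    have hSinter : ∀ t : ℝ, t ≤ δ → S ∩ Metric.thickening t A = Metric.thickening t A ∩ Ω := by
      intro t htδ
      rw [hSdef]
      ext y
      constructor
      · rintro ⟨⟨-, hΩy⟩, hty⟩; exact ⟨hty, hΩy⟩
      · rintro ⟨hty, hΩy⟩; exact ⟨⟨Metric.thickening_mono htδ A hty, hΩy⟩, hty⟩
    have hSinter' : ∀ t : ℝ, t ≤ δ → Metric.thickening t A ∩ S = Metric.thickening t A ∩ Ω := by
      intro t htδ
      rw [inter_comm, hSinter t htδ]
    have hPint : Integrable P (μ.prod ν) := by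
      refine ⟨hPmeas.aestronglyMeasurable, ?_⟩
      rw [hasFiniteIntegral_iff_norm,
        lintegral_prod_symm (fun p => ENNReal.ofReal ‖P p‖) hPmeas.norm.ennreal_ofReal.aemeasurable]
      refine lt_of_le_of_lt (setLIntegral_mono' measurableSet_Ioo ?_) hL
      intro t ht
      have hfun : (fun x => ENNReal.ofReal ‖P (x, t)‖)
          = (Metric.thickening t A).indicator
              (fun _ => ENNReal.ofReal ‖(t:ℂ) ^ (s - (N:ℂ) - 1)‖) := by
        funext x
        rw [congrFun (hPx t) x]
        by_cases h : x ∈ Metric.thickening t A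
        · rw [Set.indicator_of_mem h, Set.indicator_of_mem h]
        · rw [Set.indicator_of_notMem h, Set.indicator_of_notMem h, norm_zero,
            ENNReal.ofReal_zero]
      rw [hfun, lintegral_indicator Metric.isOpen_thickening.measurableSet,
        setLIntegral_const, hμ, Measure.restrict_apply Metric.isOpen_thickening.measurableSet,
        hSinter' t ht.2.le]
      refine le_of_eq ?_
      congr 1
      rw [ofReal_norm_eq_coe_nnnorm]
      exact hnormg t ht.1
    have hswap : (∫ x, (∫ t, P (x, t) ∂ν) ∂μ) = ∫ t, (∫ x, P (x, t) ∂μ) ∂ν :=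
      integral_integral_swap (f := fun x t => P (x, t)) hPint
    have hI : ∀ x, (∫ t, P (x, t) ∂ν)
        = ∫ t in Set.Ioo (Metric.infDist x A) δ, (t:ℂ) ^ (s - (N:ℂ) - 1) := by
      intro x
      rw [hν]
      calc ∫ t in Set.Ioo (0:ℝ) δ, P (x, t)
          = ∫ t in Set.Ioo (0:ℝ) δ,
              (Set.Ioi (Metric.infDist x A)).indicator (fun t => (t:ℂ) ^ (s - (N:ℂ) - 1)) t := by
            rw [hPt x]
        _ = ∫ t in Set.Ioo (0:ℝ) δ ∩ Set.Ioi (Metric.infDist x A), (t:ℂ) ^ (s - (N:ℂ) - 1) :=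
            setIntegral_indicator measurableSet_Ioi
        _ = ∫ t in Set.Ioo (Metric.infDist x A) δ, (t:ℂ) ^ (s - (N:ℂ) - 1) := by
            rw [Set.Ioo_inter_Ioi, max_eq_right Metric.infDist_nonneg]
    have hNe : s - (N:ℂ) ≠ 0 := sub_ne_zero.mpr hsN
    have hkey : ∀ a : ℝ, 0 < a → a ≤ δ →
        (∫ t in Set.Ioo a δ, (t:ℂ) ^ (s - (N:ℂ) - 1))
          = ((δ:ℂ) ^ (s - (N:ℂ)) - (a:ℂ) ^ (s - (N:ℂ))) / (s - (N:ℂ)) := by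
      intro a ha haδ
      have h1 : s - (N:ℂ) - 1 ≠ -1 := fun h => hNe (by linear_combination h)
      have h2 : (0:ℝ) ∉ Set.uIcc a δ := by
        rw [Set.uIcc_of_le haδ]
        exact fun hc => absurd hc.1 (not_le.mpr ha)
      rw [← integral_Ioc_eq_integral_Ioo, ← intervalIntegral.integral_of_le haδ,
        integral_cpow (Or.inr ⟨h1, h2⟩), sub_add_cancel]
    have hkey0 : (N:ℝ) < s.re → (∫ t in Set.Ioo (0:ℝ) δ, (t:ℂ) ^ (s - (N:ℂ) - 1))
        = (δ:ℂ) ^ (s - (N:ℂ)) / (s - (N:ℂ)) := by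
      intro h
      have h1 : (-1:ℝ) < (s - (N:ℂ) - 1).re := by
        simp only [Complex.sub_re, Complex.one_re, Complex.natCast_re]
        linarith
      rw [← integral_Ioc_eq_integral_Ioo, ← intervalIntegral.integral_of_le hδ.le,
        integral_cpow (Or.inl h1), sub_add_cancel,
        Complex.ofReal_zero, Complex.zero_cpow hNe, sub_zero]
    have hDlt : ∀ x ∈ S, Metric.infDist x A < δ :=
      fun x hx => (Metric.mem_thickening_iff_infDist_lt hA).mp hx.1
    have hpos_id : ∀ x : EuclideanSpace ℝ (Fin N), 0 < Metric.infDist x A →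
        Metric.infDist x A < δ →
        ((Metric.infDist x A : ℝ) : ℂ) ^ (s - (N:ℂ))
          = (δ:ℂ) ^ (s - (N:ℂ)) + ((N:ℂ) - s) * ∫ t, P (x, t) ∂ν := by
      intro x h0 h1
      rw [hI x, hkey _ h0 h1.le]
      field_simp
      ring
    have hae : ∀ᵐ x ∂μ, ((Metric.infDist x A : ℝ) : ℂ) ^ (s - (N:ℂ))
        = (δ:ℂ) ^ (s - (N:ℂ)) + ((N:ℂ) - s) * ∫ t, P (x, t) ∂ν := by
      rcases lt_or_ge (N:ℝ) s.re with hNs | hNs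
      · rw [hμ, ae_restrict_iff' hSm]
        refine Filter.Eventually.of_forall fun x hx => ?_
        rcases (Metric.infDist_nonneg (x := x) (s := A)).eq_or_lt with h0 | h0
        · rw [← h0, Complex.ofReal_zero, Complex.zero_cpow hNe, hI x, ← h0, hkey0 hNs]
          field_simp
          ring
        · exact hpos_id x h0 (hDlt x hx)
      · have hZm : MeasurableSet {x : EuclideanSpace ℝ (Fin N) | Metric.infDist x A = 0} :=
          (Metric.continuous_infDist_pt A).measurable (measurableSet_singleton 0)
        have hZsub : ∀ t : ℝ, 0 < t →
            {x : EuclideanSpace ℝ (Fin N) | Metric.infDist x A = 0} ∩ S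
              ⊆ Metric.thickening t A ∩ Ω := by
          intro t ht y hy
          exact ⟨(Metric.mem_thickening_iff_infDist_lt hA).mpr (by rw [hy.1]; exact ht), hy.2.2⟩
        have htend : Tendsto (fun t : ℝ => ENNReal.ofReal (t ^ ((N:ℝ) - r))) (𝓝[>] 0) (𝓝 0) := by
          have h1 : Tendsto (fun t : ℝ => t ^ ((N:ℝ) - r)) (𝓝[>] 0) (𝓝 0) := by
            have hc := (Real.continuousAt_rpow_const 0 ((N:ℝ) - r)
              (Or.inr (by linarith))).tendsto
            rw [Real.zero_rpow (show (N:ℝ) - r ≠ 0 from ne_of_gt (by linarith))] at hc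
            exact hc.mono_left nhdsWithin_le_nhds
          have h2 := (ENNReal.continuous_ofReal.tendsto 0).comp h1
          simpa [Function.comp_def] using h2
        have hnull : volume ({x : EuclideanSpace ℝ (Fin N) | Metric.infDist x A = 0} ∩ S) = 0 := by
          refine le_antisymm ?_ zero_le
          refine ge_of_tendsto htend ?_
          filter_upwards [hev, self_mem_nhdsWithin] with t h1t h2t
          exact le_trans (measure_mono (hZsub t h2t)) h1t
        have h0 : ∀ᵐ x ∂μ, Metric.infDist x A ≠ 0 := by
          rw [ae_iff]
          have hset : {x : EuclideanSpace ℝ (Fin N) | ¬ Metric.infDist x A ≠ 0}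
              = {x : EuclideanSpace ℝ (Fin N) | Metric.infDist x A = 0} := by
            ext y; simp
          rw [hset, hμ, Measure.restrict_apply hZm, hnull]
        have hmem : ∀ᵐ x ∂μ, x ∈ S := by rw [hμ]; exact ae_restrict_mem hSm
        filter_upwards [h0, hmem] with x hx0 hxS
        exact hpos_id x (lt_of_le_of_ne Metric.infDist_nonneg (Ne.symm hx0)) (hDlt x hxS)
    have hIint : Integrable (fun x => ∫ t, P (x, t) ∂ν) μ := hPint.integral_prod_left
    have hconst : Integrable (fun _ : EuclideanSpace ℝ (Fin N) => (δ:ℂ) ^ (s - (N:ℂ))) μ := by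
      rw [hμ]; exact integrableOn_const hSv.ne
    have hsum : Integrable
        (fun x => (δ:ℂ) ^ (s - (N:ℂ)) + ((N:ℂ) - s) * ∫ t, P (x, t) ∂ν) μ :=
      hconst.add (hIint.const_mul _)
    have hDist : IntegrableOn
        (fun x => ((Metric.infDist x A : ℝ) : ℂ) ^ (s - (N:ℂ))) S volume := hsum.congr (Filter.EventuallyEq.symm hae)
    refine ⟨hDist, ?_⟩
    have hEval : ∀ t ∈ Set.Ioo (0:ℝ) δ, (∫ x, P (x, t) ∂μ)
        = (t:ℂ) ^ (s - (N:ℂ) - 1) * ((volume (Metric.thickening t A ∩ Ω)).toReal : ℂ) := by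
      intro t ht
      rw [hPx t, hμ, setIntegral_indicator Metric.isOpen_thickening.measurableSet,
        setIntegral_const, hSinter t ht.2.le, Complex.real_smul, mul_comm, measureReal_def]
    calc ∫ x in S, ((Metric.infDist x A : ℝ) : ℂ) ^ (s - (N:ℂ))
        = ∫ x, ((δ:ℂ) ^ (s - (N:ℂ)) + ((N:ℂ) - s) * ∫ t, P (x, t) ∂ν) ∂μ :=
          integral_congr_ae hae
      _ = (∫ _, (δ:ℂ) ^ (s - (N:ℂ)) ∂μ)
            + ∫ x, ((N:ℂ) - s) * ∫ t, P (x, t) ∂ν ∂μ :=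
          integral_add hconst (hIint.const_mul _)
      _ = (δ:ℂ) ^ (s - (N:ℂ)) * ((volume S).toReal : ℂ)
            + ((N:ℂ) - s) * ∫ x, (∫ t, P (x, t) ∂ν) ∂μ := by
          rw [integral_const, integral_const_mul, hμ, measureReal_def, Measure.restrict_apply_univ,
            Complex.real_smul, mul_comm ((volume S).toReal : ℂ)]
      _ = (δ:ℂ) ^ (s - (N:ℂ)) * ((volume S).toReal : ℂ)
            + ((N:ℂ) - s) * ∫ t, (∫ x, P (x, t) ∂μ) ∂ν := by rw [hswap]
      _ = _ := by
          rw [hν]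
          congr 1
          congr 1
          exact setIntegral_congr_fun measurableSet_Ioo hEval
end
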